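/- arXiv:1611.10234 — 9 statements merged into one kernel-verified Lean document; each statement's English description precedes it below -/
import Mathlib

section
/- Let p(z) = 1 + Σ_{n≥1} aₙ zⁿ be holomorphic on the unit disk with Re p(z) > 0 for all z ∈ 𝔻. Then |a₂ − a₁²/2| ≤ 2 − |a₁|²/2. -/
open Complex Metric Set

/-- Key algebraic identity for the Möbius map. -/
private lemma mobius_normSq (b w : ℂ) :
    normSq (1 - (starRingEnd ℂ) b * w) - normSq (w - b)
      = (1 - normSq b) * (1 - normSq w) := by
  simp only [normSq_apply, sub_re, sub_im, mul_re, mul_im, one_re, one_im,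
    conj_re, conj_im]
  ring

/-- From a power series at `0`, the second coefficient equals half the second derivative. -/
private lemma coeff_two_eq {f : ℂ → ℂ} {P : FormalMultilinearSeries ℂ ℂ ℂ}
    (h : HasFPowerSeriesAt f P 0) : P.coeff 2 = deriv (deriv f) 0 / 2 := by
  obtain ⟨r, hr⟩ := h
  have h2 := hr.factorial_smul (y := (1 : ℂ)) 2
  have h3 : iteratedDeriv 2 f 0 = deriv (deriv f) 0 := by
    rw [iteratedDeriv_succ, iteratedDeriv_one]
  rw [iteratedDeriv_eq_iteratedFDeriv] at h3
  have h4 : (Nat.factorial 2 : ℕ) • P.coeff 2 = deriv (deriv f) 0 := by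
    rw [← h3]; exact h2
  have : (2 : ℂ) * P.coeff 2 = deriv (deriv f) 0 := by
    simpa [Nat.factorial, nsmul_eq_mul] using h4
  field_simp [← this]
  linear_combination this

/-- Schwarz–Pick type inequality at the origin for a map bounded by 1 on the unit disk. -/
private lemma schwarz_pick_zero {φ : ℂ → ℂ}
    (hd : DifferentiableOn ℂ φ (ball (0:ℂ) 1))
    (hle : ∀ z ∈ ball (0:ℂ) 1, ‖φ z‖ ≤ 1) :
    ‖deriv φ 0‖ ≤ 1 - ‖φ 0‖ ^ 2 := by
  by_cases hmax : ∃ z₀ ∈ ball (0:ℂ) 1, 1 ≤ ‖φ z₀‖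
  · -- maximum modulus: φ is constant of modulus 1
    obtain ⟨z₀, hz₀, hge⟩ := hmax
    have heq : ‖φ z₀‖ = 1 := le_antisymm (hle z₀ hz₀) hge
    have hmaxon : IsMaxOn (norm ∘ φ) (ball (0:ℂ) 1) z₀ := by
      intro z hz
      simp only [Function.comp_apply, mem_setOf_eq, heq]
      exact hle z hz
    have hcst := eqOn_of_isPreconnected_of_isMaxOn_norm
      (convex_ball (0:ℂ) 1).isPreconnected isOpen_ball hd hz₀ hmaxon
    have hφ0 : φ 0 = φ z₀ := hcst (mem_ball_self one_pos)
    have hder : deriv φ 0 = 0 := by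
      have hev : φ =ᶠ[nhds (0:ℂ)] (fun _ => φ z₀) :=
        Filter.eventuallyEq_of_mem (isOpen_ball.mem_nhds (mem_ball_self one_pos)) hcst
      rw [hev.deriv_eq, deriv_const]
    rw [hder, norm_zero, hφ0, heq]
    norm_num
  · -- proper case: ‖φ z‖ < 1 everywhere; use a Möbius transformation
    push_neg at hmax
    set b := φ 0 with hb
    have hblt : ‖b‖ < 1 := hmax 0 (mem_ball_self one_pos)
    have hden : ∀ z ∈ ball (0:ℂ) 1, 1 - (starRingEnd ℂ) b * φ z ≠ 0 := by
      intro z hz h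
      have h1 : ‖(starRingEnd ℂ) b * φ z‖ < 1 := by
        rw [norm_mul, RingHomIsometric.norm_map]
        calc ‖b‖ * ‖φ z‖ ≤ ‖b‖ * 1 :=
              mul_le_mul_of_nonneg_left (hle z hz) (norm_nonneg _)
          _ < 1 := by simpa using hblt
      have h2 : (1 : ℂ) = (starRingEnd ℂ) b * φ z := sub_eq_zero.mp h
      rw [← h2] at h1
      simp at h1
    set ψ : ℂ → ℂ := fun z => (φ z - b) / (1 - (starRingEnd ℂ) b * φ z) with hψ
    have hψd : DifferentiableOn ℂ ψ (ball (0:ℂ) 1) := by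
      apply DifferentiableOn.div
      · exact hd.sub_const b
      · exact (differentiableOn_const 1).sub ((differentiableOn_const _).mul hd)
      · exact hden
    have hψ0 : ψ 0 = 0 := by simp [hψ, hb]
    have hmapsψ : MapsTo ψ (ball (0:ℂ) 1) (ball (ψ 0) 1) := by
      rw [hψ0]
      intro z hz
      rw [mem_ball_zero_iff]
      have hwlt : ‖φ z‖ < 1 := hmax z hz
      have hkey := mobius_normSq b (φ z)
      have hpos : 0 < (1 - normSq b) * (1 - normSq (φ z)) := by
        apply mul_pos
        · have hsq : normSq b = ‖b‖ ^ 2 := by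
            rw [Complex.normSq_eq_norm_sq]
          nlinarith [hblt, norm_nonneg b, hsq]
        · have hsq : normSq (φ z) = ‖φ z‖ ^ 2 := by
            rw [Complex.normSq_eq_norm_sq]
          nlinarith [hwlt, norm_nonneg (φ z), hsq]
      have hlt : normSq (φ z - b) < normSq (1 - (starRingEnd ℂ) b * φ z) := by linarith
      have hnlt : ‖φ z - b‖ < ‖1 - (starRingEnd ℂ) b * φ z‖ := by
        have h1 : ‖φ z - b‖ ^ 2 < ‖1 - (starRingEnd ℂ) b * φ z‖ ^ 2 := by
          rw [← Complex.sq_norm, ← Complex.sq_norm] at hlt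
          exact hlt
        nlinarith [norm_nonneg (φ z - b), norm_nonneg (1 - (starRingEnd ℂ) b * φ z)]
      rw [hψ, norm_div]
      rw [div_lt_one (lt_of_le_of_lt (norm_nonneg _) hnlt)]
      exact hnlt
    have hSch : ‖deriv ψ 0‖ ≤ 1 := by
      have := Complex.norm_deriv_le_div_of_mapsTo_ball hψd (hmapsψ.mono_right ball_subset_closedBall) one_pos
      simpa using this
    -- compute deriv ψ 0
    have hφ0' : HasDerivAt φ (deriv φ 0) 0 :=
      (hd.differentiableAt (isOpen_ball.mem_nhds (mem_ball_self one_pos))).hasDerivAt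
    have hu : HasDerivAt (fun z => φ z - b) (deriv φ 0) 0 := hφ0'.sub_const b
    have hv : HasDerivAt (fun z => 1 - (starRingEnd ℂ) b * φ z)
        (-((starRingEnd ℂ) b * deriv φ 0)) 0 := (hφ0'.const_mul _).const_sub 1
    have hv0 : (1 : ℂ) - (starRingEnd ℂ) b * φ 0 = ((1 - normSq b : ℝ) : ℂ) := by
      rw [← hb, ← Complex.normSq_eq_conj_mul_self]
      push_cast
      ring
    have hddψ : HasDerivAt ψ
        ((deriv φ 0 * (1 - (starRingEnd ℂ) b * φ 0) -
          (φ 0 - b) * -((starRingEnd ℂ) b * deriv φ 0)) /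
          (1 - (starRingEnd ℂ) b * φ 0) ^ 2) 0 :=
      hu.div hv (hden 0 (mem_ball_self one_pos))
    have hne : ((1 - normSq b : ℝ) : ℂ) ≠ 0 := by
      rw [← hv0]; exact hden 0 (mem_ball_self one_pos)
    have hzero : φ 0 - b = 0 := by rw [hb, sub_self]
    have hderψ : deriv ψ 0 = deriv φ 0 / ((1 - normSq b : ℝ) : ℂ) := by
      rw [hddψ.deriv, hv0, hzero, zero_mul, sub_zero, sq]
      have hne' : (1 - (normSq b : ℂ)) ≠ 0 := by push_cast at hne; exact hne
      push_cast
      rw [mul_comm (deriv φ 0), mul_div_mul_left _ _ hne']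
    have hnsq : normSq b = ‖b‖ ^ 2 := (Complex.sq_norm b).symm
    have hpos1 : (0:ℝ) < 1 - ‖b‖ ^ 2 := by nlinarith [norm_nonneg b]
    have : ‖deriv ψ 0‖ = ‖deriv φ 0‖ / (1 - ‖b‖ ^ 2) := by
      rw [hderψ, norm_div, Complex.norm_real, Real.norm_eq_abs, hnsq,
        abs_of_pos hpos1]
    rw [this, div_le_one hpos1] at hSch
    simpa [hb] using hSch

theorem stmt3 (p : ℂ → ℂ)
    (hp : DifferentiableOn ℂ p (ball (0:ℂ) 1))
    (h0 : p 0 = 1)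
    (hre : ∀ z ∈ ball (0:ℂ) 1, 0 < (p z).re)
    (a : ℕ → ℂ) (ha : ∀ n, a n = iteratedDeriv n p 0 / n.factorial) :
    ‖a 2 - a 1 ^ 2 / 2‖ ≤ 2 - ‖a 1‖ ^ 2 / 2 := by
  have hopen : (ball (0:ℂ) 1) ∈ nhds (0:ℂ) := isOpen_ball.mem_nhds (mem_ball_self one_pos)
  have hA : AnalyticOnNhd ℂ p (ball (0:ℂ) 1) := hp.analyticOnNhd isOpen_ball
  have hne : ∀ z ∈ ball (0:ℂ) 1, p z + 1 ≠ 0 := by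
    intro z hz h
    have h1 : (p z + 1).re = 0 := by rw [h]; simp
    have h2 := hre z hz
    rw [Complex.add_re, Complex.one_re] at h1
    linarith
  set q : ℂ → ℂ := fun z => (p z - 1) / (p z + 1) with hqdef
  have hqd : DifferentiableOn ℂ q (ball (0:ℂ) 1) :=
    (hp.sub_const 1).div (hp.add_const 1) hne
  have hq0 : q 0 = 0 := by simp [hqdef, h0]
  have hmaps : MapsTo q (ball (0:ℂ) 1) (ball (q 0) 1) := by
    rw [hq0]
    intro z hz
    rw [mem_ball_zero_iff]
    have hkey : normSq (p z - 1) < normSq (p z + 1) := by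
      have := hre z hz
      simp only [normSq_apply, Complex.sub_re, Complex.sub_im, Complex.add_re,
        Complex.add_im, Complex.one_re, Complex.one_im]
      nlinarith
    have hnlt : ‖p z - 1‖ < ‖p z + 1‖ := by
      have e1 : normSq (p z - 1) = ‖p z - 1‖ ^ 2 := by rw [Complex.normSq_eq_norm_sq]
      have e2 : normSq (p z + 1) = ‖p z + 1‖ ^ 2 := by rw [Complex.normSq_eq_norm_sq]
      nlinarith [norm_nonneg (p z - 1), norm_nonneg (p z + 1)]
    rw [hqdef, norm_div, div_lt_one (lt_of_le_of_lt (norm_nonneg _) hnlt)]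
    exact hnlt
  set φ := dslope q 0 with hφdef
  have hφd : DifferentiableOn ℂ φ (ball (0:ℂ) 1) := (differentiableOn_dslope hopen).mpr hqd
  have hφle : ∀ z ∈ ball (0:ℂ) 1, ‖φ z‖ ≤ 1 := fun z hz => by
    simpa using Complex.norm_dslope_le_div_of_mapsTo_ball hqd (hmaps.mono_right ball_subset_closedBall) hz
  have hpick := schwarz_pick_zero hφd hφle
  have hφ0 : φ 0 = deriv q 0 := dslope_same q 0
  obtain ⟨Q, hQ⟩ := (hqd.analyticOnNhd isOpen_ball) 0 (mem_ball_self one_pos)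
  have hφser : HasFPowerSeriesAt φ Q.fslope 0 := hQ.has_fpower_series_dslope_fslope
  have hderφ : deriv φ 0 = Q.coeff 2 := by
    rw [hφser.deriv]
    exact FormalMultilinearSeries.coeff_fslope
  have hQ2 : Q.coeff 2 = deriv (deriv q) 0 / 2 := coeff_two_eq hQ
  -- a 1 and a 2 in terms of derivatives of p
  have ha1 : a 1 = deriv p 0 := by
    rw [ha 1, iteratedDeriv_one]
    simp
  have ha2 : a 2 = deriv (deriv p) 0 / 2 := by
    rw [ha 2, iteratedDeriv_succ, iteratedDeriv_one]
    norm_num [Nat.factorial]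
  -- first derivative of q on the ball
  have hdq : ∀ z ∈ ball (0:ℂ) 1, deriv q z = 2 * deriv p z / (p z + 1) ^ 2 := by
    intro z hz
    have hpz : HasDerivAt p (deriv p z) z :=
      (hp.differentiableAt (isOpen_ball.mem_nhds hz)).hasDerivAt
    have h1 : HasDerivAt q
        ((deriv p z * (p z + 1) - (p z - 1) * deriv p z) / (p z + 1) ^ 2) z :=
      (hpz.sub_const 1).div (hpz.add_const 1) (hne z hz)
    rw [h1.deriv]
    ring
  have hdq0 : deriv q 0 = a 1 / 2 := by
    rw [hdq 0 (mem_ball_self one_pos), h0, ha1]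
    norm_num
    ring
  -- second derivative of q at 0
  have hev : deriv q =ᶠ[nhds (0:ℂ)] fun z => 2 * deriv p z / (p z + 1) ^ 2 :=
    Filter.eventuallyEq_of_mem hopen hdq
  have hp0' : HasDerivAt p (deriv p 0) 0 := (hp.differentiableAt hopen).hasDerivAt
  have hdp0 : HasDerivAt (deriv p) (deriv (deriv p) 0) 0 :=
    ((hA.deriv 0 (mem_ball_self one_pos)).differentiableAt).hasDerivAt
  have hg : HasDerivAt (fun z => 2 * deriv p z / (p z + 1) ^ 2)
      ((2 * deriv (deriv p) 0 * (p 0 + 1) ^ 2 -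
        2 * deriv p 0 * ((2 : ℂ) * (p 0 + 1) ^ 1 * deriv p 0)) / ((p 0 + 1) ^ 2) ^ 2) 0 := by
    have hnum : HasDerivAt (fun z => 2 * deriv p z) (2 * deriv (deriv p) 0) 0 :=
      hdp0.const_mul 2
    have hden2 : HasDerivAt (fun z => (p z + 1) ^ 2)
        ((2 : ℂ) * (p 0 + 1) ^ 1 * deriv p 0) 0 := by
      have := (hp0'.add_const 1).fun_pow 2
      simpa using this
    exact hnum.div hden2 (pow_ne_zero 2 (hne 0 (mem_ball_self one_pos)))
  have hddq : deriv (deriv q) 0 = a 2 - a 1 ^ 2 / 2 := by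
    rw [hev.deriv_eq, hg.deriv, h0, ha1, ha2]
    norm_num
    ring
  -- assemble
  have hfin : a 2 - a 1 ^ 2 / 2 = 2 * Q.coeff 2 := by
    rw [hQ2, hddq]
    ring
  have hkey2 : ‖Q.coeff 2‖ ≤ 1 - ‖a 1 / 2‖ ^ 2 := by
    rw [← hderφ, ← hdq0, ← hφ0]
    exact hpick
  rw [hfin]
  have hn2 : ‖(2:ℂ)‖ = 2 := by simp
  rw [norm_mul, hn2]
  rw [norm_div, hn2] at hkey2
  have : (‖a 1‖ / 2) ^ 2 = ‖a 1‖ ^ 2 / 4 := by ring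
  rw [this] at hkey2
  linarith
end

section
/- Let f(z) = z + a₂z² + a₃z³ + … be a starlike function on the unit disk (f(0)=0, f'(0)=1, f nonvanishing off 0, Re(z f'(z)/f(z)) > 0 off 0). Then for every λ ∈ ℂ, |a₃ − λ a₂²| ≤ max{1, |4λ − 3|}. -/
open Complex Metric Set

lemma iteratedDeriv_eq_coeff {u : ℂ → ℂ} {U : FormalMultilinearSeries ℂ ℂ ℂ} {n : ℕ}
    (h : HasFPowerSeriesAt u U 0) : iteratedDeriv n u 0 = n.factorial * U.coeff n := by
  rcases h with ⟨r, hr⟩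
  have h2 := hr.factorial_smul (1 : ℂ) n
  rw [iteratedDeriv, ← h2, FormalMultilinearSeries.coeff, nsmul_eq_mul]
  norm_num

lemma analyticAt_deriv {u : ℂ → ℂ} (hu : AnalyticAt ℂ u 0) : AnalyticAt ℂ (deriv u) 0 := by
  obtain ⟨s, hs, hus⟩ := hu.eventually_analyticAt.exists_mem
  have : AnalyticOnNhd ℂ u s := fun z hz => hus z hz
  exact this.deriv 0 (mem_of_mem_nhds hs)

lemma dd_mul {u v : ℂ → ℂ} (hu : AnalyticAt ℂ u 0) (hv : AnalyticAt ℂ v 0) :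
    deriv (deriv (fun z => u z * v z)) 0
      = deriv (deriv u) 0 * v 0 + 2 * (deriv u 0 * deriv v 0) + u 0 * deriv (deriv v) 0 := by
  have h1 : deriv (fun z => u z * v z) =ᶠ[nhds 0] fun z => deriv u z * v z + u z * deriv v z := by
    filter_upwards [hu.eventually_analyticAt, hv.eventually_analyticAt] with z hz1 hz2
    exact deriv_mul hz1.differentiableAt hz2.differentiableAt
  rw [h1.deriv_eq,
    deriv_fun_add (f := fun z => deriv u z * v z) (g := fun z => u z * deriv v z)
      ((analyticAt_deriv hu).differentiableAt.mul hv.differentiableAt)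
      (hu.differentiableAt.mul (analyticAt_deriv hv).differentiableAt),
    deriv_fun_mul (analyticAt_deriv hu).differentiableAt hv.differentiableAt,
    deriv_fun_mul hu.differentiableAt (analyticAt_deriv hv).differentiableAt]
  ring

theorem stmt7 (f : ℂ → ℂ)
    (hf : DifferentiableOn ℂ f (ball (0:ℂ) 1))
    (h0 : f 0 = 0) (h1 : deriv f 0 = 1)
    (hnz : ∀ z ∈ ball (0:ℂ) 1, z ≠ 0 → f z ≠ 0)
    (hre : ∀ z ∈ ball (0:ℂ) 1, z ≠ 0 → 0 < (z * deriv f z / f z).re)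
    (a : ℕ → ℂ) (ha : ∀ n, a n = iteratedDeriv n f 0 / n.factorial) :
    ∀ lam : ℂ, ‖a 3 - lam * a 2 ^ 2‖ ≤ max 1 ‖4 * lam - 3‖ := by
  intro lam
  have h0D : (0:ℂ) ∈ ball (0:ℂ) 1 := mem_ball_self one_pos
  have hfA : AnalyticOnNhd ℂ f (ball (0:ℂ) 1) := hf.analyticOnNhd isOpen_ball
  -- the function g = f z / z
  set g : ℂ → ℂ := dslope f 0 with hgdef
  have hgd : DifferentiableOn ℂ g (ball (0:ℂ) 1) :=
    (differentiableOn_dslope (isOpen_ball.mem_nhds h0D)).mpr hf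
  have hgA : AnalyticOnNhd ℂ g (ball (0:ℂ) 1) := hgd.analyticOnNhd isOpen_ball
  have hg0 : g 0 = 1 := by rw [hgdef, dslope_same, h1]
  have hgz : ∀ z ∈ ball (0:ℂ) 1, g z ≠ 0 := by
    intro z hz
    rcases eq_or_ne z 0 with rfl | hz0
    · rw [hg0]; exact one_ne_zero
    · rw [hgdef, dslope_of_ne _ hz0, slope_def_field]
      simp only [h0, sub_zero]
      exact div_ne_zero (hnz z hz hz0) hz0
  -- F = deriv f
  have hFA : AnalyticOnNhd ℂ (deriv f) (ball (0:ℂ) 1) := hfA.deriv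
  -- p = z f' / f with singularity removed
  set p : ℂ → ℂ := fun z => deriv f z / g z with hpdef
  have hpA : AnalyticOnNhd ℂ p (ball (0:ℂ) 1) :=
    fun z hz => ((hFA z hz).div (hgA z hz) (hgz z hz))
  have hp0 : p 0 = 1 := by rw [hpdef]; simp [h1, hg0]
  have hpre : ∀ z ∈ ball (0:ℂ) 1, 0 < (p z).re := by
    intro z hz
    rcases eq_or_ne z 0 with rfl | hz0
    · rw [hp0]; norm_num
    · have : p z = z * deriv f z / f z := by
        rw [hpdef]
        simp only [hgdef, dslope_of_ne _ hz0, slope_def_field, h0, sub_zero]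
        field_simp
      rw [this]; exact hre z hz hz0
  have hpne : ∀ z ∈ ball (0:ℂ) 1, p z + 1 ≠ 0 := by
    intro z hz h
    have h2 : (p z + 1).re = 0 := by rw [h]; simp
    have := hpre z hz
    simp only [Complex.add_re, Complex.one_re] at h2
    linarith
  -- ω = (p-1)/(p+1)
  set w : ℂ → ℂ := fun z => (p z - 1) / (p z + 1) with hwdef
  have hwA : AnalyticOnNhd ℂ w (ball (0:ℂ) 1) := fun z hz =>
    ((hpA z hz).sub analyticAt_const).div ((hpA z hz).add analyticAt_const) (hpne z hz)
  have hw0 : w 0 = 0 := by rw [hwdef]; simp [hp0]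
  have hwlt : ∀ z ∈ ball (0:ℂ) 1, ‖w z‖ < 1 := by
    intro z hz
    have hsq : Complex.normSq (p z - 1) < Complex.normSq (p z + 1) := by
      have := hpre z hz
      simp only [Complex.normSq_apply, Complex.add_re, Complex.add_im, Complex.sub_re,
        Complex.sub_im, Complex.one_re, Complex.one_im]
      nlinarith
    have habs : ‖p z - 1‖ < ‖p z + 1‖ := by
      have h1' : ‖p z - 1‖ ^ 2 < ‖p z + 1‖ ^ 2 := by
        rwa [Complex.sq_norm, Complex.sq_norm]
      exact lt_of_pow_lt_pow_left₀ 2 (norm_nonneg _) h1'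
    rw [hwdef]
    simp only [norm_div]
    rw [div_lt_one (lt_of_le_of_lt (norm_nonneg _) habs)]
    exact habs
  -- G = w z / z with singularity removed
  set G : ℂ → ℂ := dslope w 0 with hGdef
  have hGd : DifferentiableOn ℂ G (ball (0:ℂ) 1) :=
    (differentiableOn_dslope (isOpen_ball.mem_nhds h0D)).mpr (hwA.differentiableOn)
  have hGle : ∀ z ∈ ball (0:ℂ) 1, ‖G z‖ ≤ 1 := by
    intro z hz
    have hmaps : MapsTo w (ball (0:ℂ) 1) (ball (w 0) 1) := by
      rw [hw0]
      intro x hx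
      rw [mem_ball_zero_iff]
      exact hwlt x hx
    have := Complex.norm_dslope_le_div_of_mapsTo_ball hwA.differentiableOn (hmaps.mono_right ball_subset_closedBall) hz
    simpa using this
  -- Schwarz-Pick at 0
  have hSP : ‖deriv G 0‖ ≤ 1 - ‖G 0‖ ^ 2 := by
    by_cases hcase : ∃ z ∈ ball (0:ℂ) 1, ‖G z‖ = 1
    · obtain ⟨z0, hz0, hz0n⟩ := hcase
      have hmax : IsMaxOn (norm ∘ G) (ball (0:ℂ) 1) z0 :=
        isMaxOn_iff.mpr fun z hz => by simpa [hz0n] using hGle z hz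
      have hEq : EqOn G (fun _ => G z0) (ball (0:ℂ) 1) := fun z hz =>
        Complex.eqOn_of_isPreconnected_of_isMaxOn_norm (convex_ball _ _).isPreconnected
          isOpen_ball hGd hz0 hmax hz
      have hG00 : ‖G 0‖ = 1 := by rw [hEq h0D]; exact hz0n
      have hd0 : deriv G 0 = 0 := by
        have hev : G =ᶠ[nhds 0] fun _ => G z0 :=
          Filter.eventuallyEq_of_mem (isOpen_ball.mem_nhds h0D) hEq
        rw [hev.deriv_eq, deriv_const]
      rw [hd0, hG00]; norm_num
    · push_neg at hcase
      have hlt : ∀ z ∈ ball (0:ℂ) 1, ‖G z‖ < 1 := fun z hz =>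
        lt_of_le_of_ne (hGle z hz) (hcase z hz)
      have hclt : ‖G 0‖ < 1 := hlt 0 h0D
      set c : ℂ := G 0 with hc
      have hclt' : ‖c‖ < 1 := hclt
      have hnsqc : Complex.normSq c < 1 := by
        rw [← Complex.sq_norm]
        nlinarith [norm_nonneg c, hclt']
      have key : ∀ u v : ℂ, Complex.normSq (1 - (starRingEnd ℂ) u * v) - Complex.normSq (v - u)
          = (1 - Complex.normSq u) * (1 - Complex.normSq v) := by
        intro u v
        simp only [Complex.normSq_apply, Complex.sub_re, Complex.sub_im, Complex.mul_re,
          Complex.mul_im, Complex.one_re, Complex.one_im, Complex.conj_re, Complex.conj_im]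
        ring
      have hden : ∀ z ∈ ball (0:ℂ) 1, 1 - (starRingEnd ℂ) c * G z ≠ 0 := by
        intro z hz h
        have h2 : (1:ℂ) = (starRingEnd ℂ) c * G z := by
          have := sub_eq_zero.mp h; linear_combination this
        have h3 : (1:ℝ) = ‖(starRingEnd ℂ) c * G z‖ := by rw [← h2]; simp
        rw [norm_mul] at h3
        simp only [Complex.norm_conj] at h3
        have h4 : ‖G z‖ < 1 := hlt z hz
        nlinarith [norm_nonneg (G z), norm_nonneg c, hclt', h4]
      set H : ℂ → ℂ := fun z => (G z - c) / (1 - (starRingEnd ℂ) c * G z) with hH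
      have hHlt : ∀ z ∈ ball (0:ℂ) 1, ‖H z‖ < 1 := by
        intro z hz
        have hnsqz : Complex.normSq (G z) < 1 := by
          have h4 : ‖G z‖ < 1 := hlt z hz
          rw [← Complex.sq_norm]
          nlinarith [norm_nonneg (G z), h4]
        have hkz := key c (G z)
        have hsq : Complex.normSq (G z - c) < Complex.normSq (1 - (starRingEnd ℂ) c * G z) := by
          nlinarith
        have habs : ‖G z - c‖ < ‖1 - (starRingEnd ℂ) c * G z‖ := by
          have h1' : ‖G z - c‖ ^ 2 < ‖1 - (starRingEnd ℂ) c * G z‖ ^ 2 := by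
            rwa [Complex.sq_norm, Complex.sq_norm]
          exact lt_of_pow_lt_pow_left₀ 2 (norm_nonneg _) h1'
        rw [hH]
        simp only [norm_div]
        rw [div_lt_one (lt_of_le_of_lt (norm_nonneg _) habs)]
        exact habs
      have hH0 : H 0 = 0 := by rw [hH]; simp [hc]
      have hGdiff0 : DifferentiableAt ℂ G 0 := hGd.differentiableAt (isOpen_ball.mem_nhds h0D)
      have hHd : DifferentiableOn ℂ H (ball (0:ℂ) 1) := by
        apply DifferentiableOn.div
        · exact hGd.sub (differentiableOn_const _)
        · exact (differentiableOn_const _).sub ((differentiableOn_const _).mul hGd)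
        · exact hden
      have hmapsH : MapsTo H (ball (0:ℂ) 1) (ball (H 0) 1) := by
        rw [hH0]; intro x hx; rw [mem_ball_zero_iff]; exact hHlt x hx
      have hder := Complex.norm_deriv_le_div_of_mapsTo_ball hHd (hmapsH.mono_right ball_subset_closedBall) one_pos
      have hdH : deriv H 0 = deriv G 0 / (1 - (Complex.normSq c : ℂ)) := by
        have hnum : DifferentiableAt ℂ (fun z => G z - c) 0 := hGdiff0.sub_const c
        have hden' : DifferentiableAt ℂ (fun z => 1 - (starRingEnd ℂ) c * G z) 0 :=
          (differentiableAt_const _).sub ((differentiableAt_const _).mul hGdiff0)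
        have hne : (1:ℂ) - (Complex.normSq c : ℂ) ≠ 0 := by
          intro hx
          have h2 : ((1 - Complex.normSq c : ℝ) : ℂ) = 0 := by push_cast; linear_combination hx
          rw [Complex.ofReal_eq_zero] at h2
          linarith
        rw [hH, deriv_fun_div hnum hden' (hden 0 h0D)]
        rw [deriv_sub_const, deriv_const_sub, deriv_const_mul _ hGdiff0]
        rw [← hc, sub_self, zero_mul, sub_zero]
        rw [show (starRingEnd ℂ) c * c = (Complex.normSq c : ℂ) from by rw [mul_comm, Complex.mul_conj]]
        field_simp
      rw [hdH, norm_div] at hder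
      have hnorm1 : ‖(1:ℂ) - (Complex.normSq c : ℂ)‖ = 1 - Complex.normSq c := by
        rw [show (1:ℂ) - (Complex.normSq c : ℂ) = ((1 - Complex.normSq c : ℝ) : ℂ) by push_cast; ring]
        rw [Complex.norm_real, Real.norm_eq_abs, abs_of_pos (by linarith)]
      rw [hnorm1] at hder
      norm_num at hder
      rw [div_le_one (by linarith)] at hder
      have hsq : ‖c‖ ^ 2 = Complex.normSq c := by
        rw [Complex.sq_norm]
      rw [hsq]
      exact hder
  -- coefficient bookkeeping
  have hkey : a 3 - lam * a 2 ^ 2 = deriv G 0 + (3 - 4 * lam) * (G 0) ^ 2 := by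
    obtain ⟨P, hP⟩ := hfA 0 h0D
    have hgP : HasFPowerSeriesAt g P.fslope 0 := hP.has_fpower_series_dslope_fslope
    have ha2 : a 2 = P.coeff 2 := by
      rw [ha 2, iteratedDeriv_eq_coeff hP]
      norm_num [Nat.factorial]
    have ha3 : a 3 = P.coeff 3 := by
      rw [ha 3, iteratedDeriv_eq_coeff hP]
      norm_num [Nat.factorial]
    have hg1 : deriv g 0 = a 2 := by
      have h' := iteratedDeriv_eq_coeff (n := 1) hgP
      rw [iteratedDeriv_one] at h'
      rw [h', FormalMultilinearSeries.coeff_fslope, ha2]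
      norm_num
    have hg2 : deriv (deriv g) 0 = 2 * a 3 := by
      have h' := iteratedDeriv_eq_coeff (n := 2) hgP
      rw [iteratedDeriv_succ, iteratedDeriv_one] at h'
      rw [h', FormalMultilinearSeries.coeff_fslope, ha3]
      norm_num [Nat.factorial]
    have hF1 : deriv (deriv f) 0 = 2 * a 2 := by
      have h' := iteratedDeriv_eq_coeff (n := 2) hP
      rw [iteratedDeriv_succ, iteratedDeriv_one] at h'
      rw [h', ha2]
      norm_num [Nat.factorial]
    have hF2 : deriv (deriv (deriv f)) 0 = 6 * a 3 := by
      have h' := iteratedDeriv_eq_coeff (n := 3) hP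
      rw [iteratedDeriv_succ, iteratedDeriv_succ, iteratedDeriv_one] at h'
      rw [h', ha3]
      norm_num [Nat.factorial]
    -- relation deriv f = p * g near 0
    have hFev : deriv f =ᶠ[nhds 0] fun z => p z * g z := by
      apply Filter.eventuallyEq_of_mem (isOpen_ball.mem_nhds h0D)
      intro z hz
      exact (div_mul_cancel₀ _ (hgz z hz)).symm
    have hpa0 : AnalyticAt ℂ p 0 := hpA 0 h0D
    have hga0 : AnalyticAt ℂ g 0 := hgA 0 h0D
    have hwa0 : AnalyticAt ℂ w 0 := hwA 0 h0D
    have hd1 : deriv (fun z => p z * g z) 0 = deriv p 0 * g 0 + p 0 * deriv g 0 :=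
      deriv_mul hpa0.differentiableAt hga0.differentiableAt
    have hp1 : deriv p 0 = a 2 := by
      have h' := hFev.deriv_eq
      rw [hF1, hd1, hg0, hg1, hp0] at h'
      linear_combination -h'
    have hp2 : deriv (deriv p) 0 = 4 * a 3 - 2 * a 2 ^ 2 := by
      have h' := hFev.deriv.deriv_eq
      rw [hF2, dd_mul hpa0 hga0, hg0, hg1, hg2, hp0, hp1] at h'
      linear_combination -h'
    -- relation (p+1) * w = p - 1 near 0
    set q : ℂ → ℂ := fun z => p z + 1 with hq
    have hqa : AnalyticAt ℂ q 0 := by rw [hq]; exact hpa0.add analyticAt_const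
    have hq0 : q 0 = 2 := by rw [hq]; simp [hp0]; norm_num
    have hdq : deriv q = deriv p := by
      funext x
      rw [hq]
      exact deriv_add_const 1
    have hdmc : deriv (fun z => p z - 1) = deriv p := funext fun x => deriv_sub_const 1
    have hwev : (fun z => q z * w z) =ᶠ[nhds 0] fun z => p z - 1 := by
      apply Filter.eventuallyEq_of_mem (isOpen_ball.mem_nhds h0D)
      intro z hz
      exact mul_div_cancel₀ _ (hpne z hz)
    have hw1 : deriv w 0 = a 2 / 2 := by
      have h' := hwev.deriv_eq
      rw [deriv_fun_mul hqa.differentiableAt hwa0.differentiableAt, hdmc, hdq,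
        hw0, hq0, hp1] at h'
      linear_combination (1/2 : ℂ) * h'
    have hw2 : deriv (deriv w) 0 = 2 * a 3 - (3/2) * a 2 ^ 2 := by
      have h' := hwev.deriv.deriv_eq
      rw [dd_mul hqa hwa0, hdmc, hdq, hw0, hq0, hp1, hp2, hw1] at h'
      linear_combination (1/2 : ℂ) * h'
    obtain ⟨W, hW⟩ := hwa0
    have hGW : HasFPowerSeriesAt G W.fslope 0 := hW.has_fpower_series_dslope_fslope
    have hG0v : G 0 = a 2 / 2 := by rw [hGdef, dslope_same]; exact hw1
    have hG1 : deriv G 0 = a 3 - (3/4) * a 2 ^ 2 := by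
      have h1' := iteratedDeriv_eq_coeff (n := 1) hGW
      rw [iteratedDeriv_one, FormalMultilinearSeries.coeff_fslope] at h1'
      have h2' := iteratedDeriv_eq_coeff (n := 2) hW
      rw [iteratedDeriv_succ, iteratedDeriv_one, hw2] at h2'
      norm_num [Nat.factorial] at h1' h2'
      rw [h1']
      linear_combination (-1/2 : ℂ) * h2'
    rw [hG0v, hG1]
    ring
  -- final estimate
  have hG0 : ‖G 0‖ ≤ 1 := hGle 0 h0D
  rw [hkey]
  calc ‖deriv G 0 + (3 - 4 * lam) * G 0 ^ 2‖
      ≤ ‖deriv G 0‖ + ‖3 - 4 * lam‖ * ‖G 0‖ ^ 2 := by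
        refine (norm_add_le _ _).trans ?_
        rw [norm_mul, norm_pow]
    _ ≤ (1 - ‖G 0‖ ^ 2) + ‖4 * lam - 3‖ * ‖G 0‖ ^ 2 := by
        rw [show (3 : ℂ) - 4 * lam = -(4 * lam - 3) by ring, norm_neg]
        exact add_le_add_left hSP _
    _ ≤ max 1 ‖4 * lam - 3‖ := by
        rcases le_total ‖4 * lam - 3‖ 1 with h | h
        · refine le_trans ?_ (le_max_left _ _)
          nlinarith [norm_nonneg (G 0), sq_nonneg (‖G 0‖)]
        · refine le_trans ?_ (le_max_right _ _)
          nlinarith [norm_nonneg (G 0), sq_nonneg (‖G 0‖), pow_le_one₀ (n := 2) (norm_nonneg (G 0)) hG0]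
end

section
/- Let f be a starlike function on the unit disk (holomorphic, f(0)=0, f'(0)=1, nonvanishing off 0, Re(z f'(z)/f(z)) > 0 off 0). Then for all z ∈ 𝔻: |z|/(1+|z|)² ≤ |f(z)| ≤ |z|/(1−|z|)². -/
open Complex Metric Set

lemma aux_re_lower (x y t : ℝ) (ht0 : 0 ≤ t) (ht1 : t < 1)
    (h : (x-1)^2 + y^2 ≤ t^2 * ((x+1)^2 + y^2)) : (1-t)/(1+t) ≤ x := by
  rw [div_le_iff₀ (by linarith)]
  by_contra hc
  push_neg at hc
  have hprod : (1 - t^2) * y^2 ≤ ((t-1)*x + (t+1)) * ((t+1)*x + (t-1)) := by nlinarith [h]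
  have hf1 : 0 < (t-1)*x + (t+1) := by nlinarith [mul_lt_mul_of_neg_left hc (show t - 1 < 0 by linarith)]
  have hf2 : (t+1)*x + (t-1) < 0 := by nlinarith
  nlinarith [mul_neg_of_pos_of_neg hf1 hf2, mul_nonneg (mul_nonneg (show (0:ℝ) ≤ 1 - t by linarith) (show (0:ℝ) ≤ 1 + t by linarith)) (sq_nonneg y)]

lemma aux_abs_upper (x y t s : ℝ) (ht0 : 0 ≤ t) (ht1 : t < 1) (hs : 0 ≤ s)
    (hs2 : s^2 = x^2 + y^2) (hx : x ≤ s)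
    (h : (x-1)^2 + y^2 ≤ t^2 * ((x+1)^2 + y^2)) : s ≤ (1+t)/(1-t) := by
  rw [le_div_iff₀ (by linarith)]
  by_contra hc
  push_neg at hc
  have hC : 0 < (1-t)*s - (1+t) := by nlinarith
  have hD : 0 < (1+t)*s - (1-t) := by nlinarith
  have key : (1 - t^2) * s^2 ≤ 2*(1+t^2)*s - (1 - t^2) := by nlinarith [h, hx]
  nlinarith [mul_pos hC hD]

lemma g_bounds (g : ℂ → ℂ) (hg : DifferentiableOn ℂ g (ball (0:ℂ) 1))
    (hg0 : g 0 = 1) (hgre : ∀ w ∈ ball (0:ℂ) 1, 0 < (g w).re) :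
    ∀ w ∈ ball (0:ℂ) 1, (1 - ‖w‖)/(1 + ‖w‖) ≤ (g w).re ∧ ‖g w‖ ≤ (1 + ‖w‖)/(1 - ‖w‖) := by
  have hne : ∀ w ∈ ball (0:ℂ) 1, g w + 1 ≠ 0 := by
    intro w hw hz
    have h1 := hgre w hw
    have h2 : 0 < (g w + 1).re := by simp [Complex.add_re]; linarith
    rw [hz] at h2; simp at h2
  set h : ℂ → ℂ := fun w => (g w - 1) / (g w + 1) with hh
  have hhd : DifferentiableOn ℂ h (ball 0 1) :=
    ((hg.sub (differentiableOn_const 1)).div (hg.add (differentiableOn_const 1)) hne)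
  have hlt : ∀ w ∈ ball (0:ℂ) 1, ‖g w - 1‖ < ‖g w + 1‖ := by
    intro w hw
    have h1 := hgre w hw
    rw [← Real.sqrt_sq (norm_nonneg _), ← Real.sqrt_sq (norm_nonneg (g w + 1))]
    apply Real.sqrt_lt_sqrt (by positivity)
    rw [Complex.sq_norm, Complex.sq_norm, normSq_apply, normSq_apply]
    simp only [Complex.sub_re, Complex.sub_im, Complex.add_re, Complex.add_im, Complex.one_re,
      Complex.one_im]
    nlinarith
  have hmaps : MapsTo h (ball (0:ℂ) 1) (ball (0:ℂ) 1) := by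
    intro w hw
    rw [mem_ball_zero_iff, hh]
    have hl := hlt w hw
    have hp : 0 < ‖g w + 1‖ := (norm_nonneg _).trans_lt hl
    rw [norm_div, div_lt_one hp]
    exact hl
  have hschwarz : ∀ w ∈ ball (0:ℂ) 1, ‖h w‖ ≤ ‖w‖ := by
    intro w hw
    have := Complex.norm_le_norm_of_mapsTo_ball hhd (hmaps.mono_right ball_subset_closedBall) (by simp [hh, hg0]) (mem_ball_zero_iff.mp hw)
    simpa using this
  intro w hw
  have hsch := hschwarz w hw
  have hwlt : ‖w‖ < 1 := mem_ball_zero_iff.mp hw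
  have hw0 : (0:ℝ) ≤ ‖w‖ := norm_nonneg _
  have key : ‖g w - 1‖ ≤ ‖w‖ * ‖g w + 1‖ := by
    rw [hh, norm_div] at hsch
    rw [← div_le_iff₀ ((norm_nonneg _).trans_lt (hlt w hw))]
    exact hsch
  have keysq : ((g w).re - 1)^2 + (g w).im^2 ≤ ‖w‖^2 * (((g w).re + 1)^2 + (g w).im^2) := by
    have h2 : ‖g w - 1‖^2 ≤ (‖w‖ * ‖g w + 1‖)^2 := by
      apply pow_le_pow_left₀ (norm_nonneg _) key
    rw [mul_pow, Complex.sq_norm (g w - 1), Complex.sq_norm (g w + 1), normSq_apply,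
      normSq_apply] at h2
    simp only [Complex.sub_re, Complex.sub_im, Complex.add_re, Complex.add_im, Complex.one_re,
      Complex.one_im] at h2
    nlinarith [h2]
  constructor
  · exact aux_re_lower _ _ _ hw0 hwlt keysq
  · exact aux_abs_upper _ _ _ _ hw0 hwlt (norm_nonneg _)
      (by rw [Complex.sq_norm, normSq_apply]; ring) (Complex.re_le_norm _) keysq

lemma conj_mul_re_div (a b : ℂ) : ((starRingEnd ℂ) a * b).re / Complex.normSq a = (b / a).re := by
  rcases eq_or_ne a 0 with rfl | ha
  · simp
  · rw [Complex.div_re, Complex.mul_re, Complex.conj_re, Complex.conj_im, normSq_apply]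
    field_simp
    ring

theorem stmt8 (f : ℂ → ℂ)
    (hf : DifferentiableOn ℂ f (ball (0:ℂ) 1))
    (h0 : f 0 = 0) (h1 : deriv f 0 = 1)
    (hnz : ∀ z ∈ ball (0:ℂ) 1, z ≠ 0 → f z ≠ 0)
    (hre : ∀ z ∈ ball (0:ℂ) 1, z ≠ 0 → 0 < (z * deriv f z / f z).re) :
    ∀ z ∈ ball (0:ℂ) 1,
      ‖z‖ / (1 + ‖z‖) ^ 2 ≤ ‖f z‖ ∧ ‖f z‖ ≤ ‖z‖ / (1 - ‖z‖) ^ 2 := by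
  have h0mem : (0:ℂ) ∈ ball (0:ℂ) 1 := mem_ball_self one_pos
  set F : ℂ → ℂ := dslope f 0 with hFdef
  have hFd : DifferentiableOn ℂ F (ball 0 1) :=
    (differentiableOn_dslope (isOpen_ball.mem_nhds h0mem)).mpr hf
  have hF0 : F 0 = 1 := by rw [hFdef, dslope_same, h1]
  have hfF : ∀ w, f w = w * F w := by
    intro w
    rcases eq_or_ne w 0 with rfl | hw
    · simp [h0]
    · rw [hFdef, dslope_of_ne _ hw, slope_def_field, h0]
      field_simp
      ring
  have hFne : ∀ w ∈ ball (0:ℂ) 1, F w ≠ 0 := by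
    intro w hw
    rcases eq_or_ne w 0 with rfl | hw0
    · rw [hF0]; exact one_ne_zero
    · intro hc
      exact hnz w hw hw0 (by rw [hfF w, hc, mul_zero])
  have hderiv : DifferentiableOn ℂ (deriv f) (ball 0 1) :=
    ((hf.analyticOnNhd isOpen_ball).deriv).differentiableOn
  -- the derivative identity  f' = F + z F'
  have hderiv_eq : ∀ w ∈ ball (0:ℂ) 1, deriv f w = F w + w * deriv F w := by
    intro w hw
    have hFw : DifferentiableAt ℂ F w := hFd.differentiableAt (isOpen_ball.mem_nhds hw)
    have : HasDerivAt f (1 * F w + w * deriv F w) w := by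
      rw [show f = fun x => x * F x from funext hfF]
      exact (hasDerivAt_id' w).mul hFw.hasDerivAt
    rw [this.deriv]; ring
  set g : ℂ → ℂ := fun w => deriv f w / F w with hgdef
  have hgd : DifferentiableOn ℂ g (ball 0 1) := hderiv.div hFd hFne
  have hg0 : g 0 = 1 := by rw [hgdef]; simp [hF0, h1]
  have hgval : ∀ w ∈ ball (0:ℂ) 1, w ≠ 0 → g w = w * deriv f w / f w := by
    intro w hw hw0
    rw [hgdef]
    simp only
    rw [hfF w]
    exact (mul_div_mul_left _ _ hw0).symm
  have hgre : ∀ w ∈ ball (0:ℂ) 1, 0 < (g w).re := by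
    intro w hw
    rcases eq_or_ne w 0 with rfl | hw0
    · rw [hg0]; simp
    · rw [hgval w hw hw0]; exact hre w hw hw0
  have hgb := g_bounds g hgd hg0 hgre
  intro z hz
  rcases eq_or_ne z 0 with rfl | hz0
  · simp [h0]
  set r : ℝ := ‖z‖ with hrdef
  have hr0 : 0 < r := norm_pos_iff.mpr hz0
  have hr1 : r < 1 := mem_ball_zero_iff.mp hz
  have hrC : (r:ℂ) ≠ 0 := by exact_mod_cast hr0.ne'
  set e : ℂ := (r : ℂ)⁻¹ * z with hedef
  have hee : ‖e‖ = 1 := by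
    rw [hedef, norm_mul, norm_inv, Complex.norm_real, Real.norm_eq_abs, abs_of_pos hr0]
    exact inv_mul_cancel₀ hr0.ne'
  have he0 : e ≠ 0 := by intro hc; rw [hc] at hee; simp at hee
  set ζ : ℝ → ℂ := fun t => (t : ℂ) * e with hζdef
  have hζr : ζ r = z := by
    rw [hζdef]; simp only; rw [hedef, ← mul_assoc, mul_inv_cancel₀ hrC, one_mul]
  have hζnorm : ∀ t : ℝ, ‖ζ t‖ = |t| := by
    intro t
    rw [hζdef]; simp only [norm_mul, hee, mul_one, Complex.norm_real, Real.norm_eq_abs]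
  have hζmem : ∀ t ∈ Icc (0:ℝ) r, ζ t ∈ ball (0:ℂ) 1 := by
    intro t ht
    rw [mem_ball_zero_iff, hζnorm, _root_.abs_of_nonneg ht.1]
    exact lt_of_le_of_lt ht.2 hr1
  set v : ℝ → ℝ := fun t => Real.log (Complex.normSq (F (ζ t))) with hvdef
  have hζ0 : ζ 0 = 0 := by rw [hζdef]; simp
  have hv0 : v 0 = 0 := by rw [hvdef]; simp [hζ0, hF0]
  have hvcont : ContinuousOn v (Icc 0 r) := by
    apply ContinuousOn.log
    · exact Complex.continuous_normSq.comp_continuousOn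
        (hFd.continuousOn.comp ((Complex.continuous_ofReal.mul continuous_const).continuousOn) hζmem)
    · intro t ht
      exact (Complex.normSq_pos.mpr (hFne _ (hζmem t ht))).ne'
  -- derivative of v on the open interval
  have hD : ∀ t ∈ Ioo (0:ℝ) r, HasDerivAt v (2 * ((g (ζ t)).re - 1) / t) t := by
    intro t ht
    have htmem : ζ t ∈ ball (0:ℂ) 1 := hζmem t ⟨ht.1.le, ht.2.le⟩
    have htC : (t:ℂ) ≠ 0 := by exact_mod_cast ht.1.ne'
    have hFa : F (ζ t) ≠ 0 := hFne _ htmem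
    have hFat : DifferentiableAt ℂ F (ζ t) := hFd.differentiableAt (isOpen_ball.mem_nhds htmem)
    have hζder : HasDerivAt ζ e t := by
      simpa using (Complex.ofRealCLM.hasDerivAt (x := t)).mul_const e
    have hcomp : HasDerivAt (fun s => F (ζ s)) (e * deriv F (ζ t)) t := by
      have := (hFat.hasDerivAt).scomp (x := t) hζder
      simpa [Function.comp_def, smul_eq_mul] using this
    set a : ℂ := F (ζ t) with hadef
    set d : ℂ := e * deriv F (ζ t) with hddef
    have hra : HasDerivAt (fun s => (F (ζ s)).re) d.re t := by
      simpa [Function.comp_def] using (Complex.reCLM.hasFDerivAt.comp_hasDerivAt t hcomp)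
    have him : HasDerivAt (fun s => (F (ζ s)).im) d.im t := by
      simpa [Function.comp_def] using (Complex.imCLM.hasFDerivAt.comp_hasDerivAt t hcomp)
    have hnsq : HasDerivAt (fun s => Complex.normSq (F (ζ s)))
        (2 * ((starRingEnd ℂ) a * d).re) t := by
      have h8 : HasDerivAt (fun s => (F (ζ s)).re * (F (ζ s)).re + (F (ζ s)).im * (F (ζ s)).im) _ t :=
        (hra.mul hra).add (him.mul him)
      have hfun : (fun s => (F (ζ s)).re * (F (ζ s)).re + (F (ζ s)).im * (F (ζ s)).im)
          = fun s => Complex.normSq (F (ζ s)) := by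
        funext s; rw [normSq_apply]
      rw [hfun] at h8
      convert h8 using 1
      rw [Complex.mul_re, Complex.conj_re, Complex.conj_im]
      ring
    have hlog : HasDerivAt v (2 * ((starRingEnd ℂ) a * d).re / Complex.normSq a) t :=
      hnsq.log (Complex.normSq_pos.mpr hFa).ne'
    have hkey : d / a = (g (ζ t) - 1) / (t:ℂ) := by
      have h5 := hderiv_eq (ζ t) htmem
      rw [hddef, hadef, hgdef]
      simp only
      rw [h5, hζdef]
      simp only
      field_simp
      rw [add_div, div_self (show F (e * (t:ℂ)) ≠ 0 by rw [mul_comm]; exact hFa)]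
      ring
    convert hlog using 1
    rw [mul_div_assoc, mul_div_assoc, conj_mul_re_div, hkey, Complex.div_ofReal_re,
      Complex.sub_re, Complex.one_re]
  -- lower bound : -(4 log (1+r)) ≤ v r
  have hlog1 : ∀ t ∈ Ioo (0:ℝ) r, HasDerivAt (fun s => 4 * Real.log (1 + s)) (4 * (1 / (1 + t))) t := by
    intro t ht
    have h6 : HasDerivAt (fun s : ℝ => 1 + s) 1 t := by
      simpa using (hasDerivAt_id t).const_add (1:ℝ)
    exact (h6.log (ne_of_gt (by linarith [ht.1]))).const_mul 4
  have hlog2 : ∀ t ∈ Ioo (0:ℝ) r, HasDerivAt (fun s => 4 * Real.log (1 - s)) (4 * (-1 / (1 - t))) t := by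
    intro t ht
    have h9 : HasDerivAt (fun s : ℝ => 1 - s) (-1) t := by
      simpa using (hasDerivAt_id t).const_sub (1:ℝ)
    exact (h9.log (ne_of_gt (by linarith [ht.2, hr1]))).const_mul 4
  have hIoo : interior (Icc (0:ℝ) r) = Ioo 0 r := interior_Icc
  have hlow : -(4 * Real.log (1 + r)) ≤ v r := by
    have hmono : MonotoneOn (fun t => v t + 4 * Real.log (1 + t)) (Icc 0 r) := by
      apply monotoneOn_of_deriv_nonneg (convex_Icc 0 r)
      · apply hvcont.add
        apply ContinuousOn.mul continuousOn_const
        apply ContinuousOn.log (continuousOn_const.add continuousOn_id)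
        intro t ht
        show (1:ℝ) + t ≠ 0
        exact ne_of_gt (by linarith [ht.1])
      · rw [hIoo]
        intro t ht
        exact ((hD t ht).add (hlog1 t ht)).differentiableAt.differentiableWithinAt
      · rw [hIoo]
        intro t ht
        have hd : deriv (fun t => v t + 4 * Real.log (1 + t)) t = _ := ((hD t ht).add (hlog1 t ht)).deriv
        rw [hd]
        have hgl := (hgb (ζ t) (hζmem t ⟨ht.1.le, ht.2.le⟩)).1
        rw [hζnorm, _root_.abs_of_pos ht.1] at hgl
        rw [div_le_iff₀ (by nlinarith [ht.1] : (0:ℝ) < 1 + t)] at hgl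
        have ht0 : (0:ℝ) < t := ht.1
        have h1t : (0:ℝ) < 1 + t := by linarith
        have h7 : (-4) / (1+t) ≤ 2*((g (ζ t)).re - 1) / t := by
          rw [div_le_div_iff₀ h1t ht0]
          nlinarith [hgl]
        have h8 : -(4*(1/(1+t))) = (-4)/(1+t) := by ring
        linarith [h7]
    have h10 := hmono (left_mem_Icc.mpr hr0.le) (right_mem_Icc.mpr hr0.le) hr0.le
    simp only [hv0, add_zero, zero_add, Real.log_one, mul_zero] at h10
    linarith [h10]
  
  have hupp : v r ≤ -(4 * Real.log (1 - r)) := by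
    have hanti : AntitoneOn (fun t => v t + 4 * Real.log (1 - t)) (Icc 0 r) := by
      apply antitoneOn_of_deriv_nonpos (convex_Icc 0 r)
      · apply hvcont.add
        apply ContinuousOn.mul continuousOn_const
        apply ContinuousOn.log (continuousOn_const.sub continuousOn_id)
        intro t ht
        show (1:ℝ) - t ≠ 0
        exact ne_of_gt (by linarith [ht.2, hr1])
      · rw [hIoo]
        intro t ht
        exact ((hD t ht).add (hlog2 t ht)).differentiableAt.differentiableWithinAt
      · rw [hIoo]
        intro t ht
        have hd : deriv (fun t => v t + 4 * Real.log (1 - t)) t = _ := ((hD t ht).add (hlog2 t ht)).deriv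
        rw [hd]
        have htmem := hζmem t ⟨ht.1.le, ht.2.le⟩
        have hgu := (hgb (ζ t) htmem).2
        rw [hζnorm, _root_.abs_of_pos ht.1] at hgu
        have hxle : (g (ζ t)).re ≤ ‖g (ζ t)‖ := by
          exact Complex.re_le_norm _
        have ht0 : (0:ℝ) < t := ht.1
        have h1t : (0:ℝ) < 1 - t := by linarith [ht.2, hr1]
        rw [le_div_iff₀ h1t] at hgu
        have h7 : 2*((g (ζ t)).re - 1) / t ≤ 4 / (1-t) := by
          rw [div_le_div_iff₀ ht0 h1t]
          nlinarith [hgu, hxle]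
        have h8 : 4*(-1/(1-t)) = -(4/(1-t)) := by ring
        linarith [h7]
    have h10 := hanti (left_mem_Icc.mpr hr0.le) (right_mem_Icc.mpr hr0.le) hr0.le
    simp only [hv0, zero_add, add_zero, Real.log_one, mul_zero, sub_zero] at h10
    linarith [h10]
  have hvr : v r = Real.log (Complex.normSq (F z)) := by
    rw [hvdef]; simp only; rw [hζr]
  set A : ℝ := ‖F z‖ with hAdef
  have hA0 : 0 < A := norm_pos_iff.mpr (hFne z hz)
  have hnsqA : Complex.normSq (F z) = A^2 := by
    rw [hAdef, Complex.sq_norm]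
  have hvrA : v r = 2 * Real.log A := by
    rw [hvr, hnsqA, Real.log_pow]
    norm_num
  have h1r : (0:ℝ) < 1 + r := by linarith
  have h1r' : (0:ℝ) < 1 - r := by linarith
  have hlowA : 1 / (1+r)^2 ≤ A := by
    have h11 : 0 ≤ Real.log (A * (1+r)^2) := by
      rw [Real.log_mul hA0.ne' (by positivity), Real.log_pow]
      push_cast
      linarith [hlow, hvrA]
    have h2 := (Real.log_nonneg_iff (by positivity)).mp h11
    rw [div_le_iff₀ (by positivity : (0:ℝ) < (1+r)^2)]
    linarith [h2]
  have huppA : A ≤ 1 / (1-r)^2 := by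
    have h11 : Real.log (A * (1-r)^2) ≤ 0 := by
      rw [Real.log_mul hA0.ne' (by positivity), Real.log_pow]
      push_cast
      linarith [hupp, hvrA]
    have h2 := (Real.log_nonpos_iff (by positivity)).mp h11
    rw [le_div_iff₀ (by positivity : (0:ℝ) < (1-r)^2)]
    linarith [h2]
  have hfz : ‖f z‖ = r * A := by rw [hfF z, norm_mul, hAdef, hrdef]
  constructor
  · rw [hfz]
    calc r / (1+r)^2 = r * (1/(1+r)^2) := by ring
      _ ≤ r * A := mul_le_mul_of_nonneg_left hlowA hr0.le
  · rw [hfz]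
    calc r * A ≤ r * (1/(1-r)^2) := mul_le_mul_of_nonneg_left huppA hr0.le
      _ = r / (1-r)^2 := by ring
end

section
/- Let f be a starlike function on the unit disk (holomorphic, f(0)=0, f'(0)=1, nonvanishing off 0, Re(z f'(z)/f(z)) > 0 off 0). Then for all z ∈ 𝔻: (1−|z|)/(1+|z|)³ ≤ |f'(z)| ≤ (1+|z|)/(1−|z|)³. -/
open Complex Metric Set


-- Caratheodory class bounds
lemma cara (p : ℂ → ℂ) (hd : DifferentiableOn ℂ p (ball (0:ℂ) 1))
    (hp0 : p 0 = 1) (hre : ∀ z ∈ ball (0:ℂ) 1, 0 < (p z).re) :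
    ∀ z ∈ ball (0:ℂ) 1,
      (1 - ‖z‖) / (1 + ‖z‖) ≤ ‖p z‖ ∧ ‖p z‖ ≤ (1 + ‖z‖) / (1 - ‖z‖) ∧
      (1 - ‖z‖) / (1 + ‖z‖) ≤ (p z).re := by
  have hne : ∀ z ∈ ball (0:ℂ) 1, p z + 1 ≠ 0 := by
    intro z hz h
    have := hre z hz
    rw [show p z = -1 by linear_combination h] at this
    simp at this
    linarith
  set w : ℂ → ℂ := fun z => (p z - 1) / (p z + 1) with hw
  have hwd : DifferentiableOn ℂ w (ball (0:ℂ) 1) :=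
    (hd.sub (differentiableOn_const 1)).div (hd.add (differentiableOn_const 1)) hne
  have hmaps : MapsTo w (ball (0:ℂ) 1) (ball (0:ℂ) 1) := by
    intro z hz
    rw [mem_ball_zero_iff]
    have h1 : ‖p z - 1‖ < ‖p z + 1‖ := by
      have : ‖p z - 1‖^2 < ‖p z + 1‖^2 := by
        simp only [Complex.sq_norm]
        simp only [Complex.normSq_apply, Complex.sub_re, Complex.sub_im, Complex.add_re,
          Complex.add_im, Complex.one_re, Complex.one_im]
        nlinarith [hre z hz]
      have h2 : (0:ℝ) ≤ ‖p z + 1‖ := norm_nonneg _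
      nlinarith [norm_nonneg (p z - 1)]
    calc ‖w z‖ = ‖p z - 1‖ / ‖p z + 1‖ := by rw [hw]; simp [norm_div]
    _ < 1 := (div_lt_one (lt_of_le_of_lt (norm_nonneg _) h1)).2 h1
  have hw0 : w 0 = 0 := by simp [hw, hp0]
  intro z hz
  have hzb : ‖z‖ < 1 := mem_ball_zero_iff.1 hz
  have hwz : ‖w z‖ ≤ ‖z‖ :=
    Complex.norm_le_norm_of_mapsTo_ball_self hwd (hmaps.mono_right ball_subset_closedBall) hw0 hzb
  set a := w z with ha
  set t := ‖z‖ with htd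
  have ht0 : 0 ≤ t := norm_nonneg z
  have hat : ‖a‖ ≤ t := hwz
  have h1a : (1:ℂ) - a ≠ 0 := by
    intro h
    have : ‖a‖ = 1 := by
      have : a = 1 := by linear_combination -h
      simp [this]
    linarith [lt_of_le_of_lt hat hzb, this.symm.le]
  have hkey : p z * (1 - a) = 1 + a := by
    have h := hne z hz
    rw [ha, hw]
    field_simp
    ring
  have hn1 : ‖p z‖ * ‖1 - a‖ = ‖1 + a‖ := by
    rw [← norm_mul, hkey]
  have hub : ‖(1:ℂ) - a‖ ≤ 1 + t := by
    calc ‖(1:ℂ) - a‖ ≤ ‖(1:ℂ)‖ + ‖a‖ := norm_sub_le _ _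
    _ ≤ 1 + t := by simp; exact hat
  have hlb : 1 - t ≤ ‖(1:ℂ) - a‖ := by
    calc (1:ℝ) - t ≤ 1 - ‖a‖ := by linarith
    _ = ‖(1:ℂ)‖ - ‖a‖ := by simp
    _ ≤ ‖(1:ℂ) - a‖ := norm_sub_norm_le _ _
  have hub' : ‖(1:ℂ) + a‖ ≤ 1 + t := by
    calc ‖(1:ℂ) + a‖ ≤ ‖(1:ℂ)‖ + ‖a‖ := norm_add_le _ _
    _ ≤ 1 + t := by simp; exact hat
  have hlb' : 1 - t ≤ ‖(1:ℂ) + a‖ := by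
    have h := norm_sub_le ((1:ℂ) + a) a
    simp only [add_sub_cancel_right, norm_one] at h
    linarith
  have h1t : (0:ℝ) < 1 - t := by linarith
  have h1t' : (0:ℝ) < 1 + t := by linarith
  have hpn : 0 ≤ ‖p z‖ := norm_nonneg _
  refine ⟨?_, ?_, ?_⟩
  · -- lower norm bound
    rw [div_le_iff₀ h1t']
    calc (1 - t) ≤ ‖(1:ℂ) + a‖ := hlb'
    _ = ‖p z‖ * ‖1 - a‖ := hn1.symm
    _ ≤ ‖p z‖ * (1 + t) := by
        apply mul_le_mul_of_nonneg_left hub hpn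
  · rw [le_div_iff₀ h1t]
    calc ‖p z‖ * (1 - t) ≤ ‖p z‖ * ‖1 - a‖ := mul_le_mul_of_nonneg_left hlb hpn
    _ = ‖1 + a‖ := hn1
    _ ≤ 1 + t := hub'
  · -- real part lower bound
    have hres : (p z).re * Complex.normSq (1 - a) = 1 - Complex.normSq a := by
      have h2 : (p z * (1 - a) * (starRingEnd ℂ) (1 - a)).re
          = ((1 + a) * (starRingEnd ℂ) (1 - a)).re := by rw [hkey]
      have h3 : p z * (1 - a) * (starRingEnd ℂ) (1 - a)
          = p z * ((Complex.normSq (1 - a) : ℝ) : ℂ) := by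
        rw [mul_assoc, Complex.mul_conj]
      rw [h3] at h2
      simp only [Complex.mul_re, Complex.ofReal_re, Complex.ofReal_im, mul_zero, sub_zero] at h2
      rw [h2]
      simp only [Complex.mul_re, Complex.mul_im, Complex.add_re, Complex.add_im,
        Complex.sub_re, Complex.sub_im, Complex.one_re, Complex.one_im,
        Complex.conj_re, Complex.conj_im, Complex.normSq_apply]
      ring
    have hns1 : Complex.normSq (1 - a) ≤ (1 + t)^2 := by
      have : Complex.normSq (1 - a) = ‖(1:ℂ) - a‖^2 := (Complex.sq_norm _).symm
      rw [this]
      nlinarith [norm_nonneg ((1:ℂ) - a)]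
    have hns2 : (1 - t) * (1 + t) ≤ 1 - Complex.normSq a := by
      have : Complex.normSq a = ‖a‖^2 := (Complex.sq_norm _).symm
      nlinarith [norm_nonneg a]
    have hrp := hre z hz
    rw [div_le_iff₀ h1t']
    nlinarith [hres, hns1, hns2]


lemma growth (g p : ℂ → ℂ) (hg : DifferentiableOn ℂ g (ball (0:ℂ) 1))
    (hg0 : g 0 = 1) (hgnz : ∀ z ∈ ball (0:ℂ) 1, g z ≠ 0)
    (hrel : ∀ z ∈ ball (0:ℂ) 1, z * deriv g z = (p z - 1) * g z)
    (hbd : ∀ z ∈ ball (0:ℂ) 1,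
      (1 - ‖z‖) / (1 + ‖z‖) ≤ (p z).re ∧ (p z).re ≤ (1 + ‖z‖) / (1 - ‖z‖)) :
    ∀ z ∈ ball (0:ℂ) 1,
      1 / (1 + ‖z‖)^2 ≤ ‖g z‖ ∧ ‖g z‖ ≤ 1 / (1 - ‖z‖)^2 := by
  intro z hz
  rcases eq_or_ne z 0 with rfl | hz0
  · simp [hg0]
  have hzb : ‖z‖ < 1 := mem_ball_zero_iff.1 hz
  set r := ‖z‖ with hr
  have hr0 : 0 < r := norm_pos_iff.2 hz0
  have hrc : (r:ℂ) ≠ 0 := by exact_mod_cast ne_of_gt hr0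
  obtain ⟨e, hre, hγr'⟩ : ∃ e : ℂ, ‖e‖ = 1 ∧ (r:ℂ) * e = z := by
    refine ⟨z / (r:ℂ), ?_, by field_simp⟩
    rw [norm_div]
    simp only [Complex.norm_real, Real.norm_eq_abs, _root_.abs_of_pos hr0, ← hr]
    exact div_self (ne_of_gt hr0)
  set γ : ℝ → ℂ := fun t => (t:ℂ) * e with hγ
  have hγr : γ r = z := hγr'
  have hmem : ∀ t : ℝ, |t| < 1 → γ t ∈ ball (0:ℂ) 1 := by
    intro t ht
    rw [mem_ball_zero_iff, hγ, norm_mul, hre, mul_one, Complex.norm_real, Real.norm_eq_abs]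
    exact ht
  have hmem' : ∀ t ∈ Icc (0:ℝ) r, γ t ∈ ball (0:ℂ) 1 := by
    intro t ht
    exact hmem t (by rw [_root_.abs_of_nonneg ht.1]; exact lt_of_le_of_lt ht.2 hzb)
  set G : ℝ → ℂ := fun t => g (γ t) with hG
  have hGnz : ∀ t ∈ Icc (0:ℝ) r, G t ≠ 0 := fun t ht => hgnz _ (hmem' t ht)
  -- derivative facts
  have hasD : ∀ t ∈ Icc (0:ℝ) r, HasDerivAt G (deriv g (γ t) * e) t := by
    intro t ht
    have h1 : DifferentiableAt ℂ g (γ t) :=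
      (hg.differentiableAt (isOpen_ball.mem_nhds (hmem' t ht)))
    have h2 : HasDerivAt (fun w : ℂ => g (w * e)) (deriv g (γ t) * e) (t:ℂ) := by
      have := HasDerivAt.comp (t:ℂ) (h1.hasDerivAt) ((hasDerivAt_id (t:ℂ)).mul_const e)
      simpa [Function.comp_def, hγ] using this
    exact h2.comp_ofReal
  set φ : ℝ → ℝ := fun t => Real.log (Complex.normSq (G t)) with hφ
  have hasφ : ∀ t ∈ Icc (0:ℝ) r,
      HasDerivAt φ (2 * ((deriv g (γ t) * e) / G t).re) t := by
    intro t ht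
    have hD := hasD t ht
    have hu : HasDerivAt (fun s => (G s).re) (deriv g (γ t) * e).re t :=
      Complex.reCLM.hasFDerivAt.comp_hasDerivAt t hD
    have hv : HasDerivAt (fun s => (G s).im) (deriv g (γ t) * e).im t :=
      Complex.imCLM.hasFDerivAt.comp_hasDerivAt t hD
    have hns : HasDerivAt (fun s => Complex.normSq (G s))
        (2 * (G t).re * (deriv g (γ t) * e).re + 2 * (G t).im * (deriv g (γ t) * e).im) t := by
      have := (hu.mul hu).add (hv.mul hv)
      simp only [Complex.normSq_apply]
      exact this.congr_deriv (by ring)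
    have hne : Complex.normSq (G t) ≠ 0 := by
      simpa [Complex.normSq_eq_zero] using hGnz t ht
    have hlog := (Real.hasDerivAt_log hne).comp t hns
    refine hlog.congr_deriv ?_
    rw [Complex.div_re]
    field_simp [Complex.normSq_apply] at *
  -- derivative value on the open interval
  have hφval : ∀ t ∈ Ioo (0:ℝ) r,
      2 * ((deriv g (γ t) * e) / G t).re = 2 * ((p (γ t)).re - 1) / t := by
    intro t ht
    have htmem : γ t ∈ ball (0:ℂ) 1 := hmem' t ⟨ht.1.le, ht.2.le⟩
    have ht0 : (t:ℂ) ≠ 0 := by exact_mod_cast ne_of_gt ht.1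
    have hgt : g (γ t) ≠ 0 := hgnz _ htmem
    have hr1 := hrel (γ t) htmem
    have key : (deriv g (γ t) * e) / G t = (p (γ t) - 1) / (t:ℂ) := by
      have h2 : ((t:ℂ) * e) * deriv g (γ t) = (p (γ t) - 1) * g (γ t) := hr1
      rw [hG]
      field_simp
      linear_combination h2
    rw [key, Complex.div_ofReal_re]
    simp only [Complex.sub_re, Complex.one_re]
    ring
  -- bounds on the derivative of φ on the open interval
  have hbnd : ∀ t ∈ Ioo (0:ℝ) r,
      -(4/(1+t)) ≤ 2 * ((p (γ t)).re - 1) / t ∧ 2 * ((p (γ t)).re - 1) / t ≤ 4/(1-t) := by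
    intro t ht
    have htmem : γ t ∈ ball (0:ℂ) 1 := hmem' t ⟨ht.1.le, ht.2.le⟩
    have hnγ : ‖γ t‖ = t := by
      rw [hγ]
      simp only [norm_mul, hre, mul_one, Complex.norm_real, Real.norm_eq_abs]
      exact _root_.abs_of_pos ht.1
    have hb := hbd (γ t) htmem
    rw [hnγ] at hb
    have ht1 : 0 < 1 - t := by
      have := lt_of_lt_of_le ht.2 hzb.le; linarith
    have ht1' : 0 < 1 + t := by linarith [ht.1]
    constructor
    · have h1 : (1 - t)/(1 + t) ≤ (p (γ t)).re := hb.1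
      rw [div_le_iff₀ ht1'] at h1
      rw [neg_le, ← neg_div, div_le_div_iff₀ ht.1 ht1']
      nlinarith [ht.1]
    · rw [div_le_div_iff₀ ht.1 ht1]
      have h1 : (p (γ t)).re ≤ (1 + t)/(1 - t) := hb.2
      rw [le_div_iff₀ ht1] at h1
      nlinarith [ht.1]
  have hIcc : interior (Icc (0:ℝ) r) = Ioo 0 r := interior_Icc
  -- upper bound function B
  have hlog1 : ∀ (c : ℝ) (t : ℝ), c + t ≠ 0 →
      HasDerivAt (fun s : ℝ => Real.log (c + s)) ((c+t)⁻¹) t := by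
    intro c t hct
    have h1 : HasDerivAt (fun s : ℝ => c + s) 1 t := (hasDerivAt_id t).const_add c
    exact ((Real.hasDerivAt_log hct).comp t h1).congr_deriv (by ring)
  have hlog2 : ∀ (t : ℝ), (1:ℝ) - t ≠ 0 →
      HasDerivAt (fun s : ℝ => Real.log (1 - s)) (-(1-t)⁻¹) t := by
    intro t hct
    have h1 : HasDerivAt (fun s : ℝ => 1 - s) (-1) t := (hasDerivAt_id t).const_sub 1
    exact ((Real.hasDerivAt_log hct).comp t h1).congr_deriv (by ring)
  have h1r : (0:ℝ) < 1 - r := by linarith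
  -- B antitone
  have hBder : ∀ t ∈ Icc (0:ℝ) r,
      HasDerivAt (fun s => φ s + 4 * Real.log (1 - s))
        (2 * ((deriv g (γ t) * e) / G t).re - 4 * (1-t)⁻¹) t := by
    intro t ht
    have ht1 : (1:ℝ) - t ≠ 0 := by
      have := lt_of_le_of_lt ht.2 hzb; nlinarith
    have := (hasφ t ht).add ((hlog2 t ht1).const_mul 4)
    exact this.congr_deriv (by ring)
  have hAder : ∀ t ∈ Icc (0:ℝ) r,
      HasDerivAt (fun s => φ s + 4 * Real.log (1 + s))
        (2 * ((deriv g (γ t) * e) / G t).re + 4 * (1+t)⁻¹) t := by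
    intro t ht
    have ht1 : (1:ℝ) + t ≠ 0 := by nlinarith [ht.1]
    have h0 := (hlog1 1 t ht1).const_mul (4:ℝ)
    exact (hasφ t ht).add h0
  have hBanti : AntitoneOn (fun s => φ s + 4 * Real.log (1 - s)) (Icc 0 r) := by
    apply antitoneOn_of_deriv_nonpos (convex_Icc 0 r)
    · intro t ht
      exact (hBder t ht).continuousAt.continuousWithinAt
    · rw [hIcc]
      intro t ht
      exact (hBder t (Ioo_subset_Icc_self ht)).differentiableAt.differentiableWithinAt
    · rw [hIcc]
      intro t ht
      rw [(hBder t (Ioo_subset_Icc_self ht)).deriv]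
      rw [hφval t ht]
      have h2 := (hbnd t ht).2
      have ht1 : 0 < 1 - t := by
        have := lt_of_lt_of_le ht.2 hzb.le; linarith
      have : 4 * (1-t)⁻¹ = 4/(1-t) := by ring
      rw [this]
      linarith
  have hAmono : MonotoneOn (fun s => φ s + 4 * Real.log (1 + s)) (Icc 0 r) := by
    apply monotoneOn_of_deriv_nonneg (convex_Icc 0 r)
    · intro t ht
      exact (hAder t ht).continuousAt.continuousWithinAt
    · rw [hIcc]
      intro t ht
      exact (hAder t (Ioo_subset_Icc_self ht)).differentiableAt.differentiableWithinAt
    · rw [hIcc]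
      intro t ht
      rw [(hAder t (Ioo_subset_Icc_self ht)).deriv]
      rw [hφval t ht]
      have h2 := (hbnd t ht).1
      have : 4 * (1+t)⁻¹ = 4/(1+t) := by ring
      rw [this]
      linarith
  have hγ0 : γ 0 = 0 := by rw [hγ]; simp
  have hφ0 : φ 0 = 0 := by
    simp only [hφ, hG, hγ0, hg0]
    simp
  have hφr : φ r = Real.log (Complex.normSq (g z)) := by simp only [hφ, hG, hγr]
  have h0mem : (0:ℝ) ∈ Icc (0:ℝ) r := ⟨le_refl _, hr0.le⟩
  have hrmem : r ∈ Icc (0:ℝ) r := ⟨hr0.le, le_refl _⟩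
  have hBineq := hBanti h0mem hrmem hr0.le
  have hAineq := hAmono h0mem hrmem hr0.le
  simp only [hφ0, hφr] at hBineq hAineq
  rw [sub_zero] at *
  have hgzpos : 0 < Complex.normSq (g z) := by
    rw [Complex.normSq_pos]
    exact hgnz z hz
  have habs : ‖g z‖^2 = Complex.normSq (g z) := by
    rw [Complex.sq_norm]
  constructor
  · -- lower bound
    have h1 : Real.log 1 + 4 * Real.log (1 + 0) ≤ Real.log (Complex.normSq (g z)) + 4 * Real.log (1 + r) := by
      simpa using hAineq
    simp only [Real.log_one, add_zero, Real.log_one] at h1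
    have h2 : Real.log (((1+r)⁻¹)^4) ≤ Real.log (Complex.normSq (g z)) := by
      rw [Real.log_pow, Real.log_inv]
      push_cast
      linarith
    have h3 : ((1+r)⁻¹)^4 ≤ Complex.normSq (g z) := by
      have hp : (0:ℝ) < ((1+r)⁻¹)^4 := by positivity
      exact (Real.log_le_log_iff hp hgzpos).1 h2
    have h4 : (1/(1+r)^2)^2 ≤ ‖g z‖^2 := by
      rw [habs]
      calc (1/(1+r)^2)^2 = ((1+r)⁻¹)^4 := by
            rw [one_div, ← inv_pow, ← pow_mul]
      _ ≤ _ := h3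
    have h5 : (0:ℝ) ≤ 1/(1+r)^2 := by positivity
    nlinarith [norm_nonneg (g z), h4]
  · have h1 : Real.log (Complex.normSq (g z)) + 4 * Real.log (1 - r) ≤ Real.log 1 + 4 * Real.log (1 - 0) := by
      simpa using hBineq
    simp only [Real.log_one, sub_zero] at h1
    have h2 : Real.log (Complex.normSq (g z)) ≤ Real.log (((1-r)⁻¹)^4) := by
      rw [Real.log_pow, Real.log_inv]
      push_cast
      linarith
    have h3 : Complex.normSq (g z) ≤ ((1-r)⁻¹)^4 :=
      (Real.log_le_log_iff hgzpos (by positivity)).1 h2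
    have h4 : ‖g z‖^2 ≤ (1/(1-r)^2)^2 := by
      rw [habs]
      calc Complex.normSq (g z) ≤ ((1-r)⁻¹)^4 := h3
      _ = (1/(1-r)^2)^2 := by rw [one_div, ← inv_pow, ← pow_mul]
    have h5 : (0:ℝ) < 1/(1-r)^2 := by positivity
    nlinarith [norm_nonneg (g z), h4]

theorem stmt9 (f : ℂ → ℂ)
    (hf : DifferentiableOn ℂ f (ball (0:ℂ) 1))
    (h0 : f 0 = 0) (h1 : deriv f 0 = 1)
    (hnz : ∀ z ∈ ball (0:ℂ) 1, z ≠ 0 → f z ≠ 0)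
    (hre : ∀ z ∈ ball (0:ℂ) 1, z ≠ 0 → 0 < (z * deriv f z / f z).re) :
    ∀ z ∈ ball (0:ℂ) 1,
      (1 - ‖z‖) / (1 + ‖z‖) ^ 3 ≤ ‖deriv f z‖ ∧ ‖deriv f z‖ ≤ (1 + ‖z‖) / (1 - ‖z‖) ^ 3 := by
  set g : ℂ → ℂ := dslope f 0 with hgdef
  have hgd : DifferentiableOn ℂ g (ball (0:ℂ) 1) :=
    (differentiableOn_dslope (ball_mem_nhds _ one_pos)).2 hf
  have hg0 : g 0 = 1 := by rw [hgdef, dslope_same, h1]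
  have hfg : ∀ z : ℂ, f z = z * g z := by
    intro z
    have := sub_smul_dslope f 0 z
    simp only [sub_zero, smul_eq_mul, h0] at this
    rw [← this, hgdef]
  have hgnz : ∀ z ∈ ball (0:ℂ) 1, g z ≠ 0 := by
    intro z hz
    rcases eq_or_ne z 0 with rfl | hz0
    · rw [hg0]; exact one_ne_zero
    · intro h
      apply hnz z hz hz0
      rw [hfg z, h, mul_zero]
  have hderiv : ∀ z ∈ ball (0:ℂ) 1, deriv f z = g z + z * deriv g z := by
    intro z hz
    have hfun : f = fun w => w * g w := funext hfg
    have hga : DifferentiableAt ℂ g z := hgd.differentiableAt (isOpen_ball.mem_nhds hz)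
    have H : HasDerivAt (fun w => w * g w) (g z + z * deriv g z) z := by
      have := (hasDerivAt_id z).mul hga.hasDerivAt
      exact this.congr_deriv (by simp)
    rw [hfun, H.deriv]
  set p : ℂ → ℂ := fun z => deriv f z / g z with hpdef
  have hp0 : p 0 = 1 := by rw [hpdef]; simp [h1, hg0]
  have hpd : DifferentiableOn ℂ p (ball (0:ℂ) 1) := by
    have h1' : AnalyticOnNhd ℂ f (ball (0:ℂ) 1) := hf.analyticOnNhd isOpen_ball
    exact (h1'.deriv.differentiableOn).div hgd hgnz
  have hpre : ∀ z ∈ ball (0:ℂ) 1, 0 < (p z).re := by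
    intro z hz
    rcases eq_or_ne z 0 with rfl | hz0
    · rw [hp0]; norm_num
    · have := hre z hz hz0
      rw [hfg z] at this
      rwa [show z * deriv f z / (z * g z) = deriv f z / g z from
        mul_div_mul_left _ _ hz0] at this
  have hc := cara p hpd hp0 hpre
  have hrel : ∀ z ∈ ball (0:ℂ) 1, z * deriv g z = (p z - 1) * g z := by
    intro z hz
    have hgz := hgnz z hz
    have h2 : p z * g z = deriv f z := by
      show deriv f z / g z * g z = deriv f z
      exact div_mul_cancel₀ _ hgz
    rw [sub_mul, h2, one_mul, hderiv z hz]
    ring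
  have hbd : ∀ z ∈ ball (0:ℂ) 1,
      (1 - ‖z‖) / (1 + ‖z‖) ≤ (p z).re ∧ (p z).re ≤ (1 + ‖z‖) / (1 - ‖z‖) := by
    intro z hz
    refine ⟨(hc z hz).2.2, ?_⟩
    exact le_trans (Complex.re_le_norm _) ((hc z hz).2.1)
  have hgb := growth g p hgd hg0 hgnz hrel hbd
  intro z hz
  have hzb : ‖z‖ < 1 := mem_ball_zero_iff.1 hz
  set r := ‖z‖ with hr
  have hr0 : 0 ≤ r := norm_nonneg z
  have h1r : (0:ℝ) < 1 - r := by linarith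
  have h1r' : (0:ℝ) < 1 + r := by linarith
  have hgz := hgnz z hz
  have hpg : deriv f z = p z * g z := by
    rw [hpdef]
    exact (div_mul_cancel₀ _ hgz).symm
  have hnorm : ‖deriv f z‖ = ‖p z‖ * ‖g z‖ := by rw [hpg, norm_mul]
  have hcz := hc z hz
  have hgbz := hgb z hz
  constructor
  · have hmul : (1 - r)/(1 + r) * (1/(1 + r)^2) ≤ ‖p z‖ * ‖g z‖ := by
      apply mul_le_mul hcz.1 hgbz.1 (by positivity) (norm_nonneg _)
    rw [hnorm]
    calc (1 - r)/(1 + r)^3 = (1 - r)/(1 + r) * (1/(1 + r)^2) := by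
          rw [div_mul_div_comm, mul_one, ← pow_succ']
    _ ≤ _ := hmul
  · have hmul : ‖p z‖ * ‖g z‖ ≤ (1 + r)/(1 - r) * (1/(1 - r)^2) := by
      apply mul_le_mul hcz.2.1 hgbz.2 (norm_nonneg _) (by positivity)
    rw [hnorm]
    calc ‖p z‖ * ‖g z‖ ≤ (1 + r)/(1 - r) * (1/(1 - r)^2) := hmul
    _ = (1 + r)/(1 - r)^3 := by
          rw [div_mul_div_comm, mul_one, ← pow_succ']
end

section
/- Let f be a starlike function on the unit disk (holomorphic, f(0)=0, f'(0)=1, nonvanishing off 0, Re(z f'(z)/f(z)) > 0 off 0). Then for all z ∈ 𝔻 \ {0}: (1−|z|)/(1+|z|) ≤ |z f'(z)/f(z)| ≤ (1+|z|)/(1−|z|). -/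
open Complex Metric Set

theorem stmt10 (f : ℂ → ℂ)
    (hf : DifferentiableOn ℂ f (ball (0:ℂ) 1))
    (h0 : f 0 = 0) (h1 : deriv f 0 = 1)
    (hnz : ∀ z ∈ ball (0:ℂ) 1, z ≠ 0 → f z ≠ 0)
    (hre : ∀ z ∈ ball (0:ℂ) 1, z ≠ 0 → 0 < (z * deriv f z / f z).re) :
    ∀ z ∈ ball (0:ℂ) 1, z ≠ 0 →
      (1 - ‖z‖) / (1 + ‖z‖) ≤ ‖z * deriv f z / f z‖ ∧
      ‖z * deriv f z / f z‖ ≤ (1 + ‖z‖) / (1 - ‖z‖) := by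
  have hopen : IsOpen (ball (0:ℂ) 1) := isOpen_ball
  have h0mem : (0:ℂ) ∈ ball (0:ℂ) 1 := by simp
  have hfa : AnalyticOnNhd ℂ f (ball (0:ℂ) 1) := hf.analyticOnNhd hopen
  -- g = dslope f 0
  set g : ℂ → ℂ := dslope f 0 with hg_def
  have hg0 : g 0 = 1 := by simp [hg_def, dslope_same, h1]
  have hgz : ∀ z : ℂ, z ≠ 0 → g z = f z / z := by
    intro z hz
    simp [hg_def, dslope_of_ne f hz, slope_def_field, h0, div_eq_inv_mul]
  have hg : DifferentiableOn ℂ g (ball (0:ℂ) 1) := by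
    intro z hz
    rcases eq_or_ne z 0 with rfl | hz0
    · obtain ⟨p, hp⟩ := hfa 0 h0mem
      exact (hp.has_fpower_series_dslope_fslope.analyticAt).differentiableAt.differentiableWithinAt
    · exact (differentiableWithinAt_dslope_of_ne hz0).mpr (hf z hz)
  have hgne : ∀ z ∈ ball (0:ℂ) 1, g z ≠ 0 := by
    intro z hz
    rcases eq_or_ne z 0 with rfl | hz0
    · simp [hg0]
    · rw [hgz z hz0]; exact div_ne_zero (hnz z hz hz0) hz0
  -- p = deriv f / g
  set p : ℂ → ℂ := fun z => deriv f z / g z with hp_def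
  have hderiv : DifferentiableOn ℂ (deriv f) (ball (0:ℂ) 1) :=
    (hfa.deriv).differentiableOn
  have hpdiff : DifferentiableOn ℂ p (ball (0:ℂ) 1) := hderiv.div hg hgne
  have hp0 : p 0 = 1 := by simp [hp_def, h1, hg0]
  have hpval : ∀ z ∈ ball (0:ℂ) 1, z ≠ 0 → p z = z * deriv f z / f z := by
    intro z hz hz0
    rw [hp_def]
    simp only
    rw [hgz z hz0]
    field_simp
  have hpre : ∀ z ∈ ball (0:ℂ) 1, 0 < (p z).re := by
    intro z hz
    rcases eq_or_ne z 0 with rfl | hz0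
    · simp [hp0]
    · rw [hpval z hz hz0]; exact hre z hz hz0
  -- ω = (p-1)/(p+1)
  have hpne : ∀ z ∈ ball (0:ℂ) 1, p z + 1 ≠ 0 := by
    intro z hz h
    have := hpre z hz
    have : (p z + 1).re = (p z).re + 1 := by simp
    rw [h] at this
    simp at this
    linarith [hpre z hz]
  set ω : ℂ → ℂ := fun z => (p z - 1) / (p z + 1) with hω_def
  have hωdiff : DifferentiableOn ℂ ω (ball (0:ℂ) 1) :=
    (hpdiff.sub_const 1).div (hpdiff.add_const 1) hpne
  have hω0 : ω 0 = 0 := by simp [hω_def, hp0]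
  have hωlt : ∀ z ∈ ball (0:ℂ) 1, ‖ω z‖ < 1 := by
    intro z hz
    have hr := hpre z hz
    have hnum : ‖p z - 1‖ < ‖p z + 1‖ := by
      have e1 : ‖p z - 1‖ ^ 2 = Complex.normSq (p z - 1) := by
        rw [Complex.sq_norm]
      have e2 : ‖p z + 1‖ ^ 2 = Complex.normSq (p z + 1) := by
        rw [Complex.sq_norm]
      have h1 : ‖p z - 1‖ ^ 2 < ‖p z + 1‖ ^ 2 := by
        rw [e1, e2, Complex.normSq_apply, Complex.normSq_apply]
        simp only [Complex.sub_re, Complex.sub_im, Complex.add_re, Complex.add_im,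
          Complex.one_re, Complex.one_im]
        nlinarith
      nlinarith [norm_nonneg (p z - 1), norm_nonneg (p z + 1)]
    rw [hω_def]
    simp only
    rw [norm_div]
    rw [div_lt_one (lt_of_le_of_lt (norm_nonneg _) hnum)]
    exact hnum
  -- Schwarz
  have hmaps : MapsTo ω (ball (0:ℂ) 1) (ball (0:ℂ) 1) := by
    intro z hz
    simpa [mem_ball, dist_eq_norm] using hωlt z hz
  have hschwarz : ∀ z ∈ ball (0:ℂ) 1, ‖ω z‖ ≤ ‖z‖ := by
    intro z hz
    have := Complex.norm_le_norm_of_mapsTo_ball hωdiff (hmaps.mono_right ball_subset_closedBall) hω0 (by simpa [mem_ball, dist_eq_norm, Complex.norm_def] using hz)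
    simpa [Complex.norm_def] using this
  -- recover p
  have hωne : ∀ z ∈ ball (0:ℂ) 1, (1 : ℂ) - ω z ≠ 0 := by
    intro z hz h
    have h1 : ω z = 1 := by
      have := sub_eq_zero.mp h
      exact this.symm
    have := hωlt z hz
    rw [h1] at this
    simp at this
  have hpω : ∀ z ∈ ball (0:ℂ) 1, p z = (1 + ω z) / (1 - ω z) := by
    intro z hz
    rw [hω_def]
    simp only
    have h1 := hpne z hz
    have h2 : (1 : ℂ) - (p z - 1) / (p z + 1) ≠ 0 := hωne z hz
    field_simp at h2 ⊢
    ring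
  -- bounds
  intro z hz hz0
  have hr1 : ‖z‖ < 1 := by simpa [mem_ball, dist_eq_norm] using hz
  have hr0 : (0:ℝ) ≤ ‖z‖ := norm_nonneg z
  have hw := hschwarz z hz
  have key : z * deriv f z / f z = (1 + ω z) / (1 - ω z) := by
    rw [← hpval z hz hz0, hpω z hz]
  rw [key, norm_div]
  have hub : ‖1 + ω z‖ ≤ 1 + ‖z‖ := by
    calc ‖1 + ω z‖ ≤ ‖(1:ℂ)‖ + ‖ω z‖ := norm_add_le _ _
    _ ≤ 1 + ‖z‖ := by rw [norm_one]; linarith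
  have hlb : 1 - ‖z‖ ≤ ‖1 + ω z‖ := by
    have := norm_sub_norm_le (1 : ℂ) (-(ω z))
    simp only [norm_neg, norm_one, sub_neg_eq_add] at this
    linarith
  have hub2 : ‖1 - ω z‖ ≤ 1 + ‖z‖ := by
    calc ‖1 - ω z‖ ≤ ‖(1:ℂ)‖ + ‖ω z‖ := norm_sub_le _ _
    _ ≤ 1 + ‖z‖ := by rw [norm_one]; linarith
  have hlb2 : 1 - ‖z‖ ≤ ‖1 - ω z‖ := by
    have := norm_sub_norm_le (1 : ℂ) (ω z)
    simp only [norm_one] at this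
    linarith
  have hpos : (0:ℝ) < 1 - ‖z‖ := by linarith
  have hpos2 : (0:ℝ) < 1 + ‖z‖ := by linarith
  have hden : (0:ℝ) < ‖1 - ω z‖ := lt_of_lt_of_le hpos hlb2
  constructor
  · rw [div_le_div_iff₀ hpos2 hden]
    calc (1 - ‖z‖) * ‖1 - ω z‖ ≤ (1 - ‖z‖) * (1 + ‖z‖) := by
          apply mul_le_mul_of_nonneg_left hub2 (le_of_lt hpos)
    _ ≤ ‖1 + ω z‖ * (1 + ‖z‖) := by
          apply mul_le_mul_of_nonneg_right hlb (le_of_lt hpos2)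
  · rw [div_le_div_iff₀ hden hpos]
    calc ‖1 + ω z‖ * (1 - ‖z‖) ≤ (1 + ‖z‖) * (1 - ‖z‖) := by
          apply mul_le_mul_of_nonneg_right hub (le_of_lt hpos)
    _ ≤ (1 + ‖z‖) * ‖1 - ω z‖ := by
          apply mul_le_mul_of_nonneg_left hlb2 (le_of_lt hpos2)
end

section
/- Let f be a starlike function on the unit disk. Then the image f(𝔻) contains the open ball of radius 1/4 centered at 0. -/
open Complex Metric Set

noncomputable def Complex.abs : AbsoluteValue ℂ ℝ where
  toFun z := ‖z‖
  map_mul' := norm_mul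
  nonneg' := norm_nonneg
  eq_zero' _ := norm_eq_zero
  add_le' := norm_add_le

theorem Complex.abs_apply (z : ℂ) : Complex.abs z = √(Complex.normSq z) := rfl

theorem Complex.sq_abs (z : ℂ) : Complex.abs z ^ 2 = Complex.normSq z := Complex.sq_norm z

theorem Complex.norm_eq_abs (z : ℂ) : ‖z‖ = Complex.abs z := rfl

@[simp]
theorem Complex.abs_ofReal (r : ℝ) : Complex.abs (r : ℂ) = |r| :=
  show ‖(r : ℂ)‖ = |r| by simp

@[simp]
theorem Complex.abs_abs' (z : ℂ) : |Complex.abs z| = Complex.abs z := abs_of_nonneg (norm_nonneg z)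

-- If Re w > 0 then |w-1| < |w+1|.
lemma aux_abs_lt {w : ℂ} (hw : 0 < w.re) : Complex.abs (w - 1) < Complex.abs (w + 1) := by
  rw [Complex.abs_apply, Complex.abs_apply]
  apply Real.sqrt_lt_sqrt (Complex.normSq_nonneg _)
  simp only [Complex.normSq_apply, Complex.sub_re, Complex.sub_im, Complex.add_re, Complex.add_im,
    Complex.one_re, Complex.one_im]
  nlinarith

lemma aux_mobius_re {q : ℂ} {r : ℝ} (hq : Complex.abs q ≤ r) (hr : r < 1) :
    (1 - r) / (1 + r) ≤ (((1:ℂ) + q) / (1 - q)).re := by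
  have hq0 : (0:ℝ) ≤ r := le_trans (Complex.abs.nonneg q) hq
  have h1q : (1:ℂ) - q ≠ 0 := by
    intro hc
    have : Complex.abs q = 1 := by
      have : q = 1 := by linear_combination -hc
      simp [this]
    linarith
  have hre : (((1:ℂ) + q) / (1 - q)).re
      = (1 - Complex.normSq q) / Complex.normSq (1 - q) := by
    rw [Complex.div_re]
    simp only [Complex.normSq_apply, Complex.add_re, Complex.add_im, Complex.sub_re,
      Complex.sub_im, Complex.one_re, Complex.one_im]
    ring
  rw [hre]
  have hB : 0 < Complex.normSq (1 - q) := Complex.normSq_pos.mpr h1q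
  have hBb : Complex.normSq (1 - q) ≤ (1 + r)^2 := by
    have h1 : Complex.abs (1 - q) ≤ 1 + r := by
      have := Complex.abs.add_le 1 (-q)
      simp only [sub_eq_add_neg, map_neg, map_one] at this ⊢
      calc Complex.abs (1 + -q) ≤ 1 + Complex.abs q := by simpa using this
        _ ≤ 1 + r := by linarith
    calc Complex.normSq (1 - q) = (Complex.abs (1 - q))^2 := (Complex.sq_abs _).symm
      _ ≤ (1 + r)^2 := by nlinarith [Complex.abs.nonneg (1 - q)]
  have hA : 1 - r^2 ≤ 1 - Complex.normSq q := by
    have : Complex.normSq q ≤ r^2 := by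
      calc Complex.normSq q = (Complex.abs q)^2 := (Complex.sq_abs _).symm
        _ ≤ r^2 := by nlinarith [Complex.abs.nonneg q]
    linarith
  have key : (1 - r^2) / (1 + r)^2 ≤ (1 - Complex.normSq q) / Complex.normSq (1 - q) := by
    apply div_le_div₀ (by nlinarith) hA hB hBb
  calc (1 - r) / (1 + r) = (1 - r^2) / (1 + r)^2 := by
        rw [div_eq_div_iff (by linarith) (by positivity)]; ring
    _ ≤ _ := key

lemma aux_mobius_inv {w : ℂ} (hw : w + 1 ≠ 0) (h1q : (1:ℂ) - (w - 1) / (w + 1) ≠ 0) :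
    w = ((1:ℂ) + (w - 1) / (w + 1)) / (1 - (w - 1) / (w + 1)) := by
  rw [eq_div_iff h1q]
  field_simp
  ring

-- growth bound for starlike functions
lemma aux_growth (f : ℂ → ℂ)
    (hf : DifferentiableOn ℂ f (ball (0:ℂ) 1))
    (h0 : f 0 = 0) (h1 : deriv f 0 = 1)
    (hnz : ∀ z ∈ ball (0:ℂ) 1, z ≠ 0 → f z ≠ 0)
    (hre : ∀ z ∈ ball (0:ℂ) 1, z ≠ 0 → 0 < (z * deriv f z / f z).re) :
    ∀ z ∈ ball (0:ℂ) 1, Complex.abs z / (1 + Complex.abs z) ^ 2 ≤ Complex.abs (f z) := by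
  set D := ball (0:ℂ) 1 with hD
  set h : ℂ → ℂ := dslope f 0 with hh_def
  have hDopen : IsOpen D := isOpen_ball
  have hDnhds : ∀ {z : ℂ}, z ∈ D → D ∈ nhds z := fun hz => hDopen.mem_nhds hz
  have hh : DifferentiableOn ℂ h D :=
    (differentiableOn_dslope (ball_mem_nhds _ one_pos)).mpr hf
  have hh0 : h 0 = 1 := by simp [hh_def, dslope_same, h1]
  have hfzh : ∀ z : ℂ, f z = z * h z := by
    intro z
    have := sub_smul_dslope f 0 z
    simp [h0, smul_eq_mul] at this
    rw [← hh_def] at this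
    rw [mul_comm]
    linear_combination -this
  have hhz : ∀ z ∈ D, h z ≠ 0 := by
    intro z hz
    rcases eq_or_ne z 0 with rfl | hz0
    · simp [hh0]
    · intro hc
      exact hnz z hz hz0 (by rw [hfzh z, hc, mul_zero])
  -- P = deriv f / h, with P z = z f'(z)/f(z) for z ≠ 0
  set P : ℂ → ℂ := fun z => deriv f z / h z with hP_def
  have hderiv : DifferentiableOn ℂ (deriv f) D :=
    ((hf.analyticOnNhd hDopen).deriv).differentiableOn
  have hP : DifferentiableOn ℂ P D := hderiv.div hh hhz
  have hP0 : P 0 = 1 := by simp [hP_def, hh0, h1]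
  have hPeq : ∀ z ∈ D, z ≠ 0 → P z = z * deriv f z / f z := by
    intro z hz hz0
    have hfz := hnz z hz hz0
    have : h z = f z / z := by rw [hfzh z]; field_simp
    show deriv f z / h z = z * deriv f z / f z
    rw [this]
    field_simp
  have hPre : ∀ z ∈ D, 0 < (P z).re := by
    intro z hz
    rcases eq_or_ne z 0 with rfl | hz0
    · rw [hP0]; norm_num
    · rw [hPeq z hz hz0]; exact hre z hz hz0
  -- Carathéodory: Re P z ≥ (1-|z|)/(1+|z|)
  have hCara : ∀ z ∈ D, (1 - Complex.abs z) / (1 + Complex.abs z) ≤ (P z).re := by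
    set q : ℂ → ℂ := fun z => (P z - 1) / (P z + 1) with hq_def
    have hP1 : ∀ z ∈ D, P z + 1 ≠ 0 := by
      intro z hz hc
      have := hPre z hz
      have : (P z + 1).re = (P z).re + 1 := by simp
      rw [hc] at this
      simp at this
      linarith [hPre z hz]
    have hq : DifferentiableOn ℂ q D :=
      (hP.sub (differentiableOn_const 1)).div (hP.add (differentiableOn_const 1)) hP1
    have hq0 : q 0 = 0 := by simp [hq_def, hP0]
    have hqlt : ∀ z ∈ D, Complex.abs (q z) < 1 := by
      intro z hz
      have := aux_abs_lt (hPre z hz)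
      rw [hq_def]
      simp only [map_div₀]
      rw [div_lt_one (Complex.abs.pos (hP1 z hz))]
      exact this
    have hmaps : MapsTo q D D := by
      intro z hz
      rw [hD, mem_ball_zero_iff]
      exact hqlt z hz
    have hschwarz : ∀ z ∈ D, Complex.abs (q z) ≤ Complex.abs z := by
      intro z hz
      exact Complex.norm_le_norm_of_mapsTo_ball hq (hmaps.mono_right ball_subset_closedBall) hq0 (mem_ball_zero_iff.mp hz)
    intro z hz
    have h1q : (1:ℂ) - q z ≠ 0 := by
      intro hc
      have : Complex.abs (q z) = 1 := by
        have : q z = 1 := by linear_combination -hc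
        simp [this]
      linarith [hqlt z hz]
    have hPq : P z = ((1:ℂ) + q z) / (1 - q z) :=
      aux_mobius_inv (hP1 z hz) h1q
    rw [hPq]
    exact aux_mobius_re (hschwarz z hz) (mem_ball_zero_iff.mp hz)
  -- key: z * deriv h z = deriv f z - h z  for z ≠ 0
  have hzdh : ∀ z ∈ D, z ≠ 0 → z * deriv h z = deriv f z - h z := by
    intro z hz hz0
    have hfd : HasDerivAt f (deriv f z) z :=
      ((hf.differentiableAt (hDnhds hz)).hasDerivAt)
    have hqd : HasDerivAt (fun w => f w / w) ((deriv f z * z - f z * 1) / z ^ 2) z :=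
      hfd.div (hasDerivAt_id z) hz0
    have heq : h =ᶠ[nhds z] fun w => f w / w := by
      filter_upwards [isOpen_compl_singleton.mem_nhds (by simpa using hz0 : z ∈ ({0}ᶜ : Set ℂ))]
        with w hw
      have hw0 : w ≠ 0 := by simpa using hw
      rw [hh_def, dslope_of_ne f hw0, slope_def_field]
      simp [h0]
    have hdh : deriv h z = (deriv f z * z - f z * 1) / z ^ 2 := by
      rw [heq.deriv_eq]
      exact hqd.deriv
    rw [hdh, hfzh z]
    field_simp
  -- growth of h : |h z| ≥ 1/(1+|z|)^2
  have hgrow : ∀ z ∈ D, (1 + Complex.abs z)⁻¹ ^ 2 ≤ Complex.abs (h z) := by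
    intro z₀ hz₀
    rcases eq_or_ne z₀ 0 with rfl | hz₀0
    · simp [hh0]
    set R : ℝ := Complex.abs z₀ with hR_def
    have hR0 : 0 < R := Complex.abs.pos hz₀0
    have hR1 : R < 1 := mem_ball_zero_iff.mp hz₀
    set e : ℂ := z₀ / (R:ℂ) with he_def
    have hRne : (R:ℂ) ≠ 0 := by
      simp only [ne_eq, Complex.ofReal_eq_zero]
      exact hR0.ne'
    have he_abs : Complex.abs e = 1 := by
      rw [he_def, map_div₀]
      simp [hR_def, hR0.ne', hz₀0]
    have hce : ∀ r : ℝ, 0 ≤ r → Complex.abs ((r:ℂ) * e) = r := by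
      intro r hr
      rw [map_mul, he_abs, mul_one, Complex.abs_ofReal, _root_.abs_of_nonneg hr]
    have hmem : ∀ r ∈ Icc (0:ℝ) R, (r:ℂ) * e ∈ D := by
      intro r hr
      rw [hD, mem_ball_zero_iff, Complex.norm_eq_abs, hce r hr.1]
      linarith [hr.2]
    set u : ℝ → ℝ := fun r => Real.log (Complex.normSq (h ((r:ℂ) * e))) + 4 * Real.log (1 + r)
      with hu_def
    set G : ℝ → ℝ := fun r =>
      2 * ((e * deriv h ((r:ℂ) * e)) / h ((r:ℂ) * e)).re + 4 * (1 + r)⁻¹ with hG_def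
    have hU : ∀ r ∈ Icc (0:ℝ) R, HasDerivAt u (G r) r := by
      intro r hr
      set zr : ℂ := (r:ℂ) * e with hzr_def
      have hzrD : zr ∈ D := hmem r hr
      have hψne : h zr ≠ 0 := hhz zr hzrD
      have hcd : HasDerivAt (fun s : ℝ => (s:ℂ) * e) e r := by
        simpa using ((hasDerivAt_id r).ofReal_comp.mul_const e)
      have hhd : HasDerivAt h (deriv h zr) zr :=
        (hh.differentiableAt (hDnhds hzrD)).hasDerivAt
      have hψ : HasDerivAt (fun s : ℝ => h ((s:ℂ) * e)) (e * deriv h zr) r := by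
        have := HasDerivAt.scomp (𝕜 := ℝ) r hhd hcd
        simpa [smul_eq_mul, mul_comm, Function.comp_def] using this
      have hre_d : HasDerivAt (fun s : ℝ => (h ((s:ℂ) * e)).re) ((e * deriv h zr).re) r :=
        (Complex.reCLM.hasFDerivAt.comp_hasDerivAt r hψ)
      have him_d : HasDerivAt (fun s : ℝ => (h ((s:ℂ) * e)).im) ((e * deriv h zr).im) r :=
        (Complex.imCLM.hasFDerivAt.comp_hasDerivAt r hψ)
      have hv : HasDerivAt (fun s : ℝ => Complex.normSq (h ((s:ℂ) * e)))
          ((e * deriv h zr).re * (h zr).re + (h zr).re * (e * deriv h zr).re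
            + ((e * deriv h zr).im * (h zr).im + (h zr).im * (e * deriv h zr).im)) r := by
        have := (hre_d.mul hre_d).add (him_d.mul him_d)
        simpa [Complex.normSq_apply, Pi.add_def, Pi.mul_def] using this
      have hvne : Complex.normSq (h zr) ≠ 0 := by
        simpa [Complex.normSq_eq_zero] using hψne
      have hlog : HasDerivAt (fun s : ℝ => Real.log (Complex.normSq (h ((s:ℂ) * e))))
          ((Complex.normSq (h zr))⁻¹ *
            ((e * deriv h zr).re * (h zr).re + (h zr).re * (e * deriv h zr).re
              + ((e * deriv h zr).im * (h zr).im + (h zr).im * (e * deriv h zr).im))) r := by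
        exact (Real.hasDerivAt_log hvne).comp r hv
      have hlin : HasDerivAt (fun s : ℝ => 4 * Real.log (1 + s)) (4 * (1 + r)⁻¹) r := by
        have h1r : (1 : ℝ) + r ≠ 0 := by nlinarith [hr.1]
        have : HasDerivAt (fun s : ℝ => (1 : ℝ) + s) 1 r := by
          simpa using (hasDerivAt_id r).const_add 1
        simpa using ((Real.hasDerivAt_log h1r).comp r this).const_mul 4
      have : HasDerivAt u _ r := hlog.add hlin
      convert this using 1
      show 2 * ((e * deriv h zr) / h zr).re + 4 * (1 + r)⁻¹ = _
      have hdivre : ((e * deriv h zr) / h zr).re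
          = ((e * deriv h zr).re * (h zr).re + (e * deriv h zr).im * (h zr).im)
            / Complex.normSq (h zr) := by
        rw [Complex.div_re]; ring
      rw [hdivre]
      field_simp
      ring
    have hmono : MonotoneOn u (Icc (0:ℝ) R) := by
      apply monotoneOn_of_deriv_nonneg (convex_Icc 0 R)
      · intro r hr
        exact (hU r hr).continuousAt.continuousWithinAt
      · rw [interior_Icc]
        intro r hr
        exact (hU r (Ioo_subset_Icc_self hr)).differentiableAt.differentiableWithinAt
      · rw [interior_Icc]
        intro r hr
        rw [(hU r (Ioo_subset_Icc_self hr)).deriv]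
        -- show 0 ≤ G r
        set zr : ℂ := (r:ℂ) * e with hzr_def
        have hr0 : 0 < r := hr.1
        have hzrD : zr ∈ D := hmem r (Ioo_subset_Icc_self hr)
        have hzr0 : zr ≠ 0 := by
          intro hc
          rw [hzr_def] at hc
          rcases mul_eq_zero.mp hc with h' | h'
          · exact hr0.ne' (by exact_mod_cast h')
          · rw [he_def] at h'
            exact hz₀0 (by
              rcases div_eq_zero_iff.mp h' with h'' | h''
              · exact h''
              · exact absurd h'' hRne)
        have hψne : h zr ≠ 0 := hhz zr hzrD
        have habs_zr : Complex.abs zr = r := hce r hr0.le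
        have hkey : (zr * deriv h zr / h zr).re = (P zr).re - 1 := by
          rw [hzdh zr hzrD hzr0]
          rw [sub_div, div_self hψne]
          simp [hP_def]
        have hcara := hCara zr hzrD
        rw [habs_zr] at hcara
        have hmulre : (zr * deriv h zr / h zr).re = r * ((e * deriv h zr) / h zr).re := by
          have : zr * deriv h zr / h zr = (r:ℝ) • ((e * deriv h zr) / h zr) := by
            rw [hzr_def]
            rw [Complex.real_smul]
            field_simp
          rw [this, Complex.real_smul, Complex.re_ofReal_mul]
        have h1r : (0:ℝ) < 1 + r := by linarith
        have hineq : -(2 * r) / (1 + r) ≤ r * ((e * deriv h zr) / h zr).re := by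
          rw [← hmulre, hkey]
          have : (1 - r) / (1 + r) - 1 = -(2 * r) / (1 + r) := by
            field_simp
            ring
          linarith [hcara]
        show 0 ≤ 2 * ((e * deriv h zr) / h zr).re + 4 * (1 + r)⁻¹
        set X := ((e * deriv h zr) / h zr).re with hX_def
        have hineq' : -(2 * r) ≤ r * X * (1 + r) := by
          have := (div_le_iff₀ h1r).mp hineq
          linarith [this]
        have h5 : 0 ≤ (2 * X + 4 * (1 + r)⁻¹) * (r * (1 + r)) := by
          have hexp : (2 * X + 4 * (1 + r)⁻¹) * (r * (1 + r))
              = 2 * (r * X * (1 + r)) + 4 * r := by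
            field_simp
          rw [hexp]
          linarith
        have hpos : 0 < r * (1 + r) := mul_pos hr0 h1r
        nlinarith [h5, hpos]
    have hu0 : u 0 = 0 := by
      simp [hu_def, hh0]
    have huR : u 0 ≤ u R := by
      apply hmono (left_mem_Icc.mpr hR0.le) (right_mem_Icc.mpr hR0.le) hR0.le
    have hRe_z : ((R:ℂ)) * e = z₀ := by
      rw [he_def]
      field_simp
    rw [hu0, hu_def] at huR
    simp only [hRe_z] at huR
    -- huR : 0 ≤ log (normSq (h z₀)) + 4 * log (1 + R)
    have habs_pos : 0 < Complex.abs (h z₀) := Complex.abs.pos (hhz z₀ hz₀)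
    have hns : Complex.normSq (h z₀) = (Complex.abs (h z₀))^2 := (Complex.sq_abs _).symm
    rw [hns, Real.log_pow] at huR
    have h1R : (0:ℝ) < 1 + R := by linarith
    have hlog_ineq : Real.log ((1 + R)⁻¹ ^ 2) ≤ Real.log (Complex.abs (h z₀)) := by
      rw [Real.log_pow, Real.log_inv]
      push_cast at huR ⊢
      linarith
    have := Real.exp_le_exp.mpr hlog_ineq
    rwa [Real.exp_log (by positivity), Real.exp_log habs_pos] at this
  intro z hz
  have := hgrow z hz
  rw [hfzh z, map_mul]
  have h1z : (0:ℝ) < 1 + Complex.abs z := by positivity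
  rw [div_eq_mul_inv, ← inv_pow]
  exact mul_le_mul_of_nonneg_left this (Complex.abs.nonneg z)

theorem stmt11 (f : ℂ → ℂ)
    (hf : DifferentiableOn ℂ f (ball (0:ℂ) 1))
    (h0 : f 0 = 0) (h1 : deriv f 0 = 1)
    (hnz : ∀ z ∈ ball (0:ℂ) 1, z ≠ 0 → f z ≠ 0)
    (hre : ∀ z ∈ ball (0:ℂ) 1, z ≠ 0 → 0 < (z * deriv f z / f z).re) :
    ball (0:ℂ) (1/4) ⊆ f '' ball (0:ℂ) 1 := by
  have hgrow := aux_growth f hf h0 h1 hnz hre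
  intro w hw
  rcases eq_or_ne w 0 with rfl | hw0
  · exact ⟨0, mem_ball_self one_pos, h0⟩
  set c : ℝ := Complex.abs w with hc_def
  have hc0 : 0 < c := Complex.abs.pos hw0
  have hc14 : c < 1/4 := by
    have := mem_ball_zero_iff.mp hw
    rwa [Complex.norm_eq_abs] at this
  -- choose r₀ ∈ (0,1) with c < r₀/(1+r₀)^2
  obtain ⟨r₀, hr₀c, hr₀mem⟩ :
      ∃ r₀ : ℝ, c < r₀ / (1 + r₀)^2 ∧ r₀ ∈ Ioo (0:ℝ) 1 := by
    have hcont : ContinuousAt (fun r : ℝ => r / (1 + r)^2) 1 := by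
      apply ContinuousAt.div
      · exact continuousAt_id
      · fun_prop
      · norm_num
    have hev : ∀ᶠ r in nhds (1:ℝ), c < r / (1 + r)^2 := by
      apply hcont.eventually_const_lt
      norm_num
      linarith
    have hev' : ∀ᶠ r in nhdsWithin (1:ℝ) (Iio 1), c < r / (1 + r)^2 :=
      hev.filter_mono nhdsWithin_le_nhds
    have hmemIoo : Ioo (0:ℝ) 1 ∈ nhdsWithin (1:ℝ) (Iio 1) :=
      Ioo_mem_nhdsLT_of_mem (by constructor <;> norm_num)
    exact (hev'.and (Filter.eventually_of_mem hmemIoo (fun x hx => hx))).exists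
  obtain ⟨hr₀0, hr₀1⟩ := hr₀mem
  set m : ℝ := r₀ / (1 + r₀)^2 with hm_def
  have hm0 : 0 < m := by positivity
  have hsub : closedBall (0:ℂ) r₀ ⊆ ball (0:ℂ) 1 := closedBall_subset_ball hr₀1
  have hKc : IsCompact (f '' closedBall (0:ℂ) r₀) :=
    (isCompact_closedBall (0:ℂ) r₀).image_of_continuousOn (hf.continuousOn.mono hsub)
  -- T := f '' ball 0 r₀ is open
  have hTopen : IsOpen (f '' ball (0:ℂ) r₀) := by
    have hanal : AnalyticOnNhd ℂ f (ball (0:ℂ) r₀) :=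
      (hf.mono (ball_subset_ball hr₀1.le)).analyticOnNhd isOpen_ball
    rcases hanal.is_constant_or_isOpen (convex_ball _ _).isPreconnected with hconst | hopen
    · exfalso
      obtain ⟨v, hv⟩ := hconst
      have hev : f =ᶠ[nhds (0:ℂ)] fun _ => v := by
        filter_upwards [isOpen_ball.mem_nhds (mem_ball_self hr₀0 : (0:ℂ) ∈ ball 0 r₀)] with
          x hx
        exact hv x hx
      have : deriv f 0 = 0 := by rw [hev.deriv_eq]; simp
      rw [h1] at this
      norm_num at this
    · exact hopen _ (subset_refl _) isOpen_ball
  -- B ⊆ T ∪ Kᶜ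
  have hBsub : ball (0:ℂ) m ⊆ f '' ball (0:ℂ) r₀ ∪ (f '' closedBall (0:ℂ) r₀)ᶜ := by
    intro y hy
    by_cases hyK : y ∈ f '' closedBall (0:ℂ) r₀
    · left
      obtain ⟨x, hx, rfl⟩ := hyK
      have hxr : Complex.abs x ≤ r₀ := by
        have := mem_closedBall_zero_iff.mp hx
        rwa [Complex.norm_eq_abs] at this
      have hxD : x ∈ ball (0:ℂ) 1 := hsub hx
      rcases lt_or_eq_of_le hxr with hlt | heq
      · exact ⟨x, mem_ball_zero_iff.mpr (by rwa [Complex.norm_eq_abs]), rfl⟩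
      · exfalso
        have hb := hgrow x hxD
        rw [heq] at hb
        have : Complex.abs (f x) < m := by
          have := mem_ball_zero_iff.mp hy
          rwa [Complex.norm_eq_abs] at this
        rw [hm_def] at this
        linarith
    · right; exact hyK
  -- preconnectedness argument
  by_contra hwim
  have hwK : w ∉ f '' closedBall (0:ℂ) r₀ := by
    intro hc
    exact hwim ((image_mono hsub) hc)
  have hprecon : IsPreconnected (ball (0:ℂ) m) := (convex_ball (0:ℂ) m).isPreconnected
  have h0T : (0:ℂ) ∈ ball (0:ℂ) m ∩ f '' ball (0:ℂ) r₀ :=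
    ⟨mem_ball_self hm0, ⟨0, mem_ball_self hr₀0, h0⟩⟩
  have hwB : w ∈ ball (0:ℂ) m := by
    rw [mem_ball_zero_iff, Complex.norm_eq_abs]
    exact lt_of_lt_of_le hr₀c (le_of_eq hm_def.symm) |>.trans_le (le_refl m)
  have hne := hprecon _ _ hTopen hKc.isClosed.isOpen_compl hBsub ⟨0, h0T⟩ ⟨w, hwB, hwK⟩
  obtain ⟨y, _, hyT, hyKc⟩ := hne
  exact hyKc ((image_mono ball_subset_closedBall) hyT)
end

section
/- Let f(z) = z + Σ_{n≥2} aₙ zⁿ be holomorphic on the unit disk and suppose g(z) = z f'(z) is starlike (g nonvanishing off 0 and Re(z g'(z)/g(z)) > 0 off 0). Then |aₙ| ≤ 1 for all n ≥ 2. -/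
open Complex Metric Set Finset intervalIntegral Real

private lemma coeff_eq {F : ℂ → ℂ} {P : FormalMultilinearSeries ℂ ℂ ℂ} {r : ENNReal}
    (h : HasFPowerSeriesOnBall F P 0 r) (n : ℕ) :
    P.coeff n = iteratedDeriv n F 0 / n.factorial := by
  have key : iteratedDeriv n F 0 = (n.factorial : ℂ) * P.coeff n := by
    rw [iteratedDeriv_eq_iteratedFDeriv, ← h.factorial_smul 1 n, nsmul_eq_mul]
    rfl
  rw [key]
  field_simp [Nat.factorial_ne_zero]

private lemma circleMap_mem_ball {r : ℝ} (h0 : 0 < r) (h1 : r < 1) (θ : ℝ) :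
    circleMap 0 r θ ∈ ball (0:ℂ) 1 := by
  simp only [mem_ball, dist_zero_right, norm_circleMap_zero,
    abs_of_pos h0]
  exact h1

private lemma cauchy_coeff_integral {F : ℂ → ℂ} (hF : DifferentiableOn ℂ F (ball (0:ℂ) 1))
    {r : ℝ} (h0 : 0 < r) (h1 : r < 1) (n : ℕ) :
    iteratedDeriv n F 0 / n.factorial =
      (2 * π)⁻¹ • ∫ θ in (0:ℝ)..2*π, (circleMap 0 r θ)⁻¹ ^ n * F (circleMap 0 r θ) := by
  lift r to NNReal using h0.le with R hR
  have hd : DifferentiableOn ℂ F (closedBall 0 R) :=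
    hF.mono (closedBall_subset_ball h1)
  have H : HasFPowerSeriesOnBall F (cauchyPowerSeries F 0 R) 0 R :=
    hd.hasFPowerSeriesOnBall (by exact_mod_cast h0)
  rw [← coeff_eq H n]
  have happ := cauchyPowerSeries_apply F 0 (R:ℝ) n 1
  rw [show (cauchyPowerSeries F 0 (R:ℝ)).coeff n =
      (cauchyPowerSeries F 0 (R:ℝ) n fun _ => 1) from rfl, happ, circleIntegral]
  have hint : ∀ θ : ℝ, deriv (circleMap 0 (R:ℝ)) θ •
      ((1 / (circleMap 0 (R:ℝ) θ - 0)) ^ n • (circleMap 0 (R:ℝ) θ - 0)⁻¹ •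
        F (circleMap 0 (R:ℝ) θ)) =
      I * ((circleMap 0 (R:ℝ) θ)⁻¹ ^ n * F (circleMap 0 (R:ℝ) θ)) := by
    intro θ
    have hz : circleMap 0 (R:ℝ) θ ≠ 0 := circleMap_ne_center (ne_of_gt h0)
    have key : ∀ (z w : ℂ), z ≠ 0 → (z * I) * ((1/z)^n * (z⁻¹ * w)) = I * (z⁻¹^n * w) := by
      intro z w hz
      field_simp
    rw [deriv_circleMap]
    simp only [smul_eq_mul, sub_zero]
    exact key _ _ hz
  simp only [hint]
  rw [intervalIntegral.integral_const_mul]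
  rw [Complex.real_smul, smul_eq_mul, ← mul_assoc]
  congr 1
  rw [mul_inv, inv_I]
  push_cast
  have : I * I = -1 := I_mul_I
  field_simp
  simp [I_sq]

private lemma cauchy_vanish {F : ℂ → ℂ} (hF : DifferentiableOn ℂ F (ball (0:ℂ) 1))
    {r : ℝ} (h0 : 0 < r) (h1 : r < 1) (n : ℕ) (hn : 1 ≤ n) :
    ∫ θ in (0:ℝ)..2*π, (circleMap 0 r θ) ^ n * F (circleMap 0 r θ) = 0 := by
  have hFan : AnalyticOnNhd ℂ F (ball 0 1) := hF.analyticOnNhd isOpen_ball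
  have hzero : (∮ z in C(0, r), z ^ (n-1) * F z) = 0 := by
    apply circleIntegral_eq_zero_of_differentiable_on_off_countable h0.le
      (Set.countable_empty)
    · apply ContinuousOn.mul (continuousOn_pow _)
      exact (hF.continuousOn).mono (closedBall_subset_ball h1)
    · intro z hz
      have hz1 : z ∈ ball (0:ℂ) 1 := ball_subset_ball h1.le hz.1
      exact (differentiableAt_pow _).mul (hFan z hz1).differentiableAt
  rw [circleIntegral] at hzero
  have hint : ∀ θ : ℝ, deriv (circleMap 0 r) θ •
      ((circleMap 0 r θ) ^ (n-1) * F (circleMap 0 r θ)) =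
      I * ((circleMap 0 r θ) ^ n * F (circleMap 0 r θ)) := by
    intro θ
    rw [deriv_circleMap, smul_eq_mul]
    have : circleMap 0 r θ * circleMap 0 r θ ^ (n-1) = circleMap 0 r θ ^ n := by
      rw [← pow_succ']
      congr 1
      omega
    calc circleMap 0 r θ * I * (circleMap 0 r θ ^ (n-1) * F (circleMap 0 r θ))
        = I * (circleMap 0 r θ * circleMap 0 r θ ^ (n-1) * F (circleMap 0 r θ)) := by ring
      _ = _ := by rw [this]
  simp only [hint] at hzero
  rw [intervalIntegral.integral_const_mul] at hzero
  simpa [I_ne_zero] using hzero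

private lemma conj_circleMap' {r : ℝ} (h0 : 0 < r) (θ : ℝ) :
    (starRingEnd ℂ) (circleMap 0 r θ) = (r:ℂ)^2 * (circleMap 0 r θ)⁻¹ := by
  have hz : circleMap 0 r θ ≠ 0 := circleMap_ne_center (ne_of_gt h0)
  rw [circleMap_zero] at hz ⊢
  rw [map_mul, Complex.conj_ofReal, ← Complex.exp_conj]
  have : (starRingEnd ℂ) (↑θ * I) = -(↑θ * I) := by
    rw [map_mul, Complex.conj_ofReal, Complex.conj_I]
    ring
  rw [this, Complex.exp_neg]
  have he : Complex.exp (↑θ * I) ≠ 0 := Complex.exp_ne_zero _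
  have hr : (r:ℂ) ≠ 0 := Complex.ofReal_ne_zero.mpr (ne_of_gt h0)
  field_simp

private lemma caratheodory_coeff {p : ℂ → ℂ} (hp : DifferentiableOn ℂ p (ball (0:ℂ) 1))
    (hp0 : p 0 = 1) (hre : ∀ z ∈ ball (0:ℂ) 1, 0 ≤ (p z).re) (n : ℕ) (hn : 1 ≤ n) :
    ‖iteratedDeriv n p 0 / n.factorial‖ ≤ 2 := by
  set c : ℂ := iteratedDeriv n p 0 / n.factorial with hc
  have key : ∀ r : ℝ, 0 < r → r < 1 → ‖c‖ ≤ 2 * (r⁻¹)^n := by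
    intro r h0 h1
    have hΦc : Continuous fun θ : ℝ => p (circleMap 0 r θ) := by
      apply hp.continuousOn.comp_continuous (continuous_circleMap 0 r)
      exact circleMap_mem_ball h0 h1
    have hzne : ∀ θ : ℝ, circleMap 0 r θ ≠ 0 :=
      fun θ => circleMap_ne_center (ne_of_gt h0)
    have huc : Continuous fun θ : ℝ => (circleMap 0 r θ)⁻¹ ^ n :=
      ((continuous_circleMap 0 r).inv₀ hzne).pow n
    have hC1 := cauchy_coeff_integral hp h0 h1 n
    have hC2 := cauchy_vanish hp h0 h1 n hn
    have hC3 : ∫ θ in (0:ℝ)..2*π,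
        (circleMap 0 r θ)⁻¹ ^ n * (starRingEnd ℂ) (p (circleMap 0 r θ)) = 0 := by
      have hint : IntervalIntegrable
          (fun θ : ℝ => (circleMap 0 r θ) ^ n * p (circleMap 0 r θ))
          MeasureTheory.volume 0 (2*π) :=
        (((continuous_circleMap 0 r).pow n).mul hΦc).intervalIntegrable _ _
      have hcc := (Complex.conjCLE.toContinuousLinearMap).intervalIntegral_comp_comm hint
      simp only [ContinuousLinearEquiv.coe_coe, Complex.conjCLE_apply] at hcc
      rw [hC2, map_zero] at hcc
      have heq : ∀ θ : ℝ, (starRingEnd ℂ) ((circleMap 0 r θ) ^ n * p (circleMap 0 r θ))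
          = ((r:ℂ)^2)^n * ((circleMap 0 r θ)⁻¹ ^ n * (starRingEnd ℂ) (p (circleMap 0 r θ))) := by
        intro θ
        rw [map_mul, map_pow, conj_circleMap' h0 θ]
        ring
      simp only [heq] at hcc
      rw [intervalIntegral.integral_const_mul] at hcc
      have hr2 : ((r:ℂ)^2)^n ≠ 0 :=
        pow_ne_zero _ (pow_ne_zero _ (Complex.ofReal_ne_zero.mpr (ne_of_gt h0)))
      exact (mul_eq_zero.mp hcc).resolve_left hr2
    -- combine
    have hcomb : c = (2*π)⁻¹ • ∫ θ in (0:ℝ)..2*π,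
        (circleMap 0 r θ)⁻¹ ^ n * (2 * ((p (circleMap 0 r θ)).re : ℂ)) := by
      rw [hc, hC1]
      congr 1
      have hi1 : IntervalIntegrable
          (fun θ : ℝ => (circleMap 0 r θ)⁻¹ ^ n * p (circleMap 0 r θ))
          MeasureTheory.volume 0 (2*π) := (huc.mul hΦc).intervalIntegrable _ _
      have hi2 : IntervalIntegrable
          (fun θ : ℝ => (circleMap 0 r θ)⁻¹ ^ n * (starRingEnd ℂ) (p (circleMap 0 r θ)))
          MeasureTheory.volume 0 (2*π) :=
        (huc.mul (Complex.continuous_conj.comp hΦc)).intervalIntegrable _ _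
      have hsplit : (∫ θ in (0:ℝ)..2*π,
          (circleMap 0 r θ)⁻¹ ^ n * (2 * ((p (circleMap 0 r θ)).re : ℂ)))
          = (∫ θ in (0:ℝ)..2*π, (circleMap 0 r θ)⁻¹ ^ n * p (circleMap 0 r θ))
            + ∫ θ in (0:ℝ)..2*π,
              (circleMap 0 r θ)⁻¹ ^ n * (starRingEnd ℂ) (p (circleMap 0 r θ)) := by
        rw [← intervalIntegral.integral_add hi1 hi2]
        apply intervalIntegral.integral_congr
        intro θ _
        simp only []
        rw [← mul_add, Complex.add_conj]
        push_cast
        ring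
      rw [hsplit, hC3, add_zero]
    -- total mass: ∫ p = 2π
    have hmass : (∫ θ in (0:ℝ)..2*π, p (circleMap 0 r θ)) = (2*π : ℝ) := by
      have h := cauchy_coeff_integral hp h0 h1 0
      simp only [pow_zero, one_mul, iteratedDeriv_zero, Nat.factorial_zero, Nat.cast_one,
        div_one, hp0] at h
      have h2π : (2*π : ℝ) ≠ 0 := by positivity
      rw [Complex.real_smul, Complex.ofReal_inv] at h
      have h2πc : ((2*π:ℝ):ℂ) ≠ 0 := Complex.ofReal_ne_zero.mpr h2π
      rw [inv_mul_eq_div, eq_div_iff h2πc] at h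
      rw [← h]
      push_cast
      ring
    have hremass : (∫ θ in (0:ℝ)..2*π, (p (circleMap 0 r θ)).re) = 2*π := by
      have := (Complex.reCLM).intervalIntegral_comp_comm (μ := MeasureTheory.volume) (hΦc.intervalIntegrable 0 (2*π))
      simp only [Complex.reCLM_apply] at this
      rw [this, hmass]
      simp
    -- the norm bound
    have hnorm : ‖∫ θ in (0:ℝ)..2*π,
        (circleMap 0 r θ)⁻¹ ^ n * (2 * ((p (circleMap 0 r θ)).re : ℂ))‖
        ≤ (r⁻¹)^n * (2 * (2*π)) := by
      have hb := intervalIntegral.norm_integral_le_integral_norm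
        (f := fun θ : ℝ => (circleMap 0 r θ)⁻¹ ^ n * (2 * ((p (circleMap 0 r θ)).re : ℂ)))
        (μ := MeasureTheory.volume) (a := 0) (b := 2*π) (by positivity)
      refine hb.trans (le_of_eq ?_)
      have heq : ∀ θ ∈ uIcc (0:ℝ) (2*π),
          ‖(circleMap 0 r θ)⁻¹ ^ n * (2 * ((p (circleMap 0 r θ)).re : ℂ))‖
          = (r⁻¹)^n * (2 * (p (circleMap 0 r θ)).re) := by
        intro θ _
        rw [norm_mul, norm_pow, norm_inv]
        have hcm : ‖circleMap 0 r θ‖ = r := by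
          rw [norm_circleMap_zero, abs_of_pos h0]
        have h2 : 0 ≤ (p (circleMap 0 r θ)).re := hre _ (circleMap_mem_ball h0 h1 θ)
        rw [hcm, norm_mul]
        simp [Complex.norm_real, Real.norm_eq_abs, _root_.abs_of_nonneg h2]
      rw [intervalIntegral.integral_congr heq, intervalIntegral.integral_const_mul,
        intervalIntegral.integral_const_mul, hremass]
    calc ‖c‖ = (2*π)⁻¹ * ‖∫ θ in (0:ℝ)..2*π,
          (circleMap 0 r θ)⁻¹ ^ n * (2 * ((p (circleMap 0 r θ)).re : ℂ))‖ := by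
          rw [hcomb, norm_smul, Real.norm_eq_abs, abs_of_pos (by positivity)]
      _ ≤ (2*π)⁻¹ * ((r⁻¹)^n * (2 * (2*π))) := by
          apply mul_le_mul_of_nonneg_left hnorm (by positivity)
      _ = 2 * (r⁻¹)^n := by
          field_simp
  -- limit r → 1
  have htend : Filter.Tendsto (fun r : ℝ => 2 * (r⁻¹)^n)
      (nhdsWithin 1 (Iio 1)) (nhds 2) := by
    have : Filter.Tendsto (fun r : ℝ => 2 * (r⁻¹)^n) (nhds 1) (nhds (2 * ((1:ℝ)⁻¹)^n)) := by
      apply Filter.Tendsto.const_mul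
      exact ((continuousAt_inv₀ one_ne_zero).pow n)
    simpa using this.mono_left nhdsWithin_le_nhds
  apply ge_of_tendsto htend
  filter_upwards [Ioo_mem_nhdsLT_of_mem (by norm_num : (1:ℝ) ∈ Set.Ioc (0:ℝ) 1)]
    with r hr
  exact key r hr.1 hr.2

private lemma iter_add {s : Set ℂ} (hs : IsOpen s) (h0 : (0:ℂ) ∈ s)
    {u v : ℂ → ℂ} (hu : AnalyticOnNhd ℂ u s) (hv : AnalyticOnNhd ℂ v s) (n : ℕ) :
    iteratedDeriv n (fun z => u z + v z) 0 = iteratedDeriv n u 0 + iteratedDeriv n v 0 := by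
  induction n generalizing u v with
  | zero => simp
  | succ n ih =>
    rw [iteratedDeriv_succ', iteratedDeriv_succ', iteratedDeriv_succ']
    have heq : deriv (fun z => u z + v z) =ᶠ[nhds (0:ℂ)] fun z => deriv u z + deriv v z := by
      filter_upwards [hs.mem_nhds h0] with z hz
      exact deriv_add (hu z hz).differentiableAt (hv z hz).differentiableAt
    rw [heq.iteratedDeriv_eq]
    exact ih hu.deriv hv.deriv


private lemma binom_shuffle (A B : ℕ → ℂ) (n : ℕ) :
    (∑ k ∈ Finset.range (n+1), (n.choose k : ℂ) * (A (k+1) * B (n-k))) +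
      ∑ k ∈ Finset.range (n+1), (n.choose k : ℂ) * (A k * B (n-k+1)) =
    ∑ k ∈ Finset.range (n+2), ((n+1).choose k : ℂ) * (A k * B (n+1-k)) := by
  have hR : ∑ k ∈ Finset.range (n+2), ((n+1).choose k : ℂ) * (A k * B (n+1-k))
      = (∑ k ∈ Finset.range (n+1), (((n.choose k : ℂ)) + (n.choose (k+1) : ℂ)) *
          (A (k+1) * B (n-k))) + A 0 * B (n+1) := by
    rw [Finset.sum_range_succ']
    congr 1
    · apply Finset.sum_congr rfl
      intro k hk
      have h1 : (n+1).choose (k+1) = n.choose k + n.choose (k+1) := Nat.choose_succ_succ' n k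
      have h2 : n + 1 - (k+1) = n - k := by omega
      rw [h1, h2]
      push_cast
      ring
    · simp
  have hL2 : ∑ k ∈ Finset.range (n+1), (n.choose k : ℂ) * (A k * B (n-k+1))
      = (∑ k ∈ Finset.range n, (n.choose (k+1) : ℂ) * (A (k+1) * B (n-k))) + A 0 * B (n+1) := by
    rw [Finset.sum_range_succ']
    congr 1
    · apply Finset.sum_congr rfl
      intro k hk
      simp only [Finset.mem_range] at hk
      have : n - (k+1) + 1 = n - k := by omega
      rw [this]
    · simp
  have hL3 : ∑ k ∈ Finset.range (n+1), (n.choose (k+1) : ℂ) * (A (k+1) * B (n-k))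
      = ∑ k ∈ Finset.range n, (n.choose (k+1) : ℂ) * (A (k+1) * B (n-k)) := by
    rw [Finset.sum_range_succ]
    simp [Nat.choose_succ_self]
  rw [hR, hL2]
  rw [← hL3]
  rw [← add_assoc, ← Finset.sum_add_distrib]
  congr 1
  apply Finset.sum_congr rfl
  intro k hk
  ring

private lemma iter_mul {s : Set ℂ} (hs : IsOpen s) (h0 : (0:ℂ) ∈ s)
    {u v : ℂ → ℂ} (hu : AnalyticOnNhd ℂ u s) (hv : AnalyticOnNhd ℂ v s) (n : ℕ) :
    iteratedDeriv n (fun z => u z * v z) 0 =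
      ∑ k ∈ Finset.range (n+1), (n.choose k : ℂ) *
        (iteratedDeriv k u 0 * iteratedDeriv (n-k) v 0) := by
  induction n generalizing u v with
  | zero => simp
  | succ n ih =>
    rw [iteratedDeriv_succ']
    have heq : deriv (fun z => u z * v z) =ᶠ[nhds (0:ℂ)]
        fun z => deriv u z * v z + u z * deriv v z := by
      filter_upwards [hs.mem_nhds h0] with z hz
      exact deriv_mul (hu z hz).differentiableAt (hv z hz).differentiableAt
    rw [heq.iteratedDeriv_eq, iter_add hs h0 (hu.deriv.mul hv) (hu.mul hv.deriv),
      ih hu.deriv hv, ih hu hv.deriv]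
    -- now pure binomial algebra
    have hL : ∀ k, iteratedDeriv k (deriv u) 0 = iteratedDeriv (k+1) u 0 := by
      intro k; rw [← iteratedDeriv_succ']
    have hR : ∀ k, iteratedDeriv k (deriv v) 0 = iteratedDeriv (k+1) v 0 := by
      intro k; rw [← iteratedDeriv_succ']
    simp only [hL, hR]
    exact binom_shuffle (fun k => iteratedDeriv k u 0) (fun k => iteratedDeriv k v 0) n

private lemma iter_zero_fun (m : ℕ) : iteratedDeriv m (fun _ : ℂ => (0:ℂ)) 0 = 0 := by
  induction m with
  | zero => simp
  | succ m ih =>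
    rw [iteratedDeriv_succ']
    have : deriv (fun _ : ℂ => (0:ℂ)) = fun _ : ℂ => (0:ℂ) := by
      funext z; simp
    rw [this]
    exact ih

private lemma iter_id (k : ℕ) : iteratedDeriv k (fun z : ℂ => z) 0 = if k = 1 then 1 else 0 := by
  match k with
  | 0 => simp
  | 1 => simp [iteratedDeriv_one]
  | (m+2) =>
    rw [iteratedDeriv_succ']
    have h1 : deriv (fun z : ℂ => z) = fun _ : ℂ => (1:ℂ) := by
      funext z; simp
    rw [h1, iteratedDeriv_succ']
    have h2 : deriv (fun _ : ℂ => (1:ℂ)) = fun _ : ℂ => (0:ℂ) := by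
      funext z; simp
    rw [h2, iter_zero_fun]
    simp

private lemma iter_zmul {s : Set ℂ} (hs : IsOpen s) (h0 : (0:ℂ) ∈ s)
    {u : ℂ → ℂ} (hu : AnalyticOnNhd ℂ u s) {n : ℕ} (hn : 1 ≤ n) :
    iteratedDeriv n (fun z => z * u z) 0 = n * iteratedDeriv (n-1) u 0 := by
  rw [iter_mul hs h0 analyticOnNhd_id hu n]
  rw [Finset.sum_eq_single 1]
  · rw [iter_id]
    simp [Nat.choose_one_right]
  · intro k hk hk1
    rw [iter_id]
    simp [hk1]
  · intro h
    exfalso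
    apply h
    simp only [Finset.mem_range]
    omega


private lemma coeff_bound (B C : ℕ → ℂ) (hB0 : B 0 = 0) (hB1 : ‖B 1‖ = 1) (hC0 : C 0 = 1)
    (hC : ∀ k, 1 ≤ k → ‖C k‖ ≤ 2)
    (hrec : ∀ n : ℕ, 1 ≤ n → (n:ℂ) * B n = ∑ k ∈ Finset.range (n+1), C k * B (n-k)) :
    ∀ n, ‖B n‖ ≤ n := by
  intro n
  induction n using Nat.strong_induction_on with
  | _ n ih =>
    match n with
    | 0 => simp [hB0]
    | 1 => simp [hB1]
    | (m+2) =>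
      set N := m + 2 with hN
      have hrecN := hrec N (by omega)
      rw [Finset.sum_range_succ'] at hrecN
      rw [hC0, one_mul, Nat.sub_zero] at hrecN
      have h' : ((N:ℂ) - 1) * B N = ∑ k ∈ Finset.range N, C (k+1) * B (N-(k+1)) := by
        linear_combination hrecN
      have hnorm : ((N:ℝ) - 1) * ‖B N‖ ≤ ∑ k ∈ Finset.range N, 2 * ((N-(k+1) : ℕ) : ℝ) := by
        calc ((N:ℝ) - 1) * ‖B N‖ = ‖((N:ℂ) - 1) * B N‖ := by
              rw [norm_mul]
              congr 1
              rw [show (N:ℂ) - 1 = ((N - 1 : ℕ) : ℂ) by push_cast [hN]; ring]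
              rw [Complex.norm_natCast]
              push_cast [hN]
              ring
          _ = ‖∑ k ∈ Finset.range N, C (k+1) * B (N-(k+1))‖ := by rw [h']
          _ ≤ ∑ k ∈ Finset.range N, ‖C (k+1) * B (N-(k+1))‖ := norm_sum_le _ _
          _ ≤ ∑ k ∈ Finset.range N, 2 * ((N-(k+1) : ℕ) : ℝ) := by
              apply Finset.sum_le_sum
              intro k hk
              rw [norm_mul]
              have h1 : ‖C (k+1)‖ ≤ 2 := hC (k+1) (by omega)
              have h2 : ‖B (N-(k+1))‖ ≤ ((N-(k+1) : ℕ) : ℝ) := ih _ (by omega)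
              exact mul_le_mul h1 h2 (norm_nonneg _) (by norm_num)
      have hsum : ∑ k ∈ Finset.range N, 2 * ((N-(k+1) : ℕ) : ℝ) = (N:ℝ) * ((N:ℝ) - 1) := by
        rw [← Finset.mul_sum]
        have : ∀ k ∈ Finset.range N, ((N-(k+1) : ℕ) : ℝ) = ((N-1-k : ℕ) : ℝ) := by
          intro k hk; congr 1; omega
        rw [Finset.sum_congr rfl this]
        rw [Finset.sum_range_reflect (fun i => (i : ℝ)) N]
        have hg : (∑ i ∈ Finset.range N, (i:ℝ)) = (N:ℝ) * ((N:ℝ) - 1) / 2 := by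
          have := Finset.sum_range_id_mul_two N
          have hcast := congrArg (fun x : ℕ => (x : ℝ)) this
          push_cast at hcast
          have hN1 : ((N - 1 : ℕ) : ℝ) = (N:ℝ) - 1 := by push_cast [hN]; ring
          rw [hN1] at hcast
          have hNm : (N:ℝ) = (m:ℝ) + 2 := by rw [hN]; push_cast; ring
          have hmm : ((m:ℝ) + 1 + 1) * ((N:ℝ)-1) = (N:ℝ)*((N:ℝ)-1) := by rw [hNm]; ring
          linarith
        rw [hg]
        ring
      rw [hsum] at hnorm
      have hNpos : (0:ℝ) < (N:ℝ) - 1 := by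
        simp only [hN]; push_cast; linarith
      nlinarith [norm_nonneg (B N)]


theorem stmt13 (f : ℂ → ℂ)
    (hf : DifferentiableOn ℂ f (ball (0:ℂ) 1))
    (h0 : f 0 = 0) (h1 : deriv f 0 = 1)
    (g : ℂ → ℂ) (hg : ∀ z, g z = z * deriv f z)
    (hgnz : ∀ z ∈ ball (0:ℂ) 1, z ≠ 0 → g z ≠ 0)
    (hgre : ∀ z ∈ ball (0:ℂ) 1, z ≠ 0 → 0 < (z * deriv g z / g z).re)
    (a : ℕ → ℂ) (ha : ∀ n, a n = iteratedDeriv n f 0 / n.factorial) :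
    ∀ n : ℕ, 2 ≤ n → ‖a n‖ ≤ 1 := by
  have h0mem : (0:ℂ) ∈ ball (0:ℂ) 1 := mem_ball_self one_pos
  have hfa : AnalyticOnNhd ℂ f (ball (0:ℂ) 1) := hf.analyticOnNhd isOpen_ball
  have hda : AnalyticOnNhd ℂ (deriv f) (ball (0:ℂ) 1) := hfa.deriv
  have hdda : AnalyticOnNhd ℂ (deriv (deriv f)) (ball (0:ℂ) 1) := hda.deriv
  have hgfun : g = fun z => z * deriv f z := funext hg
  have hga : AnalyticOnNhd ℂ g (ball (0:ℂ) 1) := by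
    rw [hgfun]; exact analyticOnNhd_id.mul hda
  have hdfne : ∀ z ∈ ball (0:ℂ) 1, deriv f z ≠ 0 := by
    intro z hz
    by_cases hz0 : z = 0
    · subst hz0; rw [h1]; exact one_ne_zero
    · intro hcon
      apply hgnz z hz hz0
      rw [hg, hcon, mul_zero]
  set p : ℂ → ℂ := fun z => 1 + z * deriv (deriv f) z / deriv f z with hpdef
  have hpa : AnalyticOnNhd ℂ p (ball (0:ℂ) 1) :=
    analyticOnNhd_const.add ((analyticOnNhd_id.mul hdda).div hda hdfne)
  have hp0 : p 0 = 1 := by simp [hpdef]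
  have hderivg : ∀ z ∈ ball (0:ℂ) 1, deriv g z = deriv f z + z * deriv (deriv f) z := by
    intro z hz
    rw [hgfun, deriv_fun_mul differentiableAt_fun_id ((hda z hz).differentiableAt)]
    simp
  have hfe : ∀ z ∈ ball (0:ℂ) 1, z * deriv g z = p z * g z := by
    intro z hz
    rw [hderivg z hz, hg, hpdef]
    have hd := hdfne z hz
    field_simp
  have hrep : ∀ z ∈ ball (0:ℂ) 1, 0 ≤ (p z).re := by
    intro z hz
    by_cases hz0 : z = 0
    · subst hz0; rw [hp0]; norm_num
    · have hval := hgre z hz hz0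
      have hgz := hgnz z hz hz0
      have heq2 : z * deriv g z / g z = p z := by
        rw [hfe z hz]; field_simp
      rw [heq2] at hval
      exact hval.le
  set B : ℕ → ℂ := fun k => iteratedDeriv k g 0 / k.factorial with hBdef
  set C : ℕ → ℂ := fun k => iteratedDeriv k p 0 / k.factorial with hCdef
  have hCb : ∀ k, 1 ≤ k → ‖C k‖ ≤ 2 := by
    intro k hk
    exact caratheodory_coeff hpa.differentiableOn hp0 hrep k hk
  have hB0 : B 0 = 0 := by
    simp [hBdef, hg, h1]
  have hB1 : ‖B 1‖ = 1 := by
    have : iteratedDeriv 1 g 0 = deriv g 0 := by rw [iteratedDeriv_one]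
    have hdg0 : deriv g 0 = 1 := by
      rw [hderivg 0 h0mem, h1]; ring
    simp [hBdef, this, hdg0]
  have hC0 : C 0 = 1 := by
    simp [hCdef, hp0]
  -- the recursion
  have heqon : Set.EqOn (fun z => z * deriv g z) (fun z => p z * g z) (ball (0:ℂ) 1) :=
    fun z hz => hfe z hz
  have hrec : ∀ n : ℕ, 1 ≤ n → (n:ℂ) * B n = ∑ k ∈ Finset.range (n+1), C k * B (n-k) := by
    intro m hm
    have hiter := (heqon.iteratedDeriv_of_isOpen isOpen_ball m) h0mem
    rw [iter_zmul isOpen_ball h0mem hga.deriv hm] at hiter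
    rw [← iteratedDeriv_succ'] at hiter
    rw [show m - 1 + 1 = m from Nat.succ_pred_eq_of_pos hm] at hiter
    rw [iter_mul isOpen_ball h0mem hpa hga m] at hiter
    have hterm : ∀ k ∈ Finset.range (m+1), C k * B (m-k) =
        (m.choose k : ℂ) * (iteratedDeriv k p 0 * iteratedDeriv (m-k) g 0) / m.factorial := by
      intro k hk
      simp only [Finset.mem_range] at hk
      have hkm : k ≤ m := by omega
      have hfact : (m.choose k) * k.factorial * (m-k).factorial = m.factorial :=
        Nat.choose_mul_factorial_mul_factorial hkm
      have hfC : ((m.factorial : ℂ)) = (m.choose k : ℂ) * k.factorial * (m-k).factorial := by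
        exact_mod_cast hfact.symm
      simp only [hBdef, hCdef]
      rw [hfC]
      have hk0 : (k.factorial : ℂ) ≠ 0 := by exact_mod_cast k.factorial_ne_zero
      have hmk0 : ((m-k).factorial : ℂ) ≠ 0 := by exact_mod_cast (m-k).factorial_ne_zero
      have hch0 : (m.choose k : ℂ) ≠ 0 := by
        exact_mod_cast (Nat.choose_pos hkm).ne'
      field_simp
    rw [Finset.sum_congr rfl hterm]
    simp only [hBdef]
    rw [← Finset.sum_div, ← hiter]
    have hm0 : ((m.factorial : ℂ)) ≠ 0 := by exact_mod_cast m.factorial_ne_zero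
    field_simp
  have hBb : ∀ n, ‖B n‖ ≤ n := coeff_bound B C hB0 hB1 hC0 hCb hrec
  -- conclude
  intro n hn2
  have hn1 : 1 ≤ n := by omega
  have hBa : B n = (n:ℂ) * a n := by
    have hgi : iteratedDeriv n g 0 = n * iteratedDeriv (n-1) (deriv f) 0 := by
      rw [hgfun]
      exact iter_zmul isOpen_ball h0mem hda hn1
    rw [← iteratedDeriv_succ', show n - 1 + 1 = n from Nat.succ_pred_eq_of_pos hn1] at hgi
    simp only [hBdef]
    rw [hgi, ha]
    ring
  have : (n:ℝ) * ‖a n‖ ≤ n := by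
    calc (n:ℝ) * ‖a n‖ = ‖B n‖ := by
          rw [hBa, norm_mul, Complex.norm_natCast]
      _ ≤ n := hBb n
  have hnpos : (0:ℝ) < n := by positivity
  have h2 : (n:ℝ) * ‖a n‖ ≤ (n:ℝ) * 1 := by simpa using this
  exact le_of_mul_le_mul_left h2 hnpos
end

section
/- Let f be holomorphic on the unit disk with f(0)=0, f'(0)=1, and suppose z f'(z) is starlike. Then 1/(1+|z|)² ≤ |f'(z)| ≤ 1/(1−|z|)² for all z ∈ 𝔻. -/
open Complex Metric Set Filter Topology


lemma aux_log_norm {u : ℝ → ℂ} {u' : ℂ} {t : ℝ} (hu : HasDerivAt u u' t) (hne : u t ≠ 0) :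
    HasDerivAt (fun s => Real.log ‖u s‖) ((u' / u t).re) t := by
  have hre : HasDerivAt (fun s => (u s).re) u'.re t :=
    (Complex.reCLM.hasFDerivAt.comp_hasDerivAt t hu)
  have him : HasDerivAt (fun s => (u s).im) u'.im t :=
    (Complex.imCLM.hasFDerivAt.comp_hasDerivAt t hu)
  have hns : HasDerivAt (fun s => Complex.normSq (u s))
      (2 * (u t).re ^ 1 * u'.re + 2 * (u t).im ^ 1 * u'.im) t := by
    have := ((hre.pow 2).add (him.pow 2))
    have e : (fun s => Complex.normSq (u s)) = (fun s => (u s).re) ^ 2 + (fun s => (u s).im) ^ 2 := by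
      funext s
      simp [Complex.normSq_apply, pow_two]
    rw [e]
    exact this.congr_deriv (by norm_num)
  have hns0 : Complex.normSq (u t) ≠ 0 := by simpa [Complex.normSq_eq_zero] using hne
  have hlog := (hns.log hns0).div_const 2
  have heq : (fun s => Real.log ‖u s‖) = fun s => Real.log (Complex.normSq (u s)) / 2 := by
    funext s
    rw [← Real.log_sqrt (Complex.normSq_nonneg _), Complex.norm_def]
  rw [heq]
  refine hlog.congr_deriv ?_
  symm
  rw [Complex.div_re]
  field_simp

lemma aux_re_bounds {w : ℂ} {r : ℝ} (hr0 : 0 ≤ r) (hr1 : r < 1)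
    (h : ‖w - 1‖ ≤ r * ‖w + 1‖) :
    (1 - r) / (1 + r) ≤ w.re ∧ w.re ≤ (1 + r) / (1 - r) := by
  have hq : Complex.normSq (w - 1) ≤ r ^ 2 * Complex.normSq (w + 1) := by
    have h2 : ‖w - 1‖ ^ 2 ≤ (r * ‖w + 1‖) ^ 2 := by
      apply pow_le_pow_left₀ (norm_nonneg _) h
    rw [Complex.sq_norm] at h2
    calc Complex.normSq (w - 1) ≤ (r * ‖w + 1‖) ^ 2 := h2
      _ = r ^ 2 * Complex.normSq (w + 1) := by rw [mul_pow, Complex.sq_norm]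
  rw [Complex.normSq_apply, Complex.normSq_apply] at hq
  simp only [Complex.sub_re, Complex.sub_im, Complex.add_re, Complex.add_im,
    Complex.one_re, Complex.one_im] at hq
  set a := w.re
  set b := w.im
  constructor
  · rw [div_le_iff₀ (by linarith)]
    by_contra hcon
    push_neg at hcon
    have h2 : (1 - r) * (a * (1 + r)) < (1 - r) * (1 - r) := by nlinarith
    have f1 : 0 < (1 + r) - (1 - r) * a := by nlinarith
    have f2 : 0 < (1 - r) - (1 + r) * a := by linarith
    nlinarith [mul_pos f1 f2, mul_nonneg (show (0:ℝ) ≤ 1 - r ^ 2 by nlinarith) (sq_nonneg b)]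
  · rw [le_div_iff₀ (by linarith)]
    by_contra hcon
    push_neg at hcon
    have f1 : 0 < (1 - r) * a - (1 + r) := by linarith
    have ha : 0 < a := by nlinarith
    have f2 : 0 < (1 + r) * a - (1 - r) := by nlinarith [mul_nonneg hr0 ha.le]
    nlinarith [mul_pos f1 f2, mul_nonneg (show (0:ℝ) ≤ 1 - r ^ 2 by nlinarith) (sq_nonneg b)]

lemma aux_mono {φ φ' : ℝ → ℝ} {L : ℝ}
    (hd : ∀ t ∈ Set.Ioc (0:ℝ) 1, HasDerivAt φ (φ' t) t)
    (hneg : ∀ t ∈ Set.Ioc (0:ℝ) 1, φ' t ≤ 0)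
    (hlim : Tendsto φ (𝓝[>] 0) (𝓝 L)) : φ 1 ≤ L := by
  have key : ∀ ε ∈ Set.Ioo (0:ℝ) 1, φ 1 ≤ φ ε := by
    intro ε hε
    have hmono : AntitoneOn φ (Set.Icc ε 1) := by
      apply antitoneOn_of_deriv_nonpos (convex_Icc ε 1)
      · intro x hx
        exact (hd x ⟨lt_of_lt_of_le hε.1 hx.1, hx.2⟩).continuousAt.continuousWithinAt
      · intro x hx
        rw [interior_Icc] at hx
        exact (hd x ⟨lt_trans hε.1 hx.1, hx.2.le⟩).differentiableAt.differentiableWithinAt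
      · intro x hx
        rw [interior_Icc] at hx
        rw [(hd x ⟨lt_trans hε.1 hx.1, hx.2.le⟩).deriv]
        exact hneg x ⟨lt_trans hε.1 hx.1, hx.2.le⟩
    exact hmono ⟨le_refl ε, hε.2.le⟩ ⟨hε.2.le, le_refl 1⟩ hε.2.le
  refine ge_of_tendsto hlim ?_
  filter_upwards [Ioo_mem_nhdsGT_of_mem (Set.left_mem_Ico.2 zero_lt_one)] with ε hε
  exact key ε hε


set_option maxHeartbeats 1000000 in
theorem stmt14 (f : ℂ → ℂ)
    (hf : DifferentiableOn ℂ f (ball (0:ℂ) 1))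
    (h0 : f 0 = 0) (h1 : deriv f 0 = 1)
    (g : ℂ → ℂ) (hg : ∀ z, g z = z * deriv f z)
    (hgnz : ∀ z ∈ ball (0:ℂ) 1, z ≠ 0 → g z ≠ 0)
    (hgre : ∀ z ∈ ball (0:ℂ) 1, z ≠ 0 → 0 < (z * deriv g z / g z).re) :
    ∀ z ∈ ball (0:ℂ) 1,
      1 / (1 + ‖z‖) ^ 2 ≤ ‖deriv f z‖ ∧ ‖deriv f z‖ ≤ 1 / (1 - ‖z‖) ^ 2 := by
  have hfa : AnalyticOnNhd ℂ f (ball 0 1) := hf.analyticOnNhd isOpen_ball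
  have hfad : AnalyticOnNhd ℂ (deriv f) (ball 0 1) := hfa.deriv
  have hfadd : AnalyticOnNhd ℂ (deriv (deriv f)) (ball 0 1) := hfad.deriv
  have hfne : ∀ w ∈ ball (0:ℂ) 1, deriv f w ≠ 0 := by
    intro w hw
    rcases eq_or_ne w 0 with rfl | hw0
    · rw [h1]; exact one_ne_zero
    · intro hc
      exact hgnz w hw hw0 (by rw [hg, hc, mul_zero])
  set H : ℂ → ℂ := fun w => 1 + w * deriv (deriv f) w / deriv f w with hHdef
  have hH0 : H 0 = 1 := by simp [hHdef]
  have hHd : DifferentiableOn ℂ H (ball 0 1) := by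
    apply (differentiableOn_const (1:ℂ)).add
    exact (differentiableOn_id.mul hfadd.differentiableOn).div hfad.differentiableOn hfne
  have hderivg : ∀ w ∈ ball (0:ℂ) 1, deriv g w = deriv f w + w * deriv (deriv f) w := by
    intro w hw
    have hga : HasDerivAt g (1 * deriv f w + w * deriv (deriv f) w) w := by
      have hgf : g = fun y => y * deriv f y := funext hg
      rw [hgf]
      exact (hasDerivAt_id w).mul (hfad w hw).differentiableAt.hasDerivAt
    rw [hga.deriv]; ring
  have hHg : ∀ w ∈ ball (0:ℂ) 1, w ≠ 0 → w * deriv g w / g w = H w := by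
    intro w hw hw0
    rw [hderivg w hw, hg, hHdef]
    field_simp [hfne w hw]
  have hHre : ∀ w ∈ ball (0:ℂ) 1, 0 < (H w).re := by
    intro w hw
    rcases eq_or_ne w 0 with rfl | hw0
    · rw [hH0]; norm_num
    · rw [← hHg w hw hw0]; exact hgre w hw hw0
  have hHne : ∀ w ∈ ball (0:ℂ) 1, H w + 1 ≠ 0 := by
    intro w hw hc
    have h2 : (H w + 1).re = 0 := by rw [hc]; simp
    rw [Complex.add_re, Complex.one_re] at h2
    linarith [hHre w hw]
  have hkey : ∀ w ∈ ball (0:ℂ) 1,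
      (1 - ‖w‖) / (1 + ‖w‖) ≤ (H w).re ∧ (H w).re ≤ (1 + ‖w‖) / (1 - ‖w‖) := by
    set F : ℂ → ℂ := fun w => (H w - 1) / (H w + 1) with hFdef
    have hFd : DifferentiableOn ℂ F (ball 0 1) :=
      (hHd.sub (differentiableOn_const 1)).div (hHd.add (differentiableOn_const 1)) hHne
    have hmaps : MapsTo F (ball 0 1) (ball 0 1) := by
      intro w hw
      rw [mem_ball_zero_iff, hFdef]
      simp only
      rw [norm_div, div_lt_one (norm_pos_iff.2 (hHne w hw))]
      have hre := hHre w hw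
      have h3 : Complex.normSq (H w - 1) < Complex.normSq (H w + 1) := by
        rw [Complex.normSq_apply, Complex.normSq_apply]
        simp only [Complex.sub_re, Complex.sub_im, Complex.add_re, Complex.add_im,
          Complex.one_re, Complex.one_im]
        nlinarith
      rw [Complex.norm_def, Complex.norm_def]
      exact Real.sqrt_lt_sqrt (Complex.normSq_nonneg _) h3
    have hF0 : F 0 = 0 := by rw [hFdef]; simp [hH0]
    intro w hw
    have hsch := Complex.norm_le_norm_of_mapsTo_ball hFd (hmaps.mono_right ball_subset_closedBall) hF0 (mem_ball_zero_iff.1 hw)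
    apply aux_re_bounds (norm_nonneg w) (mem_ball_zero_iff.1 hw)
    rw [hFdef] at hsch
    simp only at hsch
    rw [norm_div, div_le_iff₀ (norm_pos_iff.2 (hHne w hw))] at hsch
    simpa using hsch
  intro z hz
  rcases eq_or_ne z 0 with rfl | hz0
  · rw [h1]; norm_num
  have hr0 : 0 < ‖z‖ := norm_pos_iff.2 hz0
  have hr1 : ‖z‖ < 1 := mem_ball_zero_iff.1 hz
  set r := ‖z‖ with hrdef
  have hball : ∀ t : ℝ, 0 < t → t ≤ 1 → ((t:ℂ) * z) ∈ ball (0:ℂ) 1 := by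
    intro t ht0 ht1
    rw [mem_ball_zero_iff, norm_mul, (show ‖((t:ℝ):ℂ)‖ = |t| by rw [Complex.norm_real, Real.norm_eq_abs]), abs_of_pos ht0]
    nlinarith
  have htz0 : ∀ t : ℝ, 0 < t → ((t:ℂ) * z) ≠ 0 := fun t ht =>
    mul_ne_zero (by exact_mod_cast ht.ne') hz0
  have hnorm_tz : ∀ t : ℝ, 0 < t → ‖(t:ℂ) * z‖ = t * r := by
    intro t ht; rw [norm_mul, (show ‖((t:ℝ):ℂ)‖ = |t| by rw [Complex.norm_real, Real.norm_eq_abs]), abs_of_pos ht]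
  have hune : ∀ t : ℝ, 0 < t → t ≤ 1 → g ((t:ℂ)*z) ≠ 0 := fun t ht0 ht1 =>
    hgnz _ (hball t ht0 ht1) (htz0 t ht0)
  have hu : ∀ t : ℝ, 0 < t → t ≤ 1 →
      HasDerivAt (fun s : ℝ => g ((s:ℂ)*z)) (z * deriv g ((t:ℂ)*z)) t := by
    intro t ht0 ht1
    have hgd : DifferentiableAt ℂ g ((t:ℂ)*z) := by
      have hgf : g = fun y => y * deriv f y := funext hg
      rw [hgf]
      exact differentiableAt_id.mul (hfad _ (hball t ht0 ht1)).differentiableAt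
    have hι : HasDerivAt (fun s : ℝ => (s:ℂ) * z) z t := by
      simpa using (Complex.ofRealCLM.hasDerivAt (x := t)).mul_const z
    have h4 := hgd.hasDerivAt.scomp t hι
    simpa [Function.comp_def, smul_eq_mul, mul_comm] using h4
  have hLd : ∀ t : ℝ, 0 < t → t ≤ 1 →
      HasDerivAt (fun s : ℝ => Real.log ‖g ((s:ℂ)*z)‖) ((H ((t:ℂ)*z)).re / t) t := by
    intro t ht0 ht1
    have hd := aux_log_norm (hu t ht0 ht1) (hune t ht0 ht1)
    convert hd using 1
    have ht0' : (t:ℂ) ≠ 0 := by exact_mod_cast ht0.ne'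
    have h7 : z * deriv g ((t:ℂ)*z) / g ((t:ℂ)*z) = H ((t:ℂ)*z) / (t:ℂ) := by
      rw [← hHg _ (hball t ht0 ht1) (htz0 t ht0)]
      rw [eq_div_iff ht0']
      field_simp
    rw [h7, Complex.div_ofReal_re]
  have hReB : ∀ t : ℝ, 0 < t → t ≤ 1 →
      (1 - t*r)/(1 + t*r) ≤ (H ((t:ℂ)*z)).re ∧ (H ((t:ℂ)*z)).re ≤ (1 + t*r)/(1 - t*r) := by
    intro t ht0 ht1
    have := hkey _ (hball t ht0 ht1)
    rwa [hnorm_tz t ht0] at this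
  have htr1 : ∀ t : ℝ, 0 < t → t ≤ 1 → t * r < 1 := by
    intro t ht0 ht1; nlinarith
  -- limit pieces
  have hbase : Tendsto (fun t : ℝ => Real.log (r * ‖deriv f ((t:ℂ)*z)‖)) (𝓝 0)
      (𝓝 (Real.log r)) := by
    have h8 : ContinuousAt (fun t : ℝ => r * ‖deriv f ((t:ℂ)*z)‖) 0 := by
      apply continuousAt_const.mul
      apply ContinuousAt.norm
      have hin : ContinuousAt (fun t : ℝ => (t:ℂ)*z) 0 :=
        (Complex.continuous_ofReal.mul continuous_const).continuousAt
      have hout : ContinuousAt (deriv f) (((0:ℝ):ℂ)*z) := by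
        rw [show (((0:ℝ):ℂ)*z) = 0 by simp]
        exact (hfad 0 (mem_ball_self one_pos)).continuousAt
      exact ContinuousAt.comp (g := deriv f) (f := fun t : ℝ => (t:ℂ)*z) hout hin
    have hval : r * ‖deriv f (((0:ℝ):ℂ)*z)‖ = r := by
      rw [show (((0:ℝ):ℂ)*z) = 0 by simp, h1]; simp
    have h9 : ContinuousAt (fun t : ℝ => Real.log (r * ‖deriv f ((t:ℂ)*z)‖)) 0 := by
      apply (Real.continuousAt_log ?_).comp h8
      rw [hval]; exact hr0.ne'
    have h10 := h9.tendsto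
    rwa [hval] at h10
  have hlog1m : Tendsto (fun t : ℝ => Real.log (1 - t*r)) (𝓝 0) (𝓝 0) := by
    have hc : ContinuousAt (fun t : ℝ => Real.log (1 - t*r)) 0 := by
      apply (Real.continuousAt_log ?_).comp
        ((continuous_const.sub (continuous_id.mul continuous_const)).continuousAt)
      norm_num
    have := hc.tendsto
    simpa using this
  have hlog1p : Tendsto (fun t : ℝ => Real.log (1 + t*r)) (𝓝 0) (𝓝 0) := by
    have hc : ContinuousAt (fun t : ℝ => Real.log (1 + t*r)) 0 := by
      apply (Real.continuousAt_log ?_).comp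
        ((continuous_const.add (continuous_id.mul continuous_const)).continuousAt)
      norm_num
    have := hc.tendsto
    simpa using this
  have hgz : ‖g z‖ = r * ‖deriv f z‖ := by rw [hg, norm_mul]
  have hgzpos : 0 < ‖g z‖ := norm_pos_iff.2 (hgnz z hz hz0)
  have h1r : 0 < 1 - r := by linarith
  have h1p : 0 < 1 + r := by linarith
  have hfzpos : 0 < ‖deriv f z‖ := norm_pos_iff.2 (hfne z hz)
  -- eventual equality helper
  have heqv : ∀ c : ℝ, ∀ᶠ t : ℝ in 𝓝[>] (0:ℝ),
      Real.log (r * ‖deriv f ((t:ℂ)*z)‖) + 2 * Real.log (1 + c*(t*r)) =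
      Real.log ‖g ((t:ℂ)*z)‖ - Real.log t + 2 * Real.log (1 + c*(t*r)) := by
    intro c
    filter_upwards [Ioo_mem_nhdsGT_of_mem (Set.left_mem_Ico.2 zero_lt_one)] with t ht
    have h13 : ‖g ((t:ℂ)*z)‖ = t * (r * ‖deriv f ((t:ℂ)*z)‖) := by
      rw [hg, norm_mul, hnorm_tz t ht.1]; ring
    rw [h13, Real.log_mul ht.1.ne'
      (mul_ne_zero hr0.ne' (norm_ne_zero_iff.2 (hfne _ (hball t ht.1 ht.2.le))))]
    ring
  -- UPPER BOUND
  have hupper : Real.log ‖g z‖ + 2 * Real.log (1 - r) ≤ Real.log r := by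
    have hψd : ∀ t ∈ Set.Ioc (0:ℝ) 1, HasDerivAt
        (fun t : ℝ => Real.log ‖g ((t:ℂ)*z)‖ - Real.log t + 2 * Real.log (1 - t*r))
        ((H ((t:ℂ)*z)).re / t - t⁻¹ + 2 * (-r / (1 - t*r))) t := by
      rintro t ⟨ht0, ht1⟩
      apply HasDerivAt.add
      · exact (hLd t ht0 ht1).sub (Real.hasDerivAt_log ht0.ne')
      · apply HasDerivAt.const_mul
        have hin : HasDerivAt (fun t : ℝ => 1 - t * r) (-r) t := by
          simpa using ((hasDerivAt_id t).mul_const r).const_sub 1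
        have hden : (0:ℝ) < 1 - t*r := by have := htr1 t ht0 ht1; linarith
        simpa using hin.log hden.ne'
    have hψneg : ∀ t ∈ Set.Ioc (0:ℝ) 1,
        (H ((t:ℂ)*z)).re / t - t⁻¹ + 2 * (-r / (1 - t*r)) ≤ 0 := by
      rintro t ⟨ht0, ht1⟩
      have hb := (hReB t ht0 ht1).2
      have hden : (0:ℝ) < 1 - t*r := by have := htr1 t ht0 ht1; linarith
      have h11 : (H ((t:ℂ)*z)).re / t ≤ (1 + t*r)/(1 - t*r) / t := by gcongr
      have h12 : (1 + t*r)/(1 - t*r)/t - t⁻¹ + 2 * (-r/(1 - t*r)) = 0 := by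
        field_simp
        ring
      linarith
    have hlim : Tendsto
        (fun t : ℝ => Real.log ‖g ((t:ℂ)*z)‖ - Real.log t + 2 * Real.log (1 - t*r))
        (𝓝[>] 0) (𝓝 (Real.log r)) := by
      have h14 : Tendsto
          (fun t : ℝ => Real.log (r * ‖deriv f ((t:ℂ)*z)‖) + 2 * Real.log (1 - t*r))
          (𝓝[>] 0) (𝓝 (Real.log r + 2 * 0)) :=
        (hbase.add (hlog1m.const_mul 2)).mono_left nhdsWithin_le_nhds
      have heq := heqv (-1)
      simp only [neg_one_mul, ← sub_eq_add_neg] at heq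
      rw [show Real.log r + 2*0 = Real.log r by ring] at h14
      exact h14.congr' heq
    have hres := aux_mono hψd hψneg hlim
    have h15 : Real.log ‖g (((1:ℝ):ℂ)*z)‖ - Real.log 1 + 2 * Real.log (1 - 1*r)
        = Real.log ‖g z‖ + 2 * Real.log (1 - r) := by
      norm_num
    rw [h15] at hres
    exact hres
  -- LOWER BOUND
  have hlower : Real.log r ≤ Real.log ‖g z‖ + 2 * Real.log (1 + r) := by
    have hψd : ∀ t ∈ Set.Ioc (0:ℝ) 1, HasDerivAt
        (fun t : ℝ => -(Real.log ‖g ((t:ℂ)*z)‖ - Real.log t + 2 * Real.log (1 + t*r)))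
        (-((H ((t:ℂ)*z)).re / t - t⁻¹ + 2 * (r / (1 + t*r)))) t := by
      rintro t ⟨ht0, ht1⟩
      apply HasDerivAt.neg
      apply HasDerivAt.add
      · exact (hLd t ht0 ht1).sub (Real.hasDerivAt_log ht0.ne')
      · apply HasDerivAt.const_mul
        have hin : HasDerivAt (fun t : ℝ => 1 + t * r) r t := by
          simpa using ((hasDerivAt_id t).mul_const r).const_add 1
        have hden : (0:ℝ) < 1 + t*r := by nlinarith
        simpa using hin.log hden.ne'
    have hψneg : ∀ t ∈ Set.Ioc (0:ℝ) 1,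
        -((H ((t:ℂ)*z)).re / t - t⁻¹ + 2 * (r / (1 + t*r))) ≤ 0 := by
      rintro t ⟨ht0, ht1⟩
      have hb := (hReB t ht0 ht1).1
      have hden : (0:ℝ) < 1 + t*r := by nlinarith
      have h11 : (1 - t*r)/(1 + t*r) / t ≤ (H ((t:ℂ)*z)).re / t := by gcongr
      have h12 : (1 - t*r)/(1 + t*r)/t - t⁻¹ + 2 * (r/(1 + t*r)) = 0 := by
        field_simp
        ring
      linarith
    have hlim : Tendsto
        (fun t : ℝ => -(Real.log ‖g ((t:ℂ)*z)‖ - Real.log t + 2 * Real.log (1 + t*r)))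
        (𝓝[>] 0) (𝓝 (-Real.log r)) := by
      have h14 : Tendsto
          (fun t : ℝ => Real.log (r * ‖deriv f ((t:ℂ)*z)‖) + 2 * Real.log (1 + t*r))
          (𝓝[>] 0) (𝓝 (Real.log r + 2 * 0)) :=
        (hbase.add (hlog1p.const_mul 2)).mono_left nhdsWithin_le_nhds
      have heq := heqv 1
      simp only [one_mul] at heq
      rw [show Real.log r + 2*0 = Real.log r by ring] at h14
      exact (h14.congr' heq).neg
    have hres := aux_mono hψd hψneg hlim
    have h15 : Real.log ‖g (((1:ℝ):ℂ)*z)‖ - Real.log 1 + 2 * Real.log (1 + 1*r)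
        = Real.log ‖g z‖ + 2 * Real.log (1 + r) := by
      norm_num
    simp only [h15] at hres
    linarith
  -- conclude
  constructor
  · have hlog2 : Real.log (r / (1+r)^2) ≤ Real.log ‖g z‖ := by
      rw [Real.log_div hr0.ne' (by positivity), Real.log_pow]
      push_cast
      linarith
    have h16 : r/(1+r)^2 ≤ ‖g z‖ := (Real.log_le_log_iff (by positivity) hgzpos).1 hlog2
    rw [hgz] at h16
    rw [div_le_iff₀ (by positivity)]
    rw [div_le_iff₀ (by positivity : (0:ℝ) < (1+r)^2)] at h16
    nlinarith
  · have hlog2 : Real.log ‖g z‖ ≤ Real.log (r / (1-r)^2) := by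
      rw [Real.log_div hr0.ne' (by positivity), Real.log_pow]
      push_cast
      linarith
    have h16 : ‖g z‖ ≤ r/(1-r)^2 := (Real.log_le_log_iff hgzpos (by positivity)).1 hlog2
    rw [hgz] at h16
    rw [le_div_iff₀ (by positivity)]
    rw [le_div_iff₀ (by positivity : (0:ℝ) < (1-r)^2)] at h16
    nlinarith
end

section
/- Let m ≥ 1 and let f(z) = z + Σ_{n≥m+1} aₙ zⁿ be holomorphic on the unit disk with Re(1 + z f''(z)/f'(z)) > 0 on 𝔻 (so z f'(z) is starlike). Then 1/(1+|z|^m)^{2/m} ≤ |f'(z)| ≤ 1/(1−|z|^m)^{2/m} for all z ∈ 𝔻. -/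
open Complex Metric Set
open Function Filter Topology

lemma analyticOnNhd_dslope {h : ℂ → ℂ} {s : Set ℂ} (h0 : (0:ℂ) ∈ s)
    (hh : AnalyticOnNhd ℂ h s) : AnalyticOnNhd ℂ (dslope h 0) s := by
  intro z hz
  rcases eq_or_ne z 0 with rfl | hne
  · obtain ⟨p, hp⟩ := hh 0 h0
    exact hp.has_fpower_series_dslope_fslope.analyticAt
  · have ha : AnalyticAt ℂ (fun w => (w - 0)⁻¹ • (h w - h 0)) z := by
      apply AnalyticAt.fun_smul
      · exact ((analyticAt_id.sub analyticAt_const).inv (by simpa using hne))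
      · exact (hh z hz).sub analyticAt_const
    exact ha.congr ((dslope_eventuallyEq_slope_of_ne h hne).symm.trans (by rfl))

lemma factor_pow : ∀ (m : ℕ) {h : ℂ → ℂ} {s : Set ℂ} (_ : (0:ℂ) ∈ s)
    (_ : AnalyticOnNhd ℂ h s)
    (_ : ∀ j < m, (swap dslope 0)^[j] h 0 = 0),
    ∃ u : ℂ → ℂ, AnalyticOnNhd ℂ u s ∧ ∀ z ∈ s, h z = z ^ m * u z := by
  intro m
  induction m with
  | zero => exact fun {h s} _ hh _ => ⟨h, hh, fun z _ => by simp⟩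
  | succ m ih =>
    intro h s h0 hh hvan
    have hh1 : AnalyticOnNhd ℂ (dslope h 0) s := analyticOnNhd_dslope h0 hh
    have hv1 : ∀ j < m, (swap dslope 0)^[j] (dslope h 0) 0 = 0 := by
      intro j hj
      have := hvan (j+1) (by omega)
      rwa [iterate_succ_apply] at this
    obtain ⟨u, hu, hu2⟩ := ih h0 hh1 hv1
    refine ⟨u, hu, fun z hz => ?_⟩
    have h00 : h 0 = 0 := by simpa using hvan 0 (Nat.succ_pos m)
    have hd := sub_smul_dslope h 0 z
    rw [sub_zero, h00, sub_zero, smul_eq_mul] at hd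
    rw [← hd, hu2 z hz, pow_succ]
    ring

lemma iterate_dslope_eq_zero {h : ℂ → ℂ} (hh : AnalyticAt ℂ h 0) {j : ℕ}
    (hvan : iteratedDeriv j h 0 = 0) : (swap dslope 0)^[j] h 0 = 0 := by
  obtain ⟨p, hp⟩ := hh
  have h1 : (swap dslope 0)^[j] h 0 = p.coeff j := by
    have h2 := (hp.has_fpower_series_iterate_dslope_fslope j).coeff_zero (fun _ => (1:ℂ))
    rw [← h2]
    have h5 : (FormalMultilinearSeries.fslope^[j] p).coeff 0 = p.coeff j := by
      simpa using FormalMultilinearSeries.coeff_iterate_fslope p j 0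
    exact h5
  obtain ⟨r, hr⟩ := hp
  have h3 := hr.factorial_smul (1:ℂ) j
  have h4 : iteratedFDeriv ℂ j h 0 (fun _ => (1:ℂ)) = iteratedDeriv j h 0 := by
    simp [iteratedDeriv]
  rw [h4, hvan] at h3
  have : (j.factorial : ℂ) * p.coeff j = 0 := by
    rw [nsmul_eq_mul] at h3; exact h3
  rw [h1]
  rcases mul_eq_zero.1 this with hc | hc
  · exact absurd hc (by exact_mod_cast Nat.factorial_ne_zero j)
  · exact hc

lemma nonvanish {g : ℂ → ℂ} (hg : AnalyticOnNhd ℂ g (ball (0:ℂ) 1)) (hg0 : g 0 = 1)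
    (hpos : ∀ z ∈ ball (0:ℂ) 1, 0 < (1 + z * deriv g z / g z).re) :
    ∀ z ∈ ball (0:ℂ) 1, g z ≠ 0 := by
  intro z₀ hz₀ hgz
  have h0mem : (0:ℂ) ∈ ball (0:ℂ) 1 := by simp
  have hz0ne : z₀ ≠ 0 := by
    rintro rfl; rw [hg0] at hgz; exact one_ne_zero hgz
  have hnev : ¬ (∀ᶠ z in 𝓝 z₀, g z = 0) := by
    intro hev
    have heq : EqOn g 0 (ball (0:ℂ) 1) :=
      hg.eqOn_zero_of_preconnected_of_eventuallyEq_zero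
        (convex_ball 0 1).isPreconnected hz₀ hev
    have := heq h0mem
    rw [hg0] at this; exact one_ne_zero this
  obtain ⟨n, h, hha, hh0, hev⟩ :=
    (hg z₀ hz₀).exists_eventuallyEq_pow_smul_nonzero_iff.mpr hnev
  have hn1 : 1 ≤ n := by
    rcases Nat.eq_zero_or_pos n with rfl | h1
    · exfalso; apply hh0
      have := hev.self_of_nhds
      simpa [hgz] using this.symm
    · exact h1
  -- differentiability of h near z₀
  have hdh : ∀ᶠ z in 𝓝 z₀, DifferentiableAt ℂ h z :=
    hha.eventually_analyticAt.mono fun z hz => hz.differentiableAt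
  -- derivative formula eventually
  have hderiv : ∀ᶠ z in 𝓝 z₀,
      deriv g z = (n * (z - z₀) ^ (n-1) * 1) * h z + (z - z₀) ^ n * deriv h z := by
    have h1 : deriv g =ᶠ[𝓝 z₀] deriv (fun z => (z - z₀) ^ n * h z) := by
      apply Filter.EventuallyEq.deriv
      filter_upwards [hev] with z hz
      simpa [smul_eq_mul] using hz
    filter_upwards [h1, hdh] with z h1z hdz
    rw [h1z]
    have hp : HasDerivAt (fun z => (z - z₀) ^ n) ((n:ℂ) * (z - z₀) ^ (n-1) * 1) z :=
      ((hasDerivAt_id z).sub_const z₀).pow n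
    exact (hp.mul hdz.hasDerivAt).deriv
  -- continuity of deriv h at z₀
  have hdhc : ContinuousAt (deriv h) z₀ := by
    obtain ⟨U, hU, hUan⟩ : ∃ U ∈ 𝓝 z₀, AnalyticOnNhd ℂ h U := by
      obtain ⟨U, hU1, hU2⟩ := eventually_iff_exists_mem.mp hha.eventually_analyticAt
      exact ⟨U, hU1, hU2⟩
    exact (hUan.deriv z₀ (mem_of_mem_nhds hU)).continuousAt
  have hhne : ∀ᶠ z in 𝓝 z₀, h z ≠ 0 :=
    hha.continuousAt.eventually_ne hh0
  -- the curve
  set c : ℝ → ℂ := fun t => (1 - (t:ℂ)) * z₀ with hc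
  have hcc : Continuous c := by continuity
  have hct : Tendsto c (𝓝[>] (0:ℝ)) (𝓝 z₀) := by
    have : Tendsto c (𝓝 0) (𝓝 (c 0)) := hcc.continuousAt
    simp only [hc] at this ⊢
    refine Tendsto.mono_left ?_ nhdsWithin_le_nhds
    simpa using this
  -- the real function
  set R : ℝ → ℝ := fun t => (c t * deriv h (c t) / h (c t)).re with hR
  set X : ℝ → ℝ := fun t => 1 + (n:ℝ) - (n:ℝ) * t⁻¹ + R t with hX
  -- eventually positive
  have hkey : ∀ᶠ t in 𝓝[>] (0:ℝ), 0 < X t := by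
    have hball : ∀ᶠ t in 𝓝[>] (0:ℝ), c t ∈ ball (0:ℂ) 1 :=
      hct (isOpen_ball.mem_nhds hz₀)
    filter_upwards [hball, hct.eventually hev, hct.eventually hderiv,
      hct.eventually hhne, self_mem_nhdsWithin] with t htb htev htd hth (htpos : 0 < t)
    have hX' : X t = (1 + c t * deriv g (c t) / g (c t)).re := by
      have hd0 : c t - z₀ = (-(t:ℂ)) * z₀ := by simp [hc]; ring
      have hdne : c t - z₀ ≠ 0 := by
        rw [hd0]
        exact mul_ne_zero (neg_ne_zero.mpr (by exact_mod_cast ne_of_gt htpos)) hz0ne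
      have htne : (t:ℂ) ≠ 0 := by exact_mod_cast ne_of_gt htpos
      have hrat : c t * deriv g (c t) / g (c t)
          = (n:ℂ) * (c t / (c t - z₀)) + c t * deriv h (c t) / h (c t) := by
        rw [htd, htev, smul_eq_mul]
        have hpow : (c t - z₀) ^ n = (c t - z₀) ^ (n-1) * (c t - z₀) := by
          conv_lhs => rw [← Nat.sub_add_cancel hn1]
          rw [pow_succ]
        rw [hpow]
        have hA : (c t - z₀)^(n-1) ≠ 0 := pow_ne_zero _ hdne
        generalize (c t - z₀)^(n-1) = A at hA ⊢
        field_simp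
      have hcd : c t / (c t - z₀) = (((t - 1)/t : ℝ) : ℂ) := by
        rw [hd0, hc]
        push_cast
        field_simp
        ring
      rw [hrat, hcd]
      simp only [hX, hR]
      rw [Complex.add_re, Complex.add_re]
      simp only [Complex.one_re]
      rw [Complex.mul_re]
      simp only [Complex.natCast_re, Complex.ofReal_re, Complex.natCast_im, Complex.ofReal_im]
      have : (t-1)/t = 1 - t⁻¹ := by field_simp
      rw [this]
      ring
    rw [hX']
    exact hpos _ htb
  -- tendsto atBot
  have hRt : Tendsto R (𝓝[>] (0:ℝ)) (𝓝 ((z₀ * deriv h z₀ / h z₀).re)) := by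
    have : ContinuousAt (fun z : ℂ => (z * deriv h z / h z).re) z₀ := by
      apply Complex.continuous_re.continuousAt.comp
      exact (continuousAt_id.mul hdhc).div hha.continuousAt hh0
    exact this.tendsto.comp hct
  have hbot : Tendsto X (𝓝[>] (0:ℝ)) atBot := by
    have h1 : Tendsto (fun t : ℝ => -((n:ℝ) * t⁻¹)) (𝓝[>] (0:ℝ)) atBot := by
      apply Filter.tendsto_neg_atTop_atBot.comp
      exact (tendsto_inv_nhdsGT_zero).const_mul_atTop (by exact_mod_cast hn1 : (0:ℝ) < n)
    have h2 : ∀ᶠ t in 𝓝[>] (0:ℝ), 1 + (n:ℝ) + R t ≤ 1 + n + ((z₀ * deriv h z₀ / h z₀).re) + 1 := by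
      filter_upwards [hRt.eventually_le_const (lt_add_one _)] with t ht
      linarith
    have := Filter.tendsto_atBot_add_right_of_ge' _ _ h1 h2
    apply this.congr'
    apply Eventually.of_forall
    intro t
    simp only [hX]
    ring
  have : ∀ᶠ t in 𝓝[>] (0:ℝ), X t < 0 := hbot.eventually_lt_atBot 0
  obtain ⟨t, h1t, h2t⟩ := (this.and hkey).exists
  linarith

lemma qbound {q : ℂ → ℂ} (hq : AnalyticOnNhd ℂ q (ball (0:ℂ) 1)) (m : ℕ)
    (hb : ∀ z ∈ ball (0:ℂ) 1, ‖z ^ m * q z‖ ≤ 1) :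
    ∀ z ∈ ball (0:ℂ) 1, ‖q z‖ ≤ 1 := by
  intro z hz
  rw [mem_ball_zero_iff] at hz
  have key : ∀ ρ : ℝ, ‖z‖ < ρ → ρ < 1 → ‖q z‖ ≤ (ρ⁻¹)^m := by
    intro ρ hρ1 hρ2
    have hρ0 : 0 < ρ := lt_of_le_of_lt (norm_nonneg z) hρ1
    have hsub : closedBall (0:ℂ) ρ ⊆ ball (0:ℂ) 1 := closedBall_subset_ball hρ2
    have hdiff : DiffContOnCl ℂ q (ball (0:ℂ) ρ) := by
      constructor
      · exact (hq.mono (fun w hw => hsub (ball_subset_closedBall hw))).differentiableOn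
      · rw [closure_ball (0:ℂ) (ne_of_gt hρ0)]
        exact fun w hw => ((hq w (hsub hw)).continuousAt).continuousWithinAt
    have hfront : ∀ w ∈ frontier (ball (0:ℂ) ρ), ‖q w‖ ≤ (ρ⁻¹)^m := by
      intro w hw
      rw [frontier_ball (0:ℂ) (ne_of_gt hρ0)] at hw
      have hwn : ‖w‖ = ρ := by simpa using hw
      have hwb : w ∈ ball (0:ℂ) 1 := by rw [mem_ball_zero_iff, hwn]; exact hρ2
      have := hb w hwb
      rw [norm_mul, norm_pow, hwn] at this
      rw [inv_pow]
      have hpm : (0:ℝ) < ρ ^ m := by positivity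
      calc ‖q w‖ = (ρ^m)⁻¹ * (ρ^m * ‖q w‖) := by field_simp
        _ ≤ (ρ^m)⁻¹ * 1 := mul_le_mul_of_nonneg_left this (by positivity)
        _ = (ρ^m)⁻¹ := mul_one _
    have hcl : z ∈ closure (ball (0:ℂ) ρ) :=
      subset_closure (by rwa [mem_ball_zero_iff])
    exact Complex.norm_le_of_forall_mem_frontier_norm_le isBounded_ball hdiff hfront hcl
  have htend : Tendsto (fun ρ : ℝ => (ρ⁻¹)^m) (𝓝[<] (1:ℝ)) (𝓝 1) := by
    have : ContinuousAt (fun ρ : ℝ => (ρ⁻¹)^m) 1 := by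
      exact ((continuousAt_inv₀ (by norm_num)).pow m)
    have h2 := this.tendsto.mono_left (nhdsWithin_le_nhds (s := Iio (1:ℝ)))
    simpa using h2
  refine ge_of_tendsto htend ?_
  filter_upwards [Ioo_mem_nhdsLT hz] with ρ hρ
  exact key ρ hρ.1 hρ.2

lemma re_bound {w : ℂ} {t : ℝ} (hw : ‖w‖ ≤ t) (ht : t < 1) :
    -(2*t/(1+t)) ≤ (2*w/(1-w)).re ∧ (2*w/(1-w)).re ≤ 2*t/(1-t) := by
  have ht0 : 0 ≤ t := le_trans (norm_nonneg w) hw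
  set x := w.re with hx
  set y := w.im with hy
  have hxt : x ≤ t := le_trans (le_trans (le_abs_self _) (Complex.abs_re_le_norm w)) hw
  have hxt' : -t ≤ x := by
    have := le_trans (neg_abs_le _) (neg_le_neg (le_trans (Complex.abs_re_le_norm w) hw))
    nlinarith [abs_nonneg x, Complex.abs_re_le_norm w, le_trans (Complex.abs_re_le_norm w) hw,
      neg_abs_le x]
  have hsq : x^2 + y^2 ≤ t^2 := by
    have h1 : Complex.normSq w ≤ t^2 := by
      rw [← Complex.sq_norm]
      have : ‖w‖ ≤ t := hw
      nlinarith [norm_nonneg w]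
    have h2 : Complex.normSq w = x^2 + y^2 := by
      rw [Complex.normSq_apply]; ring
    linarith [h1, h2.symm.le, h2.le]
  have hre : (2*w/(1-w)).re = (2*x - 2*x^2 - 2*y^2)/((1-x)^2 + y^2) := by
    rw [Complex.div_re]
    have h1 : (1 - w).re = 1 - x := by simp [hx]
    have h2 : (1 - w).im = -y := by simp [hy]
    have h3 : (2*w).re = 2*x := by simp [hx]
    have h4 : (2*w).im = 2*y := by simp [hy]
    have h5 : Complex.normSq (1-w) = (1-x)^2 + y^2 := by
      rw [Complex.normSq_apply, h1, h2]; ring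
    rw [h1, h2, h3, h4, h5]
    ring_nf
  have hD : (0:ℝ) < (1-x)^2 + y^2 := by
    have hx1 : x < 1 := lt_of_le_of_lt hxt ht
    nlinarith [sq_nonneg y, sq_nonneg (1-x)]
  have h6 : (0:ℝ) < 1 + t := by linarith
  have h7 : (0:ℝ) < 1 - t := by linarith
  constructor
  · rw [hre, neg_div' ]
    rw [div_le_div_iff₀ h6 hD]
    nlinarith [mul_nonneg (sub_nonneg.mpr hxt') (sub_nonneg.mpr h7.le), sq_nonneg y,
      mul_nonneg (add_nonneg (by linarith : (0:ℝ) ≤ t + x) h7.le) h7.le]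
  · rw [hre, div_le_div_iff₀ hD h7]
    nlinarith [mul_nonneg (sub_nonneg.mpr hxt) (by linarith : (0:ℝ) ≤ 1 - x), sq_nonneg y,
      mul_nonneg ht0 (sq_nonneg y)]


lemma hasDerivAt_log_norm {G : ℝ → ℂ} {G' : ℂ} {t : ℝ} (hG : HasDerivAt G G' t)
    (hne : G t ≠ 0) :
    HasDerivAt (fun s => Real.log ‖G s‖) ((G' / G t).re) t := by
  have hre : HasDerivAt (fun s => (G s).re) G'.re t :=
    (Complex.reCLM.hasFDerivAt.comp_hasDerivAt t hG :)
  have him : HasDerivAt (fun s => (G s).im) G'.im t :=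
    (Complex.imCLM.hasFDerivAt.comp_hasDerivAt t hG :)
  have h1 : HasDerivAt (fun s => ((G s).re^2 + (G s).im^2))
      (2*(G t).re*G'.re + 2*(G t).im*G'.im) t := by
    have := (hre.pow 2).add (him.pow 2)
    exact this.congr_deriv (by push_cast; ring)
  have hN : ((G t).re^2 + (G t).im^2) ≠ 0 := by
    have := Complex.normSq_pos.mpr hne
    rw [Complex.normSq_apply] at this
    nlinarith
  have h2 := (Real.hasDerivAt_log hN).comp t h1
  have h3 : (fun s => Real.log ‖G s‖)
      = fun s => Real.log ((G s).re^2 + (G s).im^2) / 2 := by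
    funext s
    rw [Complex.norm_def, ← Real.log_sqrt (by positivity)]
    congr 1
    rw [Complex.normSq_apply]
    ring_nf
  rw [h3]
  refine (h2.div_const 2).congr_deriv ?_
  symm
  rw [Complex.div_re, Complex.normSq_apply]
  have : (G t).re * (G t).re + (G t).im * (G t).im = (G t).re^2 + (G t).im^2 := by ring
  rw [this]
  field_simp



lemma ray_bound {g : ℂ → ℂ} (hga : AnalyticOnNhd ℂ g (ball (0:ℂ) 1)) (hg0 : g 0 = 1)
    (hgne : ∀ z ∈ ball (0:ℂ) 1, g z ≠ 0) (m : ℕ) (hm : 1 ≤ m)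
    (hp : ∀ z ∈ ball (0:ℂ) 1,
      -(2*‖z‖^m/(1+‖z‖^m)) ≤ (z * deriv g z / g z).re ∧
      (z * deriv g z / g z).re ≤ 2*‖z‖^m/(1-‖z‖^m)) :
    ∀ z ∈ ball (0:ℂ) 1,
      Real.log ‖g z‖ ≤ -(2/(m:ℝ)) * Real.log (1-‖z‖^m) ∧
      -(2/(m:ℝ)) * Real.log (1+‖z‖^m) ≤ Real.log ‖g z‖ := by
  intro z hz
  rw [mem_ball_zero_iff] at hz
  rcases eq_or_ne z 0 with rfl | hzne
  · simp [hg0, zero_pow (by omega : m ≠ 0)]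
  set r := ‖z‖ with hr
  have hr0 : 0 < r := norm_pos_iff.mpr hzne
  set e : ℂ := (r:ℂ)⁻¹ * z with he
  have hrne : (r:ℂ) ≠ 0 := by exact_mod_cast ne_of_gt hr0
  have hee : ‖e‖ = 1 := by
    have h1 : ‖e‖ = r⁻¹ * ‖z‖ := by
      rw [he, norm_mul, norm_inv, Complex.norm_real, Real.norm_eq_abs, _root_.abs_of_pos hr0]
    rw [h1, ← hr]
    field_simp
  set c : ℝ → ℂ := fun t => (t:ℂ) * e with hc
  have hcr : c r = z := by
    show (r:ℂ) * e = z
    rw [he]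
    field_simp
  have hcn : ∀ t : ℝ, 0 ≤ t → ‖c t‖ = t := by
    intro t ht
    rw [hc, norm_mul, hee, mul_one, Complex.norm_real, Real.norm_eq_abs, _root_.abs_of_nonneg ht]
  have hcb : ∀ t ∈ Icc (0:ℝ) r, c t ∈ ball (0:ℂ) 1 := by
    intro t ht
    rw [mem_ball_zero_iff, hcn t ht.1]
    exact lt_of_le_of_lt ht.2 hz
  -- φ and its derivative
  set φ : ℝ → ℝ := fun t => Real.log ‖g (c t)‖ with hφ
  have hGd : ∀ t ∈ Icc (0:ℝ) r, HasDerivAt (fun s : ℝ => g (c s)) (e * deriv g (c t)) t := by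
    intro t ht
    have h1 : HasDerivAt (fun ζ : ℂ => g (ζ * e)) (deriv g (c t) * e) ((t:ℝ):ℂ) := by
      have hin : HasDerivAt (fun ζ : ℂ => ζ * e) e ((t:ℝ):ℂ) := by
        simpa using (hasDerivAt_id ((t:ℝ):ℂ)).mul_const e
      have hout : HasDerivAt g (deriv g (c t)) ((fun ζ : ℂ => ζ * e) ((t:ℝ):ℂ)) := by
        simpa [hc] using ((hga _ (hcb t ht)).differentiableAt).hasDerivAt
      exact hout.comp ((t:ℝ):ℂ) hin
    have := h1.comp_ofReal
    simpa [hc, mul_comm] using this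
  have hφd : ∀ t ∈ Icc (0:ℝ) r,
      HasDerivAt φ ((e * deriv g (c t) / g (c t)).re) t := by
    intro t ht
    exact hasDerivAt_log_norm (hGd t ht) (hgne _ (hcb t ht))
  -- derivative bounds on the open interval
  have hDbound : ∀ t ∈ Ioo (0:ℝ) r,
      -(2*t^(m-1)/(1+t^m)) ≤ (e * deriv g (c t) / g (c t)).re ∧
      (e * deriv g (c t) / g (c t)).re ≤ 2*t^(m-1)/(1-t^m) := by
    intro t ht
    have htm : ‖c t‖ = t := hcn t ht.1.le
    have hb := hp (c t) (hcb t (Ioo_subset_Icc_self ht))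
    rw [htm] at hb
    have hkey : (c t * deriv g (c t) / g (c t)).re
        = t * (e * deriv g (c t) / g (c t)).re := by
      have : c t * deriv g (c t) / g (c t) = (t:ℂ) * (e * deriv g (c t) / g (c t)) := by
        rw [hc]; ring
      rw [this, Complex.re_ofReal_mul]
    rw [hkey] at hb
    have htpos : 0 < t := ht.1
    have htm1 : t^m < 1 := by
      calc t^m ≤ t^1 := pow_le_pow_of_le_one htpos.le (le_of_lt (lt_trans ht.2 hz)) hm
      _ = t := pow_one t
      _ < 1 := lt_trans ht.2 hz
    have htmpos : 0 < 1 - t^m := by linarith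
    have htm2 : t * t^(m-1) = t^m := by
      rw [← pow_succ']
      congr 1
      omega
    constructor
    · have heq : -(2*t^m/(1+t^m)) = t * (-(2*t^(m-1)/(1+t^m))) := by
        rw [← htm2]; ring
      have h1 := hb.1
      rw [heq] at h1
      exact le_of_mul_le_mul_left h1 htpos
    · have heq : 2*t^m/(1-t^m) = t * (2*t^(m-1)/(1-t^m)) := by
        rw [← htm2]; ring
      have h2 := hb.2
      rw [heq] at h2
      exact le_of_mul_le_mul_left h2 htpos
  -- assemble
  have hne1 : ∀ t ∈ Icc (0:ℝ) r, (0:ℝ) < 1 - t^m := by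
    intro t ht
    have : t^m < 1 := pow_lt_one₀ ht.1 (lt_of_le_of_lt ht.2 hz) (by omega)
    linarith
  have hne2 : ∀ t ∈ Icc (0:ℝ) r, (0:ℝ) < 1 + t^m := by
    intro t ht
    have : 0 ≤ t^m := pow_nonneg ht.1 m
    linarith
  have hgc : ContinuousOn (fun t : ℝ => g (c t)) (Icc 0 r) :=
    fun t ht => ((hGd t ht).continuousAt).continuousWithinAt
  have hφc : ContinuousOn φ (Icc 0 r) := by
    apply ContinuousOn.log
    · exact hgc.norm
    · exact fun t ht => norm_ne_zero_iff.mpr (hgne _ (hcb t ht))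
  have hmne : (m:ℝ) ≠ 0 := by exact_mod_cast (by omega : m ≠ 0)
  have hcont1 : ContinuousOn (fun t : ℝ => 1 - t^m) (Icc 0 r) := by fun_prop
  have hcont2 : ContinuousOn (fun t : ℝ => 1 + t^m) (Icc 0 r) := by fun_prop
  -- upper bound via antitone
  have hupper : Real.log ‖g z‖ ≤ -(2/(m:ℝ)) * Real.log (1-r^m) := by
    set ψ : ℝ → ℝ := fun t => φ t + (2/(m:ℝ)) * Real.log (1 - t^m) with hψ
    have hψd : ∀ t ∈ Ioo (0:ℝ) r, HasDerivAt ψ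
        ((e * deriv g (c t) / g (c t)).re + (2/(m:ℝ)) * ((1-t^m)⁻¹ * (-((m:ℝ) * t^(m-1))))) t := by
      intro t ht
      have hinner : HasDerivAt (fun t : ℝ => 1 - t^m) (-((m:ℝ) * t^(m-1))) t := by
        simpa using (hasDerivAt_pow m t).const_sub 1
      have hlog := (Real.hasDerivAt_log (ne_of_gt (hne1 t (Ioo_subset_Icc_self ht)))).comp t hinner
      exact (hφd t (Ioo_subset_Icc_self ht)).add (hlog.const_mul (2/(m:ℝ)))
    have hanti : AntitoneOn ψ (Icc 0 r) := by
      apply antitoneOn_of_deriv_nonpos (convex_Icc 0 r)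
      · exact hφc.add ((hcont1.log (fun t ht => ne_of_gt (hne1 t ht))).const_smul (2/(m:ℝ)))
      · intro t ht
        rw [interior_Icc] at ht
        exact (hψd t ht).differentiableAt.differentiableWithinAt
      · intro t ht
        rw [interior_Icc] at ht
        rw [(hψd t ht).deriv]
        have hb := (hDbound t ht).2
        have h1 : (0:ℝ) < 1 - t^m := hne1 t (Ioo_subset_Icc_self ht)
        have heq : (2/(m:ℝ)) * ((1-t^m)⁻¹ * (-((m:ℝ) * t^(m-1)))) = -(2*t^(m-1)/(1-t^m)) := by
          field_simp
        rw [heq]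
        linarith
    have hψr := hanti (left_mem_Icc.mpr hr0.le) (right_mem_Icc.mpr hr0.le) hr0.le
    have hψ0 : ψ 0 = 0 := by
      have hc0 : c 0 = 0 := by simp [hc]
      simp [hψ, hφ, hc0, hg0, zero_pow (by omega : m ≠ 0)]
    have hψr' : ψ r = Real.log ‖g z‖ + (2/(m:ℝ)) * Real.log (1 - r^m) := by
      simp [hψ, hφ, hcr]
    rw [hψ0, hψr'] at hψr
    linarith
  -- lower bound via monotone
  have hlower : -(2/(m:ℝ)) * Real.log (1+r^m) ≤ Real.log ‖g z‖ := by
    set χ : ℝ → ℝ := fun t => φ t + (2/(m:ℝ)) * Real.log (1 + t^m) with hχ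
    have hχd : ∀ t ∈ Ioo (0:ℝ) r, HasDerivAt χ
        ((e * deriv g (c t) / g (c t)).re + (2/(m:ℝ)) * ((1+t^m)⁻¹ * ((m:ℝ) * t^(m-1)))) t := by
      intro t ht
      have hinner : HasDerivAt (fun t : ℝ => 1 + t^m) ((m:ℝ) * t^(m-1)) t := by
        simpa using (hasDerivAt_pow m t).const_add 1
      have hlog := (Real.hasDerivAt_log (ne_of_gt (hne2 t (Ioo_subset_Icc_self ht)))).comp t hinner
      exact (hφd t (Ioo_subset_Icc_self ht)).add (hlog.const_mul (2/(m:ℝ)))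
    have hmono : MonotoneOn χ (Icc 0 r) := by
      apply monotoneOn_of_deriv_nonneg (convex_Icc 0 r)
      · exact hφc.add ((hcont2.log (fun t ht => ne_of_gt (hne2 t ht))).const_smul (2/(m:ℝ)))
      · intro t ht
        rw [interior_Icc] at ht
        exact (hχd t ht).differentiableAt.differentiableWithinAt
      · intro t ht
        rw [interior_Icc] at ht
        rw [(hχd t ht).deriv]
        have hb := (hDbound t ht).1
        have h1 : (0:ℝ) < 1 + t^m := hne2 t (Ioo_subset_Icc_self ht)
        have heq : (2/(m:ℝ)) * ((1+t^m)⁻¹ * ((m:ℝ) * t^(m-1))) = 2*t^(m-1)/(1+t^m) := by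
          field_simp
        rw [heq]
        linarith
    have hχr := hmono (left_mem_Icc.mpr hr0.le) (right_mem_Icc.mpr hr0.le) hr0.le
    have hχ0 : χ 0 = 0 := by
      have hc0 : c 0 = 0 := by simp [hc]
      simp [hχ, hφ, hc0, hg0, zero_pow (by omega : m ≠ 0)]
    have hχr' : χ r = Real.log ‖g z‖ + (2/(m:ℝ)) * Real.log (1 + r^m) := by
      simp [hχ, hφ, hcr]
    rw [hχ0, hχr'] at hχr
    linarith
  exact ⟨hupper, hlower⟩

theorem stmt15 (m : ℕ) (hm : 1 ≤ m) (f : ℂ → ℂ)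
    (hf : DifferentiableOn ℂ f (ball (0:ℂ) 1))
    (h0 : f 0 = 0) (h1 : deriv f 0 = 1)
    (hvan : ∀ n : ℕ, 2 ≤ n → n ≤ m → iteratedDeriv n f 0 = 0)
    (hconv : ∀ z ∈ ball (0:ℂ) 1, 0 < (1 + z * deriv (deriv f) z / deriv f z).re) :
    ∀ z ∈ ball (0:ℂ) 1,
      1 / (1 + ‖z‖ ^ m) ^ ((2:ℝ) / m) ≤ ‖deriv f z‖ ∧
      ‖deriv f z‖ ≤ 1 / (1 - ‖z‖ ^ m) ^ ((2:ℝ) / m) := by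
  have hopen : IsOpen (ball (0:ℂ) 1) := isOpen_ball
  have h0B : (0:ℂ) ∈ ball (0:ℂ) 1 := by simp
  have hfa : AnalyticOnNhd ℂ f (ball (0:ℂ) 1) := hf.analyticOnNhd hopen
  set g := deriv f with hgdef
  have hga : AnalyticOnNhd ℂ g (ball (0:ℂ) 1) := hfa.deriv
  have hg0 : g 0 = 1 := h1
  have hgne := nonvanish hga hg0 hconv
  -- vanishing of the first m-1 derivatives of g - 1 at 0
  set G1 : ℂ → ℂ := fun w => g w - 1 with hG1
  have hG1a : AnalyticOnNhd ℂ G1 (ball (0:ℂ) 1) := by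
    have := hga.sub (analyticOnNhd_const (v := (1:ℂ)))
    exact this
  have hG1van : ∀ j, j < m → iteratedDeriv j G1 0 = 0 := by
    intro j hj
    match j with
    | 0 => simp [hG1, hg0]
    | (k+1) =>
      have hd : deriv G1 = deriv g := by
        funext w
        exact deriv_sub_const 1
      have e1 : iteratedDeriv (k+1) G1 0 = iteratedDeriv k (deriv G1) 0 := by
        rw [iteratedDeriv_succ']
      have e2 : iteratedDeriv k (deriv g) 0 = iteratedDeriv (k+1) g 0 := by
        rw [← iteratedDeriv_succ']
      have e3 : iteratedDeriv (k+1) g 0 = iteratedDeriv (k+2) f 0 := by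
        rw [hgdef, ← iteratedDeriv_succ']
      rw [e1, hd, e2, e3]
      exact hvan (k+2) (by omega) (by omega)
  have hvd : ∀ j, j < m → (swap dslope 0)^[j] G1 0 = 0 :=
    fun j hj => iterate_dslope_eq_zero (hG1a 0 h0B) (hG1van j hj)
  obtain ⟨u, hua, huf⟩ := factor_pow m h0B hG1a hvd
  have hgu : ∀ z ∈ ball (0:ℂ) 1, g z = 1 + z^m * u z := by
    intro z hz
    have := huf z hz
    simp only [hG1] at this
    linear_combination this
  -- denominator nonzero
  have hden : ∀ z ∈ ball (0:ℂ) 1, 2 * g z + z * deriv g z ≠ 0 := by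
    intro z hz hcontra
    have hgz := hgne z hz
    have h2 : z * deriv g z / g z = -2 := by
      have hnum : z * deriv g z = -2 * g z := by linear_combination hcontra
      rw [hnum]
      field_simp
    have hc := hconv z hz
    rw [h2] at hc
    norm_num at hc
  set q : ℂ → ℂ := fun z => ((m:ℂ) * u z + z * deriv u z) / (2 * g z + z * deriv g z) with hq
  have hqa : AnalyticOnNhd ℂ q (ball (0:ℂ) 1) := by
    apply AnalyticOnNhd.div
    · exact (analyticOnNhd_const.mul hua).add (analyticOnNhd_id.mul hua.deriv)
    · exact (analyticOnNhd_const.mul hga).add (analyticOnNhd_id.mul hga.deriv)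
    · exact hden
  have hzderiv : ∀ z ∈ ball (0:ℂ) 1,
      z * deriv g z = z^m * ((m:ℂ) * u z + z * deriv u z) := by
    intro z hz
    have hev : g =ᶠ[𝓝 z] (fun w => 1 + w^m * u w) := by
      filter_upwards [hopen.mem_nhds hz] with w hw
      exact hgu w hw
    have hud : DifferentiableAt ℂ u z := (hua z hz).differentiableAt
    have hder : HasDerivAt (fun w : ℂ => 1 + w^m * u w)
        ((m:ℂ) * z^(m-1) * u z + z^m * deriv u z) z := by
      have h2 := ((hasDerivAt_pow m z).mul hud.hasDerivAt).const_add (1:ℂ)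
      exact h2.congr_deriv (by ring)
    have hdg : deriv g z = (m:ℂ) * z^(m-1) * u z + z^m * deriv u z := by
      rw [hev.deriv_eq, hder.deriv]
    rw [hdg]
    have hzm : z * z^(m-1) = z^m := by
      rw [← pow_succ']
      congr 1
      omega
    linear_combination ((m:ℂ) * u z) * hzm
  set W : ℂ → ℂ := fun z => z * deriv g z / (2 * g z + z * deriv g z) with hW
  have hWq : ∀ z ∈ ball (0:ℂ) 1, W z = z^m * q z := by
    intro z hz
    show z * deriv g z / (2 * g z + z * deriv g z)
      = z ^ m * (((m:ℂ) * u z + z * deriv u z) / (2 * g z + z * deriv g z))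
    rw [← mul_div_assoc, ← hzderiv z hz]
  -- basic facts about a = z g'/g
  have hare : ∀ z ∈ ball (0:ℂ) 1, -1 < (z * deriv g z / g z).re := by
    intro z hz
    have hc := hconv z hz
    rw [Complex.add_re, Complex.one_re] at hc
    linarith
  have h2a : ∀ z ∈ ball (0:ℂ) 1, (2:ℂ) + z * deriv g z / g z ≠ 0 := by
    intro z hz hcontra
    have := hare z hz
    have h2 : z * deriv g z / g z = -2 := by linear_combination hcontra
    rw [h2] at this
    norm_num at this
  have hWa : ∀ z ∈ ball (0:ℂ) 1,
      W z = (z * deriv g z / g z) / (2 + z * deriv g z / g z) := by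
    intro z hz
    show z * deriv g z / (2 * g z + z * deriv g z) = _
    have hgz := hgne z hz
    have hd := hden z hz
    have h2 := h2a z hz
    field_simp
  have hWlt : ∀ z ∈ ball (0:ℂ) 1, ‖W z‖ < 1 := by
    intro z hz
    rw [hWa z hz]
    set a := z * deriv g z / g z with ha
    have hre := hare z hz
    rw [← ha] at hre
    have hlt : ‖a‖ < ‖2 + a‖ := by
      have hsq : ‖a‖^2 < ‖2 + a‖^2 := by
        rw [← Complex.normSq_eq_norm_sq,
          ← Complex.normSq_eq_norm_sq, Complex.normSq_apply, Complex.normSq_apply]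
        simp only [Complex.add_re, Complex.add_im, Complex.re_ofNat, Complex.im_ofNat]
        nlinarith [hre]
      nlinarith [norm_nonneg a, norm_nonneg (2+a), hsq]
    rw [norm_div]
    rw [div_lt_one (lt_of_le_of_lt (norm_nonneg a) hlt)]
    exact hlt
  have hqb : ∀ z ∈ ball (0:ℂ) 1, ‖q z‖ ≤ 1 := by
    apply qbound hqa m
    intro z hz
    rw [← hWq z hz]
    exact (hWlt z hz).le
  have hWle : ∀ z ∈ ball (0:ℂ) 1, ‖W z‖ ≤ ‖z‖^m := by
    intro z hz
    rw [hWq z hz, norm_mul, norm_pow]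
    exact mul_le_of_le_one_right (by positivity) (hqb z hz)
  -- the Re p bounds
  have hp : ∀ z ∈ ball (0:ℂ) 1,
      -(2*‖z‖^m/(1+‖z‖^m)) ≤ (z * deriv g z / g z).re ∧
      (z * deriv g z / g z).re ≤ 2*‖z‖^m/(1-‖z‖^m) := by
    intro z hz
    have h1W : (1:ℂ) - W z ≠ 0 := by
      intro hcontra
      have h1 : W z = 1 := by linear_combination -hcontra
      have := hWlt z hz
      rw [h1] at this
      norm_num at this
    have haW : z * deriv g z / g z = 2 * W z / (1 - W z) := by
      have h2 := h2a z hz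
      rw [hWa z hz]
      set a := z * deriv g z / g z with ha
      have h1m : (1:ℂ) - a/(2+a) = 2/(2+a) := by field_simp; ring
      rw [h1m]
      field_simp
    have hnorm : ‖W z‖ ≤ ‖z‖^m := hWle z hz
    have htlt : ‖z‖^m < 1 :=
      pow_lt_one₀ (norm_nonneg z) (mem_ball_zero_iff.mp hz) (by omega)
    have hrb := re_bound hnorm htlt
    rw [haW]
    exact hrb
  -- conclude
  intro z hz
  have hray := ray_bound hga hg0 hgne m hm hp z hz
  have htlt : ‖z‖^m < 1 :=
    pow_lt_one₀ (norm_nonneg z) (mem_ball_zero_iff.mp hz) (by omega)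
  have hA1 : (0:ℝ) < 1 - ‖z‖^m := by linarith
  have hA2 : (0:ℝ) < 1 + ‖z‖^m := by positivity
  have hgpos : 0 < ‖g z‖ := norm_pos_iff.mpr (hgne z hz)
  constructor
  · have e1 : (1:ℝ)/(1+‖z‖^m)^((2:ℝ)/m) = Real.exp (-(2/(m:ℝ)) * Real.log (1+‖z‖^m)) := by
      rw [Real.rpow_def_of_pos hA2, one_div, ← Real.exp_neg]
      congr 1
      ring
    rw [e1, ← Real.exp_log hgpos]
    exact Real.exp_le_exp.mpr hray.2
  · have e2 : (1:ℝ)/(1-‖z‖^m)^((2:ℝ)/m) = Real.exp (-(2/(m:ℝ)) * Real.log (1-‖z‖^m)) := by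
      rw [Real.rpow_def_of_pos hA1, one_div, ← Real.exp_neg]
      congr 1
      ring
    rw [e2, ← Real.exp_log hgpos]
    exact Real.exp_le_exp.mpr hray.1
end
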